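/- arXiv:2411.01359 — 8 statements merged into one kernel-verified Lean document; each statement's English description precedes it below -/
import Mathlib

section
/- Let 0 < p < 1 and R > 0, and let φ : (−R,R) → ℝ be continuously differentiable with all integrals below finite. Writing ⟨φ⟩ = (1/(2R)) ∫_{−R}^R φ(v) dv for the average of φ over (−R,R), the weighted Poincaré-type inequality ∫_{−R}^R (φ(w) − ⟨φ⟩)² dw ≤ (1/((2−p)(1−p))) ∫_{−R}^R (R^{2−p} − |w|^{2−p}) |w|^p |φ′(w)|² dw holds. -/
open MeasureTheory Set
open intervalIntegral

noncomputable def hh (p : ℝ) (x : ℝ) : ℝ := x * |x| ^ (-p) / (1 - p)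
noncomputable def HH (p : ℝ) (x : ℝ) : ℝ := |x| ^ (2 - p) / ((1 - p) * (2 - p))
noncomputable def gg (p : ℝ) (φ' : ℝ → ℝ) (x : ℝ) : ℝ := |x| ^ p * (φ' x) ^ 2
noncomputable def clampI (R x : ℝ) : ℝ := max (-R) (min x R)

theorem intInt_abs_rpow {p : ℝ} (hp1 : p < 1) (v w : ℝ) :
    IntervalIntegrable (fun u : ℝ => |u| ^ (-p)) volume v w := by
  have key : ∀ x : ℝ, 0 ≤ x → IntervalIntegrable (fun u : ℝ => |u| ^ (-p)) volume 0 x := by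
    intro x hx
    have : IntervalIntegrable (fun u : ℝ => u ^ (-p)) volume 0 x :=
      intervalIntegral.intervalIntegrable_rpow' (by linarith)
    apply this.congr
    intro u hu
    rw [uIoc_of_le hx] at hu
    show u ^ (-p) = |u| ^ (-p)
    rw [abs_of_pos hu.1]
  have h0 : ∀ x : ℝ, IntervalIntegrable (fun u : ℝ => |u| ^ (-p)) volume 0 x := by
    intro x
    rcases le_total 0 x with h | h
    · exact key x h
    · have h1 := (IntervalIntegrable.iff_comp_neg (by simp)).mp (key (-x) (by linarith))
      simpa [abs_neg] using h1
  exact (h0 v).symm.trans (h0 w)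

theorem integral_abs_rpow_zero {p : ℝ} (hp1 : p < 1) (x : ℝ) :
    ∫ u in (0:ℝ)..x, |u| ^ (-p) = hh p x := by
  have hkey : ∀ y : ℝ, 0 ≤ y → ∫ u in (0:ℝ)..y, |u| ^ (-p) = hh p y := by
    intro y hy
    have h1 : ∫ u in (0:ℝ)..y, |u| ^ (-p) = ∫ u in (0:ℝ)..y, u ^ (-p) := by
      apply intervalIntegral.integral_congr
      intro u hu
      rw [uIcc_of_le hy] at hu
      simp [abs_of_nonneg hu.1]
    rw [h1, integral_rpow (Or.inl (by linarith)), show (-p) + 1 = 1 - p by ring,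
      Real.zero_rpow (by intro hc; linarith)]
    rcases eq_or_lt_of_le hy with rfl | hy'
    · rw [Real.zero_rpow (by intro hc; linarith)]; simp [hh]
    · rw [hh, abs_of_pos hy']
      have : y ^ (1 - p) = y * y ^ (-p) := by
        rw [show (1:ℝ) - p = 1 + (-p) by ring, Real.rpow_add hy', Real.rpow_one]
      rw [this]; ring
  rcases le_total 0 x with h | h
  · exact hkey x h
  · have h2 : ∫ u in (0:ℝ)..x, |u| ^ (-p) = - ∫ u in (0:ℝ)..(-x), |u| ^ (-p) := by
      have := intervalIntegral.integral_comp_neg (a := (0:ℝ)) (b := -x) (fun u : ℝ => |u| ^ (-p))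
      simp only [abs_neg, neg_neg, neg_zero] at this
      rw [this, intervalIntegral.integral_symm]
    rw [h2, hkey (-x) (by linarith)]
    simp [hh, abs_neg]
    ring

theorem integral_abs_rpow {p : ℝ} (hp1 : p < 1) (v w : ℝ) :
    ∫ u in v..w, |u| ^ (-p) = hh p w - hh p v := by
  rw [← integral_abs_rpow_zero hp1 w, ← integral_abs_rpow_zero hp1 v]
  rw [intervalIntegral.integral_interval_sub_left (intInt_abs_rpow hp1 0 w) (intInt_abs_rpow hp1 0 v)]

theorem hh_zero (p : ℝ) : hh p 0 = 0 := by simp [hh]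

theorem hh_odd (p x : ℝ) : hh p (-x) = - hh p x := by
  simp only [hh, abs_neg]; ring

theorem hasDerivAt_HH {p : ℝ} (hp0 : 0 < p) (hp1 : p < 1) (x : ℝ) :
    HasDerivAt (HH p) (hh p x) x := by
  have hc : (0:ℝ) < (1 - p) * (2 - p) := by nlinarith
  rcases lt_trichotomy x 0 with hx | rfl | hx
  · have h2 := (Real.hasDerivAt_rpow_const (x := -x) (p := 2-p)
      (Or.inl (by linarith))).comp x (hasDerivAt_neg x)
    have h3 := h2.div_const ((1-p)*(2-p))
    have heq : HH p =ᶠ[nhds x] fun y => (-y) ^ (2-p) / ((1-p)*(2-p)) := by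
      filter_upwards [eventually_lt_nhds hx] with y hy
      rw [HH, abs_of_neg hy]
    refine (HasDerivAt.congr_of_eventuallyEq ?_ heq)
    convert h3 using 1
    · rfl
    · rfl
    have hxpos : (0:ℝ) < -x := by linarith
    have e1 : (-x) ^ (2 - p - 1) = (-x) * (-x) ^ (-p) := by
      rw [show (2:ℝ) - p - 1 = 1 + (-p) by ring, Real.rpow_add hxpos, Real.rpow_one]
    unfold hh; rw [abs_of_neg hx]
    show x * (-x) ^ (-p) / (1 - p) = _
    rw [e1, show (2-p) * (-x * (-x) ^ (-p)) * (-1) = (2-p) * (x * (-x) ^ (-p)) by ring,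
      mul_comm (1-p) (2-p), mul_div_mul_left _ _ (by linarith : (2:ℝ)-p ≠ 0)]
  · rw [hh_zero]
    rw [hasDerivAt_iff_tendsto_slope]
    have hbound : ∀ y : ℝ, y ≠ 0 → ‖slope (HH p) 0 y‖ ≤ |y| ^ (1-p) / ((1-p)*(2-p)) := by
      intro y hy
      rw [slope_def_field]
      rw [HH, HH]
      simp only [abs_zero, sub_zero]
      rw [Real.zero_rpow (by intro hc'; linarith), zero_div, sub_zero]
      have e2 : |y| ^ (2-p) = |y| ^ (1-p) * |y| := by
        rw [show (2:ℝ)-p = (1-p)+1 by ring, Real.rpow_add (abs_pos.mpr hy), Real.rpow_one]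
      rw [e2, Real.norm_eq_abs, abs_div, abs_div, abs_of_pos hc, abs_mul, abs_abs,
        abs_of_nonneg (Real.rpow_nonneg (abs_nonneg y) _), div_div,
        mul_div_mul_right _ _ (by simpa using hy : |y| ≠ 0)]
    apply squeeze_zero_norm' (f := slope (HH p) 0)
      (a := fun y : ℝ => |y| ^ (1-p) / ((1-p)*(2-p)))
    · filter_upwards [eventually_mem_nhdsWithin] with y hy
      exact hbound y hy
    · have hcont2 : Continuous (fun y : ℝ => |y| ^ (1-p) / ((1-p)*(2-p))) :=
        ((Real.continuous_rpow_const (by linarith)).comp continuous_abs).div_const _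
      have := (hcont2.tendsto 0).mono_left (nhdsWithin_le_nhds (s := {(0:ℝ)}ᶜ))
      simpa [Real.zero_rpow (by intro hc'; linarith : (1:ℝ)-p ≠ 0)] using this
  · have h2 := Real.hasDerivAt_rpow_const (x := x) (p := 2-p) (Or.inl (by linarith))
    have h3 := h2.div_const ((1-p)*(2-p))
    have heq : HH p =ᶠ[nhds x] fun y => y ^ (2-p) / ((1-p)*(2-p)) := by
      filter_upwards [eventually_gt_nhds hx] with y hy
      rw [HH, abs_of_pos hy]
    refine (HasDerivAt.congr_of_eventuallyEq ?_ heq)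
    convert h3 using 1
    · rfl
    have e1 : x ^ (2 - p - 1) = x * x ^ (-p) := by
      rw [show (2:ℝ) - p - 1 = 1 + (-p) by ring, Real.rpow_add hx, Real.rpow_one]
    unfold hh; rw [abs_of_pos hx]
    rw [e1, mul_comm (1-p) (2-p), mul_div_mul_left _ _ (by linarith : (2:ℝ)-p ≠ 0)]

theorem clampI_mem {R : ℝ} (hR : 0 < R) (x : ℝ) : clampI R x ∈ Icc (-R) R := by
  constructor
  · exact le_max_left _ _
  · exact max_le (by linarith) (min_le_right _ _)

theorem clampI_eq {R : ℝ} (x : ℝ) (hx : x ∈ Icc (-R) R) : clampI R x = x := by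
  rw [clampI, min_eq_left hx.2, max_eq_right hx.1]

theorem continuous_ggc {p R : ℝ} (hp0 : 0 < p) (hR : 0 < R) {φ' : ℝ → ℝ}
    (hcont : ContinuousOn φ' (Icc (-R) R)) :
    Continuous (fun x => gg p φ' (clampI R x)) := by
  have hclamp : Continuous (clampI R) := continuous_const.max (continuous_id.min continuous_const)
  have hg : ContinuousOn (gg p φ') (Icc (-R) R) := by
    apply ContinuousOn.mul
    · exact ((Real.continuous_rpow_const hp0.le).comp continuous_abs).continuousOn
    · exact hcont.pow 2
  exact hg.comp_continuous hclamp (clampI_mem hR)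

theorem hasDerivAt_KK {p R : ℝ} (hp0 : 0 < p) (hR : 0 < R) {φ' : ℝ → ℝ}
    (hcont : ContinuousOn φ' (Icc (-R) R)) (x : ℝ) :
    HasDerivAt (fun y => ∫ t in (0:ℝ)..y, gg p φ' (clampI R t)) (gg p φ' (clampI R x)) x := by
  have hc := continuous_ggc hp0 hR hcont
  exact intervalIntegral.integral_hasDerivAt_right (hc.intervalIntegrable _ _)
    (hc.stronglyMeasurable.stronglyMeasurableAtFilter) hc.continuousAt

/-- Cauchy-Schwarz for set integrals via the discriminant trick. -/
theorem sq_setIntegral_le {s : Set ℝ} (f₁ f₂ : ℝ → ℝ)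
    (h1 : IntegrableOn (fun x => f₁ x ^ 2) s) (h2 : IntegrableOn (fun x => f₂ x ^ 2) s)
    (h12 : IntegrableOn (fun x => f₁ x * f₂ x) s) :
    (∫ x in s, f₁ x * f₂ x) ^ 2 ≤ (∫ x in s, f₁ x ^ 2) * (∫ x in s, f₂ x ^ 2) := by
  set A := ∫ x in s, f₁ x ^ 2 with hA
  set B := ∫ x in s, f₁ x * f₂ x with hB
  set C := ∫ x in s, f₂ x ^ 2 with hC
  have hq : ∀ t : ℝ, 0 ≤ A * (t * t) + (2 * B) * t + C := by
    intro t
    have h0 : 0 ≤ ∫ x in s, (t * f₁ x + f₂ x) ^ 2 :=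
      integral_nonneg fun x => sq_nonneg _
    have hexp : ∀ x, (t * f₁ x + f₂ x) ^ 2
        = t ^ 2 * f₁ x ^ 2 + (2 * t) * (f₁ x * f₂ x) + f₂ x ^ 2 := by intro x; ring
    have i1 : IntegrableOn (fun x => t ^ 2 * f₁ x ^ 2) s := h1.const_mul (t ^ 2)
    have i2 : IntegrableOn (fun x => (2 * t) * (f₁ x * f₂ x)) s := h12.const_mul (2 * t)
    calc (0:ℝ) ≤ ∫ x in s, (t * f₁ x + f₂ x) ^ 2 := h0
    _ = ∫ x in s, (t ^ 2 * f₁ x ^ 2 + (2 * t) * (f₁ x * f₂ x) + f₂ x ^ 2) := by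
        simp_rw [hexp]
    _ = t ^ 2 * A + (2 * t) * B + C := by
        have i12 : IntegrableOn (fun x => t ^ 2 * f₁ x ^ 2 + (2 * t) * (f₁ x * f₂ x)) s :=
          i1.add i2
        rw [MeasureTheory.integral_add i12 h2,
          MeasureTheory.integral_add i1 i2,
          MeasureTheory.integral_const_mul, MeasureTheory.integral_const_mul]
    _ = A * (t * t) + (2 * B) * t + C := by ring
  have hd := discrim_le_zero hq
  rw [discrim] at hd
  nlinarith [hd]

theorem core_poincare (p R : ℝ) (φ φ' : ℝ → ℝ)
    (hp0 : 0 < p) (hp1 : p < 1) (hR : 0 < R)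
    (hderiv : ∀ w ∈ Icc (-R) R, HasDerivAt φ (φ' w) w)
    (hcont : ContinuousOn φ' (Icc (-R) R)) :
    ∫ w in Ioo (-R) R, (φ w - (1 / (2 * R)) * ∫ v in Ioo (-R) R, φ v) ^ 2
      ≤ (1 / ((2 - p) * (1 - p)))
        * ∫ w in Ioo (-R) R, (R ^ (2 - p) - |w| ^ (2 - p)) * |w| ^ p * (φ' w) ^ 2 := by
  have hRR : -R ≤ R := by linarith
  have hRR' : -R < R := by linarith
  set I : Set ℝ := Ioo (-R) R with hI
  set gt : ℝ → ℝ := fun x => gg p φ' (clampI R x) with hgt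
  set K : ℝ → ℝ := fun y => ∫ t in (0:ℝ)..y, gt t with hKdef
  have hgtc : Continuous gt := continuous_ggc hp0 hR hcont
  have hK : ∀ x, HasDerivAt K (gt x) x := hasDerivAt_KK hp0 hR hcont
  have hKc : Continuous K := by
    rw [continuous_iff_continuousAt]; exact fun x => (hK x).continuousAt
  have hφc : ContinuousOn φ (Icc (-R) R) :=
    fun x hx => (hderiv x hx).continuousAt.continuousWithinAt
  have hIco : volume I ≠ ⊤ := by
    rw [hI, Real.volume_Ioo]; exact ENNReal.ofReal_ne_top
  have hvol : (volume I).toReal = 2 * R := by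
    rw [hI, Real.volume_Ioo, ENNReal.toReal_ofReal (by linarith)]
    ring
  -- integrability facts
  have intφ : IntegrableOn φ I := (hφc.integrableOn_Icc).mono_set Ioo_subset_Icc_self
  have intφ2 : IntegrableOn (fun w => (φ w) ^ 2) I :=
    ((hφc.pow 2).integrableOn_Icc).mono_set Ioo_subset_Icc_self
  have inthII : IntervalIntegrable (hh p) volume (-R) R := by
    have := (intInt_abs_rpow hp1 (-R) R).mul_continuousOn
      (g := fun x => x / (1 - p)) ((continuous_id.div_const _).continuousOn)
    apply this.congr
    intro x _
    simp only [hh]; ring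
  have inth : IntegrableOn (hh p) I := by
    have := (intervalIntegrable_iff_integrableOn_Ioc_of_le hRR).mp inthII
    exact this.mono_set Ioo_subset_Ioc_self
  have inthKII : IntervalIntegrable (fun x => hh p x * K x) volume (-R) R := by
    have := (intInt_abs_rpow hp1 (-R) R).mul_continuousOn
      (g := fun x => x / (1 - p) * K x)
      (((continuous_id.div_const _).mul hKc).continuousOn)
    apply this.congr
    intro x _
    simp only [hh]; ring
  have inthK : IntegrableOn (fun x => hh p x * K x) I := by
    have := (intervalIntegrable_iff_integrableOn_Ioc_of_le hRR).mp inthKII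
    exact this.mono_set Ioo_subset_Ioc_self
  have intK : IntegrableOn K I := (hKc.continuousOn.integrableOn_Icc).mono_set Ioo_subset_Icc_self
  -- ∫ h over I is zero
  have hh_int_zero : ∫ x in I, hh p x = 0 := by
    have h1 : ∫ x in I, hh p x = ∫ x in (-R)..R, hh p x := by
      rw [intervalIntegral.integral_of_le hRR, integral_Ioc_eq_integral_Ioo]
    have h2 : ∫ x in (-R)..R, hh p (-x) = ∫ x in (-R)..R, hh p x := by
      rw [intervalIntegral.integral_comp_neg (fun x => hh p x), neg_neg]
    have h3 : ∫ x in (-R)..R, hh p (-x) = - ∫ x in (-R)..R, hh p x := by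
      simp_rw [hh_odd]
      exact intervalIntegral.integral_neg
    rw [h1]; linarith [h2.symm.trans h3]
  -- Cauchy–Schwarz key inequality
  have key0 : ∀ v ∈ Icc (-R) R, ∀ w ∈ Icc (-R) R, v ≤ w →
      (φ w - φ v) ^ 2 ≤ (hh p w - hh p v) * (K w - K v) := by
    intro v hv w hw hvw
    have hsub : Icc v w ⊆ Icc (-R) R := Icc_subset_Icc hv.1 hw.2
    have hsub' : Ioc v w ⊆ Icc (-R) R := Ioc_subset_Icc_self.trans hsub
    have hφ'i : IntervalIntegrable φ' volume v w := by
      apply ContinuousOn.intervalIntegrable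
      rw [uIcc_of_le hvw]
      exact hcont.mono hsub
    have ftc : φ w - φ v = ∫ u in Ioc v w, φ' u := by
      rw [← intervalIntegral.integral_of_le hvw]
      refine (intervalIntegral.integral_eq_sub_of_hasDerivAt ?_ hφ'i).symm
      intro x hx
      rw [uIcc_of_le hvw] at hx
      exact hderiv x (hsub hx)
    set f₁ : ℝ → ℝ := fun u => |u| ^ (-(p/2)) with hf₁
    set f₂ : ℝ → ℝ := fun u => |u| ^ (p/2) * φ' u with hf₂
    have e₁ : ∀ u : ℝ, f₁ u ^ 2 = |u| ^ (-p) := by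
      intro u
      rw [hf₁, sq, ← Real.rpow_add' (abs_nonneg u) (by intro hc; simp at hc; linarith)]
      congr 1; ring
    have e₂ : ∀ u : ℝ, f₂ u ^ 2 = gg p φ' u := by
      intro u
      rw [hf₂, gg, mul_pow, sq (|u| ^ (p/2)),
        ← Real.rpow_add' (abs_nonneg u) (by intro hc; simp at hc; linarith)]
      congr 2; ring
    have e₁₂ : ∀ u : ℝ, u ≠ 0 → f₁ u * f₂ u = φ' u := by
      intro u hu
      rw [hf₁, hf₂, ← mul_assoc, ← Real.rpow_add (abs_pos.mpr hu),
        show -(p/2) + p/2 = (0:ℝ) by ring, Real.rpow_zero, one_mul]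
    have hzero : (volume.restrict (Ioc v w)) {(0:ℝ)} = 0 :=
      le_antisymm (le_trans (Measure.restrict_le_self _) (by simp)) zero_le
    have hne : ∀ᵐ u ∂(volume.restrict (Ioc v w)), u ≠ (0:ℝ) := by
      rw [ae_iff]
      convert hzero using 2
      ext u; simp
    have hae : (fun u => φ' u) =ᵐ[volume.restrict (Ioc v w)] fun u => f₁ u * f₂ u := by
      filter_upwards [hne] with u hu
      exact (e₁₂ u hu).symm
    have intφ's : IntegrableOn φ' (Ioc v w) :=
      ((hcont.mono hsub).integrableOn_Icc).mono_set Ioc_subset_Icc_self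
    have i12 : IntegrableOn (fun u => f₁ u * f₂ u) (Ioc v w) := intφ's.congr_fun_ae hae
    have i1 : IntegrableOn (fun u => f₁ u ^ 2) (Ioc v w) := by
      have : IntegrableOn (fun u : ℝ => |u| ^ (-p)) (Ioc v w) :=
        (intervalIntegrable_iff_integrableOn_Ioc_of_le hvw).mp (intInt_abs_rpow hp1 v w)
      exact this.congr_fun_ae (by filter_upwards with u using (e₁ u).symm)
    have i2 : IntegrableOn (fun u => f₂ u ^ 2) (Ioc v w) := by
      have hggc : ContinuousOn (gg p φ') (Icc (-R) R) := by
        apply ContinuousOn.mul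
        · exact ((Real.continuous_rpow_const hp0.le).comp continuous_abs).continuousOn
        · exact hcont.pow 2
      have : IntegrableOn (gg p φ') (Ioc v w) :=
        ((hggc.mono hsub).integrableOn_Icc).mono_set Ioc_subset_Icc_self
      exact this.congr_fun_ae (by filter_upwards with u using (e₂ u).symm)
    have hCS := sq_setIntegral_le f₁ f₂ i1 i2 i12
    have eB : ∫ u in Ioc v w, f₁ u * f₂ u = φ w - φ v := by
      rw [← integral_congr_ae hae, ← ftc]
    have eA : ∫ u in Ioc v w, f₁ u ^ 2 = hh p w - hh p v := by
      simp_rw [e₁]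
      rw [← intervalIntegral.integral_of_le hvw]
      exact integral_abs_rpow hp1 v w
    have eC : ∫ u in Ioc v w, f₂ u ^ 2 = K w - K v := by
      simp_rw [e₂]
      have egg : ∀ u ∈ Ioc v w, gg p φ' u = gt u := by
        intro u hu
        exact (congrArg (gg p φ') (clampI_eq u (hsub' hu))).symm
      rw [setIntegral_congr_fun measurableSet_Ioc egg,
        ← intervalIntegral.integral_of_le hvw]
      exact intervalIntegral.integral_eq_sub_of_hasDerivAt
        (fun x _ => hK x) (hgtc.intervalIntegrable _ _)
    rw [eB, eA, eC] at hCS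
    exact hCS
  have key : ∀ v ∈ Icc (-R) R, ∀ w ∈ Icc (-R) R,
      (φ w - φ v) ^ 2 ≤ (hh p w - hh p v) * (K w - K v) := by
    intro v hv w hw
    rcases le_total v w with h | h
    · exact key0 v hv w hw h
    · have := key0 w hw v hv h
      calc (φ w - φ v) ^ 2 = (φ v - φ w) ^ 2 := by ring
      _ ≤ (hh p v - hh p w) * (K v - K w) := this
      _ = (hh p w - hh p v) * (K w - K v) := by ring
  set A := ∫ v in I, φ v with hA
  set B₀ := ∫ v in I, (φ v) ^ 2 with hB₀
  set AK := ∫ v in I, K v with hAK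
  set BhK := ∫ v in I, hh p v * K v with hBhK
  have hIlt : volume I < ⊤ := lt_top_iff_ne_top.mpr hIco
  have iconst : ∀ c : ℝ, IntegrableOn (fun _ : ℝ => c) I :=
    fun c => integrableOn_const hIco
  have claimX : ∀ w : ℝ, ∫ v in I, (φ w - φ v) ^ 2
      = 2 * R * (φ w) ^ 2 - (2 * A) * φ w + B₀ := by
    intro w
    have e : (fun v => (φ w - φ v) ^ 2)
        = fun v => ((φ w) ^ 2 - (2 * φ w) * φ v) + (φ v) ^ 2 := by
      funext v; ring
    have i1 : IntegrableOn (fun _ : ℝ => (φ w) ^ 2) I := iconst _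
    have i2 : IntegrableOn (fun v => (2 * φ w) * φ v) I := intφ.const_mul _
    have i12 : IntegrableOn (fun v => (φ w) ^ 2 - (2 * φ w) * φ v) I := i1.sub i2
    rw [e, MeasureTheory.integral_add i12 intφ2,
      MeasureTheory.integral_sub i1 i2, MeasureTheory.integral_const_mul,
      setIntegral_const, smul_eq_mul, measureReal_def, hvol]
    ring
  have claimY : ∀ w : ℝ, ∫ v in I, (hh p w - hh p v) * (K w - K v)
      = 2 * R * (hh p w * K w) - AK * hh p w + BhK := by
    intro w
    have e : (fun v => (hh p w - hh p v) * (K w - K v))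
        = fun v => (((hh p w * K w) - (hh p w) * K v) - (K w) * hh p v) + hh p v * K v := by
      funext v; ring
    have i1 : IntegrableOn (fun _ : ℝ => hh p w * K w) I := iconst _
    have i2 : IntegrableOn (fun v => (hh p w) * K v) I := intK.const_mul _
    have i3 : IntegrableOn (fun v => (K w) * hh p v) I := inth.const_mul _
    have i12 : IntegrableOn (fun v => hh p w * K w - hh p w * K v) I := i1.sub i2
    have i123 : IntegrableOn (fun v => hh p w * K w - hh p w * K v - K w * hh p v) I :=
      i12.sub i3
    rw [e, MeasureTheory.integral_add i123 inthK,
      MeasureTheory.integral_sub i12 i3, MeasureTheory.integral_sub i1 i2,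
      MeasureTheory.integral_const_mul, MeasureTheory.integral_const_mul,
      MeasureTheory.integral_const_mul,
      setIntegral_const, smul_eq_mul, measureReal_def, hvol, hh_int_zero, ← hAK, ← hBhK]
    ring
  -- pointwise comparison of the closed forms
  have claimMono : ∀ w ∈ Icc (-R) R,
      2 * R * (φ w) ^ 2 - (2 * A) * φ w + B₀
        ≤ 2 * R * (hh p w * K w) - AK * hh p w + BhK := by
    intro w hw
    rw [← claimX w, ← claimY w]
    have iX : IntegrableOn (fun v => (φ w - φ v) ^ 2) I :=
      (((continuousOn_const.sub hφc).pow 2).integrableOn_Icc).mono_set Ioo_subset_Icc_self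
    have iY : IntegrableOn (fun v => (hh p w - hh p v) * (K w - K v)) I := by
      have e : (fun v => (hh p w - hh p v) * (K w - K v))
          = fun v => (((hh p w * K w) - (hh p w) * K v) - (K w) * hh p v) + hh p v * K v := by
        funext v; ring
      rw [e]
      exact (((iconst _).sub (intK.const_mul _)).sub (inth.const_mul _)).add inthK
    refine setIntegral_mono_on iX iY measurableSet_Ioo ?_
    intro v hv
    exact key v (Ioo_subset_Icc_self hv) w hw
  have intXw : IntegrableOn (fun w => 2 * R * (φ w) ^ 2 - (2 * A) * φ w + B₀) I :=
    ((intφ2.const_mul _).sub (intφ.const_mul _)).add (iconst _)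
  have intYw : IntegrableOn (fun w => 2 * R * (hh p w * K w) - AK * hh p w + BhK) I :=
    ((inthK.const_mul _).sub (inth.const_mul _)).add (iconst _)
  have stepw : ∫ w in I, (2 * R * (φ w) ^ 2 - (2 * A) * φ w + B₀)
      ≤ ∫ w in I, (2 * R * (hh p w * K w) - AK * hh p w + BhK) :=
    setIntegral_mono_on intXw intYw measurableSet_Ioo
      (fun w hw => claimMono w (Ioo_subset_Icc_self hw))
  have evalX : ∫ w in I, (2 * R * (φ w) ^ 2 - (2 * A) * φ w + B₀)
      = 4 * R * B₀ - 2 * A ^ 2 := by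
    have j1 : IntegrableOn (fun w => 2 * R * (φ w) ^ 2) I := intφ2.const_mul _
    have j2 : IntegrableOn (fun w => (2 * A) * φ w) I := intφ.const_mul _
    have j12 : IntegrableOn (fun w => 2 * R * (φ w) ^ 2 - (2 * A) * φ w) I := j1.sub j2
    rw [MeasureTheory.integral_add j12 (iconst _),
      MeasureTheory.integral_sub j1 j2,
      MeasureTheory.integral_const_mul, MeasureTheory.integral_const_mul,
      setIntegral_const, smul_eq_mul, measureReal_def, hvol]
    ring
  have evalY : ∫ w in I, (2 * R * (hh p w * K w) - AK * hh p w + BhK)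
      = 4 * R * BhK := by
    have j1 : IntegrableOn (fun w => 2 * R * (hh p w * K w)) I := inthK.const_mul _
    have j2 : IntegrableOn (fun w => AK * hh p w) I := inth.const_mul _
    have j12 : IntegrableOn (fun w => 2 * R * (hh p w * K w) - AK * hh p w) I := j1.sub j2
    rw [MeasureTheory.integral_add j12 (iconst _),
      MeasureTheory.integral_sub j1 j2,
      MeasureTheory.integral_const_mul, MeasureTheory.integral_const_mul,
      setIntegral_const, smul_eq_mul, measureReal_def, hvol, hh_int_zero]
    ring
  have main1 : ∫ w in I, (φ w - 1 / (2 * R) * A) ^ 2 ≤ BhK := by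
    have e1 : ∫ w in I, (φ w - 1 / (2 * R) * A) ^ 2
        = B₀ - A ^ 2 / (2 * R) := by
      have e : (fun w => (φ w - 1 / (2 * R) * A) ^ 2)
          = fun w => ((φ w) ^ 2 - (2 * (1 / (2 * R) * A)) * φ w) + (1 / (2 * R) * A) ^ 2 := by
        funext w; ring
      have j2 : IntegrableOn (fun w => (2 * (1 / (2 * R) * A)) * φ w) I := intφ.const_mul _
      have j12 : IntegrableOn (fun w => (φ w) ^ 2 - (2 * (1 / (2 * R) * A)) * φ w) I :=
        intφ2.sub j2
      rw [e, MeasureTheory.integral_add j12 (iconst _),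
        MeasureTheory.integral_sub intφ2 j2,
        MeasureTheory.integral_const_mul, setIntegral_const, smul_eq_mul, measureReal_def, hvol]
      field_simp
      ring
    rw [e1]
    have h4 : 4 * R * B₀ - 2 * A ^ 2 ≤ 4 * R * BhK := by
      rw [← evalX, ← evalY]; exact stepw
    have e2 : 4 * R * (B₀ - A ^ 2 / (2 * R)) = 4 * R * B₀ - 2 * A ^ 2 := by
      field_simp; ring
    nlinarith [h4, e2, hR]
  -- integration by parts: BhK equals the weighted integral
  have ibp := intervalIntegral.integral_mul_deriv_eq_deriv_mul
    (u := K) (v := HH p) (u' := gt) (v' := hh p) (a := -R) (b := R)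
    (fun x _ => hK x) (fun x _ => hasDerivAt_HH hp0 hp1 x)
    (hgtc.intervalIntegrable _ _) inthII
  have hHR : HH p (-R) = HH p R := by simp [HH]
  have hKR : ∫ x in (-R)..R, gt x = K R - K (-R) :=
    intervalIntegral.integral_eq_sub_of_hasDerivAt (fun x _ => hK x)
      (hgtc.intervalIntegrable _ _)
  have hBhK2 : BhK = ∫ x in (-R)..R, K x * hh p x := by
    rw [hBhK, intervalIntegral.integral_of_le hRR, integral_Ioc_eq_integral_Ioo]
    congr 1; funext x; ring
  have hgtHH : IntervalIntegrable (fun x => gt x * HH p x) volume (-R) R := by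
    apply Continuous.intervalIntegrable
    apply hgtc.mul
    exact (Real.continuous_rpow_const (by linarith)).comp continuous_abs |>.div_const _
  have lin : ∫ x in (-R)..R, (HH p R - HH p x) * gt x
      = HH p R * (∫ x in (-R)..R, gt x) - ∫ x in (-R)..R, gt x * HH p x := by
    have e : (fun x => (HH p R - HH p x) * gt x)
        = fun x => HH p R * gt x - gt x * HH p x := by funext x; ring
    rw [e, intervalIntegral.integral_sub ((hgtc.intervalIntegrable _ _).const_mul _) hgtHH,
      intervalIntegral.integral_const_mul]
  have hBhK3 : BhK = ∫ x in (-R)..R, (HH p R - HH p x) * gt x := by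
    rw [lin, hKR, hBhK2, ibp, hHR]
    ring
  have final : BhK = (1 / ((2 - p) * (1 - p)))
      * ∫ w in I, (R ^ (2 - p) - |w| ^ (2 - p)) * |w| ^ p * (φ' w) ^ 2 := by
    rw [hBhK3, intervalIntegral.integral_of_le hRR, integral_Ioc_eq_integral_Ioo]
    rw [← MeasureTheory.integral_const_mul]
    apply setIntegral_congr_fun measurableSet_Ioo
    intro x hx
    have hgx : gt x = gg p φ' x :=
      congrArg (gg p φ') (clampI_eq x (Ioo_subset_Icc_self hx))
    show (HH p R - HH p x) * gt x = _
    rw [hgx, gg, HH, HH, abs_of_pos hR]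
    have h1p : (1:ℝ) - p ≠ 0 := by linarith
    have h2p : (2:ℝ) - p ≠ 0 := by linarith
    field_simp
  rw [← final]
  exact main1

/-- Weighted Poincaré-type inequality on `(-R,R)` with weight
`(R^(2-p) - |w|^(2-p)) |w|^p`, `0 < p < 1`. -/
theorem weighted_poincare_p
    (p R : ℝ) (φ φ' : ℝ → ℝ)
    (hp0 : 0 < p) (hp1 : p < 1) (hR : 0 < R)
    (hderiv : ∀ w ∈ Ioo (-R) R, HasDerivAt φ (φ' w) w)
    (hcont : ContinuousOn φ' (Ioo (-R) R))
    (hφ : IntegrableOn φ (Ioo (-R) R))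
    (hφ2 : IntegrableOn (fun w => (φ w - (1 / (2 * R)) * ∫ v in Ioo (-R) R, φ v) ^ 2)
      (Ioo (-R) R))
    (hw : IntegrableOn (fun w => (R ^ (2 - p) - |w| ^ (2 - p)) * |w| ^ p * (φ' w) ^ 2)
      (Ioo (-R) R)) :
    ∫ w in Ioo (-R) R, (φ w - (1 / (2 * R)) * ∫ v in Ioo (-R) R, φ v) ^ 2
      ≤ (1 / ((2 - p) * (1 - p)))
        * ∫ w in Ioo (-R) R, (R ^ (2 - p) - |w| ^ (2 - p)) * |w| ^ p * (φ' w) ^ 2 := by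
  set C : ℝ := 1 / ((2 - p) * (1 - p)) with hC
  set m : ℝ := (1 / (2 * R)) * ∫ v in Ioo (-R) R, φ v with hm
  set r : ℕ → ℝ := fun n => R * (1 - 1 / (n + 2)) with hr
  have hn2 : ∀ n : ℕ, (0:ℝ) < (n:ℝ) + 2 := fun n => by positivity
  have hfr : ∀ n : ℕ, (0:ℝ) < 1 - 1 / ((n:ℝ) + 2) := by
    intro n
    have h2 : (1:ℝ) / ((n:ℝ) + 2) ≤ 1 / 2 := by
      apply div_le_div_of_nonneg_left (by norm_num) (by norm_num)
      have := Nat.cast_nonneg (α := ℝ) n; linarith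
    linarith
  have hr0 : ∀ n, 0 < r n := fun n => mul_pos hR (hfr n)
  have hrR : ∀ n, r n < R := by
    intro n
    rw [hr]
    have : (0:ℝ) < 1 / ((n:ℝ) + 2) := by positivity
    nlinarith
  have hrmono : Monotone r := by
    intro a b hab
    rw [hr]
    have hcast : (a:ℝ) ≤ (b:ℝ) := Nat.cast_le.mpr hab
    have : (1:ℝ) / ((b:ℝ) + 2) ≤ 1 / ((a:ℝ) + 2) := by
      apply div_le_div_of_nonneg_left (by norm_num) (hn2 a)
      linarith
    have := hR.le
    nlinarith
  have hrtend : Filter.Tendsto r Filter.atTop (nhds R) := by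
    rw [hr]
    have h1 : Filter.Tendsto (fun n : ℕ => 1 / ((n:ℝ) + 2)) Filter.atTop (nhds 0) := by
      have hcomp : Filter.Tendsto (fun n : ℕ => ((n:ℝ) + 2)) Filter.atTop Filter.atTop :=
        Filter.tendsto_atTop_add_const_right _ 2 tendsto_natCast_atTop_atTop
      have := tendsto_inv_atTop_zero.comp hcomp
      simpa [one_div, Function.comp_def] using this
    have h2 := ((tendsto_const_nhds (x := (1:ℝ))).sub h1).const_mul R
    simpa using h2
  set S : ℕ → Set ℝ := fun n => Ioo (-(r n)) (r n) with hS
  have hSsub : ∀ n, Icc (-(r n)) (r n) ⊆ Ioo (-R) R := by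
    intro n
    apply Icc_subset_Ioo (neg_lt_neg (hrR n)) (hrR n)
  have hSsub' : ∀ n, S n ⊆ Ioo (-R) R := fun n => Ioo_subset_Icc_self.trans (hSsub n)
  have hSmono : Monotone S := by
    intro a b hab
    exact Ioo_subset_Ioo (neg_le_neg (hrmono hab)) (hrmono hab)
  have hSunion : (⋃ n, S n) = Ioo (-R) R := by
    apply Subset.antisymm
    · exact iUnion_subset hSsub'
    · intro x hx
      have hax : |x| < R := abs_lt.mpr ⟨hx.1, hx.2⟩
      have : ∀ᶠ n in Filter.atTop, |x| < r n := hrtend.eventually (eventually_gt_nhds hax)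
      obtain ⟨n, hn⟩ := this.exists
      exact mem_iUnion.mpr ⟨n, abs_lt.mp hn⟩
  have hSmeas : ∀ n, MeasurableSet (S n) := fun n => measurableSet_Ioo
  -- per-n facts
  have hφcS : ∀ n, ContinuousOn φ (Icc (-(r n)) (r n)) :=
    fun n x hx => ((hderiv x (hSsub n hx)).continuousAt).continuousWithinAt
  have intφS : ∀ n, IntegrableOn φ (S n) :=
    fun n => ((hφcS n).integrableOn_Icc).mono_set Ioo_subset_Icc_self
  have intφ2S : ∀ n, IntegrableOn (fun w => (φ w) ^ 2) (S n) :=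
    fun n => (((hφcS n).pow 2).integrableOn_Icc).mono_set Ioo_subset_Icc_self
  have volS : ∀ n, (volume (S n)).toReal = 2 * r n := by
    intro n
    rw [hS, Real.volume_Ioo, ENNReal.toReal_ofReal (by linarith [hr0 n])]
    ring
  have iconstS : ∀ n, ∀ c : ℝ, IntegrableOn (fun _ : ℝ => c) (S n) := by
    intro n c
    refine integrableOn_const ?_
    rw [hS, Real.volume_Ioo]
    exact ENNReal.ofReal_ne_top
  set An : ℕ → ℝ := fun n => ∫ v in S n, φ v with hAn
  set mn : ℕ → ℝ := fun n => (1 / (2 * r n)) * An n with hmn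
  set B₀n : ℕ → ℝ := fun n => ∫ v in S n, (φ v) ^ 2 with hB₀n
  have evalm : ∀ n, ∀ c : ℝ, ∫ w in S n, (φ w - c) ^ 2
      = B₀n n - (2 * c) * An n + 2 * (r n) * c ^ 2 := by
    intro n c
    have e : (fun w => (φ w - c) ^ 2)
        = fun w => ((φ w) ^ 2 - (2 * c) * φ w) + c ^ 2 := by
      funext w; ring
    have j2 : IntegrableOn (fun w => (2 * c) * φ w) (S n) := (intφS n).const_mul _
    have j12 : IntegrableOn (fun w => (φ w) ^ 2 - (2 * c) * φ w) (S n) :=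
      (intφ2S n).sub j2
    rw [e, MeasureTheory.integral_add j12 (iconstS n _),
      MeasureTheory.integral_sub (intφ2S n) j2,
      MeasureTheory.integral_const_mul, setIntegral_const, smul_eq_mul, measureReal_def, volS n]
    try ring
  -- per-n core inequality combined with mean shift
  have keyn : ∀ n, ∫ w in S n, (φ w - m) ^ 2
      ≤ C * (∫ w in Ioo (-R) R, (R ^ (2 - p) - |w| ^ (2 - p)) * |w| ^ p * (φ' w) ^ 2)
        + 2 * (r n) * (mn n - m) ^ 2 := by
    intro n
    have hcore := core_poincare p (r n) φ φ' hp0 hp1 (hr0 n)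
      (fun w hw' => hderiv w (hSsub n hw'))
      (hcont.mono ((hSsub n).trans (by intro x hx; exact hx)))
    -- hcore : ∫ w in S n, (φ w - mn n)^2 ≤ C * ∫ w in S n, ω_n
    have hstep1 : ∫ w in S n, (φ w - m) ^ 2
        = (∫ w in S n, (φ w - mn n) ^ 2) + 2 * (r n) * (mn n - m) ^ 2 := by
      rw [evalm n m, evalm n (mn n)]
      have hAneq : An n = 2 * (r n) * mn n := by
        have hrn0 : (2 * r n) ≠ 0 := ne_of_gt (by linarith [hr0 n])
        rw [hmn]
        field_simp
        rw [mul_div_assoc, div_self (hr0 n).ne', mul_one]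
      rw [hAneq]
      ring
    have hstep2 : ∫ w in S n, (r n ^ (2 - p) - |w| ^ (2 - p)) * |w| ^ p * (φ' w) ^ 2
        ≤ ∫ w in Ioo (-R) R, (R ^ (2 - p) - |w| ^ (2 - p)) * |w| ^ p * (φ' w) ^ 2 := by
      have hmono1 : ∫ w in S n, (r n ^ (2 - p) - |w| ^ (2 - p)) * |w| ^ p * (φ' w) ^ 2
          ≤ ∫ w in S n, (R ^ (2 - p) - |w| ^ (2 - p)) * |w| ^ p * (φ' w) ^ 2 := by
        have iL : IntegrableOn
            (fun w => (r n ^ (2 - p) - |w| ^ (2 - p)) * |w| ^ p * (φ' w) ^ 2) (S n) := by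
          have hc : ContinuousOn
              (fun w : ℝ => (r n ^ (2 - p) - |w| ^ (2 - p)) * |w| ^ p * (φ' w) ^ 2)
              (Icc (-(r n)) (r n)) := by
            apply ContinuousOn.mul
            · apply ContinuousOn.mul
              · exact (continuous_const.sub
                  ((Real.continuous_rpow_const (by linarith)).comp continuous_abs)).continuousOn
              · exact ((Real.continuous_rpow_const hp0.le).comp continuous_abs).continuousOn
            · exact ((hcont.mono ((hSsub n).trans subset_rfl)).pow 2)
          exact (hc.integrableOn_Icc).mono_set Ioo_subset_Icc_self
        have iR : IntegrableOn
            (fun w => (R ^ (2 - p) - |w| ^ (2 - p)) * |w| ^ p * (φ' w) ^ 2) (S n) :=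
          hw.mono_set (hSsub' n)
        refine setIntegral_mono_on iL iR (hSmeas n) ?_
        intro w _
        have h1 : r n ^ (2-p) ≤ R ^ (2-p) :=
          Real.rpow_le_rpow (hr0 n).le (hrR n).le (by linarith)
        have h2 : (0:ℝ) ≤ |w| ^ p := Real.rpow_nonneg (abs_nonneg w) _
        nlinarith [sq_nonneg (φ' w), mul_nonneg h2 (sq_nonneg (φ' w))]
      have hmono2 : ∫ w in S n, (R ^ (2 - p) - |w| ^ (2 - p)) * |w| ^ p * (φ' w) ^ 2
          ≤ ∫ w in Ioo (-R) R, (R ^ (2 - p) - |w| ^ (2 - p)) * |w| ^ p * (φ' w) ^ 2 := by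
        apply setIntegral_mono_set hw
        · filter_upwards [ae_restrict_mem measurableSet_Ioo] with w hw'
          have h1 : |w| ≤ R := le_of_lt (abs_lt.mpr ⟨hw'.1, hw'.2⟩)
          have h2 : |w| ^ (2-p) ≤ R ^ (2-p) :=
            Real.rpow_le_rpow (abs_nonneg w) h1 (by linarith)
          have h3 : (0:ℝ) ≤ |w| ^ p := Real.rpow_nonneg (abs_nonneg w) _
          simp only [Pi.zero_apply]
          nlinarith [sq_nonneg (φ' w), mul_nonneg h3 (sq_nonneg (φ' w))]
        · exact (hSsub' n).eventuallyLE
      linarith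
    have hCpos : 0 < C := by
      rw [hC]
      apply div_pos one_pos
      nlinarith
    calc ∫ w in S n, (φ w - m) ^ 2
        = (∫ w in S n, (φ w - mn n) ^ 2) + 2 * (r n) * (mn n - m) ^ 2 := hstep1
      _ ≤ C * (∫ w in S n, (r n ^ (2 - p) - |w| ^ (2 - p)) * |w| ^ p * (φ' w) ^ 2)
            + 2 * (r n) * (mn n - m) ^ 2 := by
          have hcore' : (∫ w in S n, (φ w - mn n) ^ 2)
              ≤ C * ∫ w in S n, (r n ^ (2 - p) - |w| ^ (2 - p)) * |w| ^ p * (φ' w) ^ 2 := hcore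
          linarith
      _ ≤ C * (∫ w in Ioo (-R) R, (R ^ (2 - p) - |w| ^ (2 - p)) * |w| ^ p * (φ' w) ^ 2)
            + 2 * (r n) * (mn n - m) ^ 2 := by
          have := mul_le_mul_of_nonneg_left hstep2 hCpos.le
          linarith
  -- limits
  have tendLHS : Filter.Tendsto (fun n => ∫ w in S n, (φ w - m) ^ 2) Filter.atTop
      (nhds (∫ w in Ioo (-R) R, (φ w - m) ^ 2)) := by
    have := tendsto_setIntegral_of_monotone hSmeas hSmono (by rw [hSunion]; exact hφ2)
    rwa [hSunion] at this
  have tendA : Filter.Tendsto An Filter.atTop (nhds (∫ v in Ioo (-R) R, φ v)) := by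
    have := tendsto_setIntegral_of_monotone hSmeas hSmono (by rw [hSunion]; exact hφ)
    rwa [hSunion] at this
  have tendmn : Filter.Tendsto mn Filter.atTop (nhds m) := by
    have h1 : Filter.Tendsto (fun n => 2 * r n) Filter.atTop (nhds (2 * R)) :=
      hrtend.const_mul 2
    have h2 : Filter.Tendsto (fun n => 1 / (2 * r n)) Filter.atTop (nhds (1 / (2 * R))) :=
      (tendsto_const_nhds (x := (1:ℝ))).div h1 (by positivity)
    exact h2.mul tendA
  have tendRHS : Filter.Tendsto
      (fun n => C * (∫ w in Ioo (-R) R, (R ^ (2 - p) - |w| ^ (2 - p)) * |w| ^ p * (φ' w) ^ 2)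
        + 2 * (r n) * (mn n - m) ^ 2) Filter.atTop
      (nhds (C * (∫ w in Ioo (-R) R, (R ^ (2 - p) - |w| ^ (2 - p)) * |w| ^ p * (φ' w) ^ 2))) := by
    have h1 : Filter.Tendsto (fun n => 2 * (r n) * (mn n - m) ^ 2) Filter.atTop (nhds 0) := by
      have h2 : Filter.Tendsto (fun n => (mn n - m) ^ 2) Filter.atTop (nhds 0) := by
        have h2' := (tendmn.sub (tendsto_const_nhds (x := m))).pow 2
        rw [sub_self, zero_pow (two_ne_zero)] at h2'
        exact h2'
      have h3 := (hrtend.const_mul 2).mul h2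
      rw [mul_zero] at h3
      exact h3
    have h4 := (tendsto_const_nhds
      (x := C * (∫ w in Ioo (-R) R, (R ^ (2 - p) - |w| ^ (2 - p)) * |w| ^ p * (φ' w) ^ 2))).add h1
    rw [add_zero] at h4
    exact h4
  exact le_of_tendsto_of_tendsto' tendLHS tendRHS keyn
end

section
/- Let R > 0 and let φ : [−R,R] → ℝ be continuously differentiable. Then ∫_{−R}^R (1/(2R)) ∫_0^1 |φ′(wt)|² |w|^{3/2} dt dw ≤ (1/(3R)) ∫_{−R}^R (R^{3/2} − |w|^{3/2}) |φ′(w)|² dw. -/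
open MeasureTheory Set

lemma ibp_key (G : ℝ → ℝ) (hG : Continuous G) (R : ℝ) :
    (∫ w in (0:ℝ)..R, w ^ ((1:ℝ)/2) * ∫ u in (0:ℝ)..w, G u)
      = (2/3) * ∫ w in (0:ℝ)..R, (R ^ ((3:ℝ)/2) - w ^ ((3:ℝ)/2)) * G w := by
  set F : ℝ → ℝ := fun w => ∫ u in (0:ℝ)..w, G u with hFdef
  have hF : ∀ x : ℝ, HasDerivAt F (G x) x := fun x =>
    (hG.integral_hasStrictDerivAt 0 x).hasDerivAt
  have hv : ∀ x ∈ uIcc (0:ℝ) R,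
      HasDerivAt (fun y : ℝ => (2/3 : ℝ) * y ^ ((3:ℝ)/2)) (x ^ ((1:ℝ)/2)) x := by
    intro x _
    have h1 := (Real.hasDerivAt_rpow_const (x := x) (p := (3:ℝ)/2)
      (Or.inr (by norm_num))).const_mul ((2:ℝ)/3)
    have h2 : (2/3 : ℝ) * ((3:ℝ)/2 * x ^ ((3:ℝ)/2 - 1)) = x ^ ((1:ℝ)/2) := by
      rw [show (3:ℝ)/2 - 1 = 1/2 by norm_num]; ring
    rwa [h2] at h1
  have hsqrt_cont : Continuous fun x : ℝ => x ^ ((1:ℝ)/2) := by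
    apply continuous_iff_continuousAt.2
    intro x
    exact Real.continuousAt_rpow_const x _ (Or.inr (by norm_num))
  have h32_cont : Continuous fun x : ℝ => x ^ ((3:ℝ)/2) := by
    apply continuous_iff_continuousAt.2
    intro x
    exact Real.continuousAt_rpow_const x _ (Or.inr (by norm_num))
  have hibp := intervalIntegral.integral_mul_deriv_eq_deriv_mul
    (u := F) (u' := G) (v := fun y : ℝ => (2/3 : ℝ) * y ^ ((3:ℝ)/2))
    (v' := fun x : ℝ => x ^ ((1:ℝ)/2)) (a := 0) (b := R)
    (fun x _ => hF x) hv (hG.intervalIntegrable 0 R)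
    (hsqrt_cont.intervalIntegrable 0 R)
  have hL : (∫ w in (0:ℝ)..R, w ^ ((1:ℝ)/2) * F w)
      = ∫ x in (0:ℝ)..R, F x * x ^ ((1:ℝ)/2) :=
    intervalIntegral.integral_congr fun x _ => mul_comm _ _
  have hF0 : F 0 = 0 := intervalIntegral.integral_same
  have hJ : (∫ x in (0:ℝ)..R, G x * ((2/3 : ℝ) * x ^ ((3:ℝ)/2)))
      = (2/3 : ℝ) * ∫ w in (0:ℝ)..R, w ^ ((3:ℝ)/2) * G w := by
    rw [← intervalIntegral.integral_const_mul]
    exact intervalIntegral.integral_congr fun x _ => by ring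
  have hsub : (∫ w in (0:ℝ)..R, (R ^ ((3:ℝ)/2) - w ^ ((3:ℝ)/2)) * G w)
      = R ^ ((3:ℝ)/2) * F R - ∫ w in (0:ℝ)..R, w ^ ((3:ℝ)/2) * G w := by
    rw [← intervalIntegral.integral_const_mul]
    rw [← intervalIntegral.integral_sub (f := fun x => R ^ ((3:ℝ)/2) * G x)
      (g := fun x => x ^ ((3:ℝ)/2) * G x)
      ((continuous_const.mul hG).intervalIntegrable 0 R)
      ((h32_cont.mul hG).intervalIntegrable 0 R)]
    exact intervalIntegral.integral_congr fun x _ => by ring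
  rw [hL, hibp, hF0, hJ, hsub]
  ring

/-- The key estimate (3k) in the proof of the weighted Nash-type inequality of
exponent two: the doubly-averaged weighted Dirichlet integral is controlled by
the weighted Dirichlet integral with weight `R^(3/2) - |w|^(3/2)`. -/
theorem averaged_dirichlet_bound
    (R : ℝ) (φ φ' : ℝ → ℝ) (hR : 0 < R)
    (hderiv : ∀ w ∈ Icc (-R) R, HasDerivAt φ (φ' w) w)
    (hcont : ContinuousOn φ' (Icc (-R) R)) :
    ∫ w in Ioo (-R) R, (1 / (2 * R))
        * ∫ t in Icc (0:ℝ) 1, (φ' (w * t)) ^ 2 * |w| ^ ((3:ℝ) / 2)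
      ≤ (1 / (3 * R))
        * ∫ w in Ioo (-R) R, (R ^ ((3:ℝ) / 2) - |w| ^ ((3:ℝ) / 2)) * (φ' w) ^ 2 := by
  have hRR : (-R : ℝ) ≤ R := by linarith
  -- continuous extension of φ' to all of ℝ
  set g : ℝ → ℝ := fun x => φ' (max (-R) (min R x)) with hgdef
  have hmem : ∀ x : ℝ, max (-R) (min R x) ∈ Icc (-R) R := fun x =>
    ⟨le_max_left _ _, max_le hRR (min_le_left _ _)⟩
  have hg : Continuous g := hcont.comp_continuous
    (continuous_const.max (continuous_const.min continuous_id)) hmem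
  have hg_eq : ∀ x ∈ Icc (-R) R, g x = φ' x := by
    intro x hx
    simp only [hgdef]
    rw [min_eq_right hx.2, max_eq_right hx.1]
  set G : ℝ → ℝ := fun x => (g x) ^ 2 with hGdef
  have hGc : Continuous G := hg.pow 2
  have hFc : Continuous fun w : ℝ => ∫ u in (0:ℝ)..w, G u :=
    continuous_iff_continuousAt.2 fun x =>
      ((hGc.integral_hasStrictDerivAt 0 x).hasDerivAt.continuousAt)
  have habs32 : Continuous fun w : ℝ => |w| ^ ((3:ℝ)/2) :=
    (Real.continuous_rpow_const (by norm_num)).comp continuous_abs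
  -- the inner integral identity for w ≠ 0
  have hmemI : ∀ w ∈ Ioo (-R) R, ∀ t ∈ Icc (0:ℝ) 1, w * t ∈ Icc (-R) R := by
    intro w hw t ht
    have h1 : |w * t| ≤ |w| := by
      rw [abs_mul, abs_of_nonneg ht.1]
      nlinarith [abs_nonneg w, ht.2]
    have h2 : |w| ≤ R := abs_le.2 ⟨hw.1.le, hw.2.le⟩
    have := abs_le.1 (h1.trans h2)
    exact ⟨this.1, this.2⟩
  have hinner : ∀ w ∈ Ioo (-R) R, w ≠ 0 →
      (∫ t in Icc (0:ℝ) 1, (φ' (w * t)) ^ 2 * |w| ^ ((3:ℝ)/2))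
        = |w| ^ ((3:ℝ)/2) * w⁻¹ * ∫ u in (0:ℝ)..w, G u := by
    intro w hw hw0
    have e1 : (∫ t in Icc (0:ℝ) 1, (φ' (w * t)) ^ 2 * |w| ^ ((3:ℝ)/2))
        = ∫ t in Icc (0:ℝ) 1, G (w * t) * |w| ^ ((3:ℝ)/2) := by
      refine setIntegral_congr_fun measurableSet_Icc fun t ht => ?_
      simp only [hGdef]
      rw [hg_eq _ (hmemI w hw t ht)]
    have e2 : (∫ t in Icc (0:ℝ) 1, G (w * t) * |w| ^ ((3:ℝ)/2))
        = (∫ t in Icc (0:ℝ) 1, G (w * t)) * |w| ^ ((3:ℝ)/2) :=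
      integral_mul_const _ _
    have e3 : (∫ t in Icc (0:ℝ) 1, G (w * t)) = ∫ t in (0:ℝ)..1, G (w * t) := by
      rw [integral_Icc_eq_integral_Ioc, ← intervalIntegral.integral_of_le zero_le_one]
    have e4 : (∫ t in (0:ℝ)..1, G (w * t)) = w⁻¹ * ∫ u in (0:ℝ)..w, G u := by
      rw [intervalIntegral.integral_comp_mul_left G hw0]
      simp [smul_eq_mul]
    rw [e1, e2, e3, e4]
    ring
  -- integrability of the substituted integrand
  obtain ⟨C, hC⟩ := isCompact_Icc.exists_bound_of_continuousOn
    (s := Icc (-R) R) hGc.continuousOn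
  have hC0 : 0 ≤ C := (norm_nonneg _).trans (hC 0 ⟨by linarith, hR.le⟩)
  have hFb : ∀ w ∈ Icc (-R) R, |∫ u in (0:ℝ)..w, G u| ≤ C * |w| := by
    intro w hw
    have hb : ∀ x ∈ Set.uIoc (0:ℝ) w, ‖G x‖ ≤ C := by
      intro x hx
      apply hC
      rcases Set.mem_uIoc.1 hx with ⟨h1, h2⟩ | ⟨h1, h2⟩ <;>
        exact ⟨by linarith [hw.1, hw.2], by linarith [hw.1, hw.2]⟩
    have := intervalIntegral.norm_integral_le_of_norm_le_const hb
    simpa using this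
  have hbdd : ∀ w ∈ Icc (-R) R,
      ‖|w| ^ ((3:ℝ)/2) * w⁻¹ * ∫ u in (0:ℝ)..w, G u‖ ≤ C * R ^ ((3:ℝ)/2) := by
    intro w hw
    by_cases hw0 : w = 0
    · subst hw0
      simp [Real.zero_rpow (by norm_num : ((3:ℝ)/2) ≠ 0)]
      positivity
    · have hwpos : 0 < |w| := abs_pos.2 hw0
      have e : ‖|w| ^ ((3:ℝ)/2) * w⁻¹ * ∫ u in (0:ℝ)..w, G u‖
          = |w| ^ ((3:ℝ)/2) * |w|⁻¹ * |∫ u in (0:ℝ)..w, G u| := by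
        rw [Real.norm_eq_abs, abs_mul, abs_mul, abs_inv,
          abs_of_nonneg (Real.rpow_nonneg (abs_nonneg w) _)]
      rw [e]
      calc |w| ^ ((3:ℝ)/2) * |w|⁻¹ * |∫ u in (0:ℝ)..w, G u|
          ≤ |w| ^ ((3:ℝ)/2) * |w|⁻¹ * (C * |w|) :=
            mul_le_mul_of_nonneg_left (hFb w hw) (by positivity)
        _ = C * |w| ^ ((3:ℝ)/2) := by field_simp
        _ ≤ C * R ^ ((3:ℝ)/2) :=
            mul_le_mul_of_nonneg_left
              (Real.rpow_le_rpow (abs_nonneg w) (abs_le.2 ⟨hw.1, hw.2⟩) (by norm_num)) hC0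
  have hint : IntegrableOn (fun w : ℝ => |w| ^ ((3:ℝ)/2) * w⁻¹ * ∫ u in (0:ℝ)..w, G u)
      (Icc (-R) R) volume := by
    refine Measure.integrableOn_of_bounded (M := C * R ^ ((3:ℝ)/2))
      measure_Icc_lt_top.ne ?_ ?_
    · exact ((habs32.measurable.mul measurable_inv).mul hFc.measurable).aestronglyMeasurable
    · filter_upwards [ae_restrict_mem measurableSet_Icc] with w hw
      exact hbdd w hw
  -- rewrite the LHS using the inner identity (a.e. in w)
  have h0 : ∀ᵐ w : ℝ, w ≠ 0 := by
    have : (volume : Measure ℝ) {(0:ℝ)} = 0 := measure_singleton 0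
    rw [ae_iff]
    simpa [not_not] using this
  have hstep1 : (∫ w in Ioo (-R) R, (1 / (2 * R))
        * ∫ t in Icc (0:ℝ) 1, (φ' (w * t)) ^ 2 * |w| ^ ((3:ℝ) / 2))
      = ∫ w in Ioo (-R) R,
          (1 / (2 * R)) * (|w| ^ ((3:ℝ)/2) * w⁻¹ * ∫ u in (0:ℝ)..w, G u) := by
    refine setIntegral_congr_ae measurableSet_Ioo ?_
    filter_upwards [h0] with w hw0 hw
    rw [hinner w hw hw0]
  -- split the integral at 0
  have hIoc1 : IntegrableOn (fun w : ℝ => |w| ^ ((3:ℝ)/2) * w⁻¹ * ∫ u in (0:ℝ)..w, G u)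
      (Ioc (-R) 0) volume :=
    hint.mono_set (Set.Ioc_subset_Icc_self.trans (Set.Icc_subset_Icc le_rfl hR.le))
  have hIoc2 : IntegrableOn (fun w : ℝ => |w| ^ ((3:ℝ)/2) * w⁻¹ * ∫ u in (0:ℝ)..w, G u)
      (Ioc 0 R) volume :=
    hint.mono_set (Set.Ioc_subset_Icc_self.trans (Set.Icc_subset_Icc (by linarith) le_rfl))
  have hsplit : (∫ w in Ioo (-R) R, |w| ^ ((3:ℝ)/2) * w⁻¹ * ∫ u in (0:ℝ)..w, G u)
      = (∫ w in (-R:ℝ)..0, |w| ^ ((3:ℝ)/2) * w⁻¹ * ∫ u in (0:ℝ)..w, G u)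
        + ∫ w in (0:ℝ)..R, |w| ^ ((3:ℝ)/2) * w⁻¹ * ∫ u in (0:ℝ)..w, G u := by
    rw [← integral_Ioc_eq_integral_Ioo,
      ← Set.Ioc_union_Ioc_eq_Ioc (by linarith : (-R:ℝ) ≤ 0) hR.le,
      setIntegral_union (Set.Ioc_disjoint_Ioc_of_le le_rfl) measurableSet_Ioc hIoc1 hIoc2,
      ← intervalIntegral.integral_of_le (by linarith : (-R:ℝ) ≤ 0),
      ← intervalIntegral.integral_of_le hR.le]
  -- the positive half
  have hpos : (∫ w in (0:ℝ)..R, |w| ^ ((3:ℝ)/2) * w⁻¹ * ∫ u in (0:ℝ)..w, G u)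
      = (2/3) * ∫ w in (0:ℝ)..R, (R ^ ((3:ℝ)/2) - |w| ^ ((3:ℝ)/2)) * G w := by
    have e1 : (∫ w in (0:ℝ)..R, |w| ^ ((3:ℝ)/2) * w⁻¹ * ∫ u in (0:ℝ)..w, G u)
        = ∫ w in (0:ℝ)..R, w ^ ((1:ℝ)/2) * ∫ u in (0:ℝ)..w, G u := by
      refine intervalIntegral.integral_congr fun x hx => ?_
      rw [uIcc_of_le hR.le] at hx
      by_cases hx0 : x = 0
      · subst hx0
        simp [Real.zero_rpow (by norm_num : ((3:ℝ)/2) ≠ 0),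
          Real.zero_rpow (by norm_num : ((1:ℝ)/2) ≠ 0)]
      · have hx1 : 0 < x := lt_of_le_of_ne hx.1 (Ne.symm hx0)
        rw [abs_of_pos hx1]
        have : x ^ ((3:ℝ)/2) * x⁻¹ = x ^ ((1:ℝ)/2) := by
          rw [← Real.rpow_neg_one x, ← Real.rpow_add hx1]; norm_num
        rw [this]
    have e2 : (∫ w in (0:ℝ)..R, (R ^ ((3:ℝ)/2) - w ^ ((3:ℝ)/2)) * G w)
        = ∫ w in (0:ℝ)..R, (R ^ ((3:ℝ)/2) - |w| ^ ((3:ℝ)/2)) * G w := by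
      refine intervalIntegral.integral_congr fun x hx => ?_
      rw [uIcc_of_le hR.le] at hx
      rw [abs_of_nonneg hx.1]
    rw [e1, ibp_key G hGc R, e2]
  -- the negative half
  have hGnc : Continuous fun x : ℝ => G (-x) := hGc.comp continuous_neg
  have hneg : (∫ w in (-R:ℝ)..0, |w| ^ ((3:ℝ)/2) * w⁻¹ * ∫ u in (0:ℝ)..w, G u)
      = (2/3) * ∫ w in (-R:ℝ)..0, (R ^ ((3:ℝ)/2) - |w| ^ ((3:ℝ)/2)) * G w := by
    have e1 : (∫ w in (-R:ℝ)..0, |w| ^ ((3:ℝ)/2) * w⁻¹ * ∫ u in (0:ℝ)..w, G u)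
        = ∫ w in (-R:ℝ)..0, (-w) ^ ((1:ℝ)/2) * ∫ x in (0:ℝ)..(-w), G (-x) := by
      refine intervalIntegral.integral_congr fun x hx => ?_
      rw [uIcc_of_le (by linarith : (-R:ℝ) ≤ 0)] at hx
      by_cases hx0 : x = 0
      · subst hx0
        simp [Real.zero_rpow (by norm_num : ((3:ℝ)/2) ≠ 0),
          Real.zero_rpow (by norm_num : ((1:ℝ)/2) ≠ 0)]
      · have hx1 : x < 0 := lt_of_le_of_ne hx.2 hx0
        have hnx : 0 < -x := by linarith
        have ecomp : (∫ u in (0:ℝ)..(-x), G (-u)) = ∫ u in x..(0:ℝ), G u := by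
          rw [intervalIntegral.integral_comp_neg (a := (0:ℝ)) (b := -x) G]
          norm_num
        have esymm : (∫ u in x..(0:ℝ), G u) = -∫ u in (0:ℝ)..x, G u :=
          intervalIntegral.integral_symm 0 x
        rw [ecomp, esymm, abs_of_neg hx1]
        have h32 : (-x) ^ ((3:ℝ)/2) = (-x) ^ ((1:ℝ)/2) * (-x) := by
          rw [show ((3:ℝ)/2) = 1/2 + 1 by norm_num, Real.rpow_add hnx, Real.rpow_one]
        rw [h32]
        field_simp
    have e2 : (∫ w in (-R:ℝ)..0, (-w) ^ ((1:ℝ)/2) * ∫ x in (0:ℝ)..(-w), G (-x))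
        = ∫ u in (0:ℝ)..R, u ^ ((1:ℝ)/2) * ∫ x in (0:ℝ)..u, G (-x) := by
      have := intervalIntegral.integral_comp_neg (a := (-R:ℝ)) (b := 0)
        (fun u => u ^ ((1:ℝ)/2) * ∫ x in (0:ℝ)..u, G (-x))
      simpa using this
    have e3 := ibp_key (fun x => G (-x)) hGnc R
    have e4 : (∫ w in (0:ℝ)..R, (R ^ ((3:ℝ)/2) - w ^ ((3:ℝ)/2)) * G (-w))
        = ∫ w in (-R:ℝ)..0, (R ^ ((3:ℝ)/2) - |w| ^ ((3:ℝ)/2)) * G w := by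
      have e5 : (∫ w in (0:ℝ)..R, (R ^ ((3:ℝ)/2) - w ^ ((3:ℝ)/2)) * G (-w))
          = ∫ w in (0:ℝ)..R, (R ^ ((3:ℝ)/2) - |(-w)| ^ ((3:ℝ)/2)) * G (-w) := by
        refine intervalIntegral.integral_congr fun x hx => ?_
        rw [uIcc_of_le hR.le] at hx
        rw [abs_neg, abs_of_nonneg hx.1]
      rw [e5]
      have := intervalIntegral.integral_comp_neg (a := (0:ℝ)) (b := R)
        (fun w => (R ^ ((3:ℝ)/2) - |w| ^ ((3:ℝ)/2)) * G w)
      simpa using this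
    rw [e1, e2, e3, e4]
  -- rewrite the RHS
  have hRHSc : Continuous fun w : ℝ => (R ^ ((3:ℝ)/2) - |w| ^ ((3:ℝ)/2)) * G w :=
    (continuous_const.sub habs32).mul hGc
  have hRHS : (∫ w in Ioo (-R) R, (R ^ ((3:ℝ) / 2) - |w| ^ ((3:ℝ) / 2)) * (φ' w) ^ 2)
      = (∫ w in (-R:ℝ)..0, (R ^ ((3:ℝ)/2) - |w| ^ ((3:ℝ)/2)) * G w)
        + ∫ w in (0:ℝ)..R, (R ^ ((3:ℝ)/2) - |w| ^ ((3:ℝ)/2)) * G w := by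
    have e0 : (∫ w in Ioo (-R) R, (R ^ ((3:ℝ) / 2) - |w| ^ ((3:ℝ) / 2)) * (φ' w) ^ 2)
        = ∫ w in Ioo (-R) R, (R ^ ((3:ℝ)/2) - |w| ^ ((3:ℝ)/2)) * G w := by
      refine setIntegral_congr_fun measurableSet_Ioo fun x hx => ?_
      simp only [hGdef]
      rw [hg_eq _ ⟨hx.1.le, hx.2.le⟩]
    rw [e0, ← integral_Ioc_eq_integral_Ioo,
      ← Set.Ioc_union_Ioc_eq_Ioc (by linarith : (-R:ℝ) ≤ 0) hR.le,
      setIntegral_union (Set.Ioc_disjoint_Ioc_of_le le_rfl) measurableSet_Ioc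
        (hRHSc.integrableOn_Ioc) (hRHSc.integrableOn_Ioc),
      ← intervalIntegral.integral_of_le (by linarith : (-R:ℝ) ≤ 0),
      ← intervalIntegral.integral_of_le hR.le]
  -- put everything together
  rw [hstep1, hRHS]
  rw [integral_const_mul]
  rw [hsplit, hpos, hneg]
  apply le_of_eq
  field_simp
end

section
/- Let φ : (−1,1) → [0,∞) be square-integrable. Then ∫_{−1}^1 φ(w) dw ≤ 5 · (1/(2√2))^{4/5} · (∫_{−1}^1 φ(w)² dw)^{2/5} · (∫_{−1}^1 w² φ(w) dw)^{1/5}. -/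
open MeasureTheory Set

set_option maxHeartbeats 1000000

/-- For a nonnegative square-integrable function on `(-1,1)`, the `L¹`-norm is
controlled by the `L²`-norm and the second moment (inequality (b5) of the paper). -/
theorem l1_bound_by_l2_and_second_moment
    (φ : ℝ → ℝ)
    (hφnonneg : ∀ w, 0 ≤ φ w)
    (hφ2 : IntegrableOn (fun w => (φ w) ^ 2) (Ioo (-1:ℝ) 1)) :
    ∫ w in Ioo (-1:ℝ) 1, φ w
      ≤ 5 * (1 / (2 * Real.sqrt 2)) ^ ((4:ℝ) / 5)
        * (∫ w in Ioo (-1:ℝ) 1, (φ w) ^ 2) ^ ((2:ℝ) / 5)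
        * (∫ w in Ioo (-1:ℝ) 1, w ^ 2 * φ w) ^ ((1:ℝ) / 5) := by
  set A := ∫ w in Ioo (-1:ℝ) 1, (φ w) ^ 2 with hAdef
  set M := ∫ w in Ioo (-1:ℝ) 1, w ^ 2 * φ w with hMdef
  have hmeas : AEStronglyMeasurable φ (volume.restrict (Ioo (-1:ℝ) 1)) := by
    have h2 := hφ2.aestronglyMeasurable
    have h3 : AEStronglyMeasurable (fun w => Real.sqrt ((φ w) ^ 2))
        (volume.restrict (Ioo (-1:ℝ) 1)) :=
      Real.continuous_sqrt.comp_aestronglyMeasurable h2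
    exact h3.congr (Filter.Eventually.of_forall fun w => Real.sqrt_sq (hφnonneg w))
  have hφ1 : IntegrableOn φ (Ioo (-1:ℝ) 1) := by
    have hcint : IntegrableOn (fun _ : ℝ => (1:ℝ)) (Ioo (-1:ℝ) 1) :=
      integrableOn_const (by simp [Real.volume_Ioo])
    have hsum : IntegrableOn (fun w => (φ w) ^ 2 + 1) (Ioo (-1:ℝ) 1) := hφ2.add hcint
    refine hsum.mono' hmeas (Filter.Eventually.of_forall fun w => ?_)
    rw [Real.norm_of_nonneg (hφnonneg w)]
    nlinarith [sq_nonneg (φ w - 1)]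
  have hM1 : IntegrableOn (fun w => w ^ 2 * φ w) (Ioo (-1:ℝ) 1) := by
    refine Integrable.mono' hφ1 ((continuous_pow 2).aestronglyMeasurable.mul hmeas) ?_
    filter_upwards [ae_restrict_mem measurableSet_Ioo] with w hw
    have hw2 : w ^ 2 ≤ 1 := by nlinarith [hw.1, hw.2]
    have h0 := hφnonneg w
    rw [Real.norm_of_nonneg (by positivity)]
    nlinarith
  have hA : 0 ≤ A := setIntegral_nonneg measurableSet_Ioo fun w _ => sq_nonneg (φ w)
  have hM : 0 ≤ M := setIntegral_nonneg measurableSet_Ioo fun w _ => by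
    have := hφnonneg w; positivity
  -- key bound for arbitrary parameters
  have key : ∀ c δ : ℝ, 0 < c → 0 < δ →
      ∫ w in Ioo (-1:ℝ) 1, φ w ≤ A / (2 * c) + c * δ + M / δ ^ 2 := by
    intro c δ hc hδ
    have hind : Integrable ((Icc (-δ) δ).indicator (fun _ => c / 2))
        (volume.restrict (Ioo (-1:ℝ) 1)) := by
      refine Integrable.indicator ?_ measurableSet_Icc
      exact integrableOn_const (by simp [Real.volume_Ioo])
    have hgint : IntegrableOn (fun w => (φ w) ^ 2 / (2 * c)
        + (Icc (-δ) δ).indicator (fun _ => c / 2) w + w ^ 2 * φ w / δ ^ 2)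
        (Ioo (-1:ℝ) 1) :=
      ((hφ2.div_const _).add hind).add (hM1.div_const _)
    have hle : ∫ w in Ioo (-1:ℝ) 1, φ w ≤ ∫ w in Ioo (-1:ℝ) 1, ((φ w) ^ 2 / (2 * c)
        + (Icc (-δ) δ).indicator (fun _ => c / 2) w + w ^ 2 * φ w / δ ^ 2) := by
      refine setIntegral_mono_on hφ1 hgint measurableSet_Ioo fun w hw => ?_
      by_cases hwmem : w ∈ Icc (-δ) δ
      · have h1 : (φ w) ^ 2 / (2 * c) + c / 2 - φ w = (φ w - c) ^ 2 / (2 * c) := by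
          field_simp; ring
        have h2 : 0 ≤ (φ w - c) ^ 2 / (2 * c) := by positivity
        have h3 : 0 ≤ w ^ 2 * φ w / δ ^ 2 := by have := hφnonneg w; positivity
        rw [Set.indicator_of_mem hwmem]
        linarith
      · have habs : δ < |w| := by
          rw [Set.mem_Icc, not_and_or, not_le, not_le] at hwmem
          rcases hwmem with h | h
          · exact lt_abs.mpr (Or.inr (by linarith))
          · exact lt_abs.mpr (Or.inl h)
        have h4 : δ ^ 2 ≤ w ^ 2 := by
          calc δ ^ 2 ≤ |w| ^ 2 := by nlinarith [abs_nonneg w]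
          _ = w ^ 2 := sq_abs w
        have h5 : φ w ≤ w ^ 2 * φ w / δ ^ 2 := by
          rw [le_div_iff₀ (by positivity)]
          nlinarith [hφnonneg w]
        have h6 : 0 ≤ (φ w) ^ 2 / (2 * c) := by positivity
        rw [Set.indicator_of_notMem hwmem]
        linarith
    have e1 : ∫ w in Ioo (-1:ℝ) 1, ((φ w) ^ 2 / (2 * c)
        + (Icc (-δ) δ).indicator (fun _ => c / 2) w + w ^ 2 * φ w / δ ^ 2)
        = A / (2 * c)
          + (∫ w in Ioo (-1:ℝ) 1, (Icc (-δ) δ).indicator (fun _ => c / 2) w)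
          + M / δ ^ 2 := by
      have hI1 : Integrable (fun w => (φ w) ^ 2 / (2 * c)
          + (Icc (-δ) δ).indicator (fun _ => c / 2) w)
          (volume.restrict (Ioo (-1:ℝ) 1)) := (hφ2.div_const _).add hind
      have hI2 : Integrable (fun w : ℝ => w ^ 2 * φ w / δ ^ 2)
          (volume.restrict (Ioo (-1:ℝ) 1)) := hM1.div_const _
      have hI3 : Integrable (fun w => (φ w) ^ 2 / (2 * c))
          (volume.restrict (Ioo (-1:ℝ) 1)) := hφ2.div_const _
      rw [integral_add hI1 hI2, integral_add hI3 hind, integral_div, integral_div]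
    have e2 : ∫ w in Ioo (-1:ℝ) 1, (Icc (-δ) δ).indicator (fun _ => c / 2) w
        = (volume (Ioo (-1:ℝ) 1 ∩ Icc (-δ) δ)).toReal * (c / 2) := by
      rw [setIntegral_indicator measurableSet_Icc, setIntegral_const, smul_eq_mul, measureReal_def]
    have hvol : (volume (Ioo (-1:ℝ) 1 ∩ Icc (-δ) δ)).toReal ≤ 2 * δ := by
      have h1 : volume (Ioo (-1:ℝ) 1 ∩ Icc (-δ) δ) ≤ volume (Icc (-δ) δ) :=
        measure_mono inter_subset_right
      have h2 : (volume (Icc (-δ) δ)).toReal = 2 * δ := by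
        rw [Real.volume_Icc, ENNReal.toReal_ofReal (by linarith)]; ring
      calc (volume (Ioo (-1:ℝ) 1 ∩ Icc (-δ) δ)).toReal
          ≤ (volume (Icc (-δ) δ)).toReal :=
            ENNReal.toReal_mono (by simp [Real.volume_Icc]) h1
        _ = 2 * δ := h2
    have h7 : (volume (Ioo (-1:ℝ) 1 ∩ Icc (-δ) δ)).toReal * (c / 2) ≤ c * δ := by
      have := mul_le_mul_of_nonneg_right hvol (by positivity : (0:ℝ) ≤ c / 2)
      linarith
    rw [e1, e2] at hle
    linarith
  rcases hM.eq_or_lt with hM0 | hMpos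
  · -- second moment zero: φ vanishes a.e.
    have hae : (fun w => w ^ 2 * φ w) =ᵐ[volume.restrict (Ioo (-1:ℝ) 1)] 0 :=
      (integral_eq_zero_iff_of_nonneg_ae
        (Filter.Eventually.of_forall fun w => by have := hφnonneg w; positivity) hM1).mp
        hM0.symm
    have hne : ∀ᵐ w ∂(volume.restrict (Ioo (-1:ℝ) 1)), w ≠ 0 := by
      refine ae_restrict_of_ae ?_
      rw [ae_iff]
      simpa using measure_singleton (0:ℝ)
    have hφ0 : φ =ᵐ[volume.restrict (Ioo (-1:ℝ) 1)] 0 := by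
      filter_upwards [hae, hne] with w h1 h2
      simp only [Pi.zero_apply] at h1 ⊢
      have hw2 : w ^ 2 ≠ 0 := pow_ne_zero _ h2
      exact (mul_eq_zero.mp h1).resolve_left hw2
    have hL : ∫ w in Ioo (-1:ℝ) 1, φ w = 0 := by
      rw [integral_congr_ae hφ0]; simp
    rw [hL, ← hM0]
    rw [Real.zero_rpow (by norm_num : (1:ℝ)/5 ≠ 0)]
    simp
  · have hApos : 0 < A := by
      rcases hA.eq_or_lt with hA0 | h
      · exfalso
        have hae2 : (fun w => (φ w) ^ 2) =ᵐ[volume.restrict (Ioo (-1:ℝ) 1)] 0 :=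
          (integral_eq_zero_iff_of_nonneg_ae
            (Filter.Eventually.of_forall fun w => sq_nonneg _) hφ2).mp hA0.symm
        have hφ0 : φ =ᵐ[volume.restrict (Ioo (-1:ℝ) 1)] 0 := by
          filter_upwards [hae2] with w h1
          simp only [Pi.zero_apply] at h1 ⊢
          exact pow_eq_zero_iff (n := 2) (by norm_num) |>.mp h1
        have hM0' : M = 0 := by
          rw [hMdef]
          rw [integral_congr_ae (g := fun _ => (0:ℝ)) ?_, integral_zero]
          filter_upwards [hφ0] with w h1
          simp [h1]
        exact absurd hM0' (ne_of_gt hMpos)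
      · exact h
    set x := A ^ ((1:ℝ)/5) with hxdef
    set y := M ^ ((1:ℝ)/5) with hydef
    set z := (2:ℝ) ^ ((1:ℝ)/5) with hzdef
    have hx : 0 < x := Real.rpow_pos_of_pos hApos _
    have hy : 0 < y := Real.rpow_pos_of_pos hMpos _
    have hz : 0 < z := Real.rpow_pos_of_pos two_pos _
    have hax : x ^ (5:ℕ) = A := by
      rw [hxdef, ← Real.rpow_natCast (A ^ ((1:ℝ)/5)) 5, ← Real.rpow_mul hA]
      norm_num
    have hmy : y ^ (5:ℕ) = M := by
      rw [hydef, ← Real.rpow_natCast (M ^ ((1:ℝ)/5)) 5, ← Real.rpow_mul hM]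
      norm_num
    have h2z : (2:ℝ) = z ^ (5:ℕ) := by
      rw [hzdef, ← Real.rpow_natCast ((2:ℝ) ^ ((1:ℝ)/5)) 5,
        ← Real.rpow_mul (by norm_num : (0:ℝ) ≤ 2)]
      norm_num
    have hax2 : A ^ ((2:ℝ)/5) = x ^ (2:ℕ) := by
      rw [hxdef, ← Real.rpow_natCast (A ^ ((1:ℝ)/5)) 2, ← Real.rpow_mul hA]
      norm_num
    have hmy1 : M ^ ((1:ℝ)/5) = y := rfl
    have hK : (1 / (2 * Real.sqrt 2)) ^ ((4:ℝ)/5) = (z ^ (6:ℕ))⁻¹ := by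
      have h1 : (2:ℝ) * Real.sqrt 2 = 2 ^ ((3:ℝ)/2) := by
        rw [show ((3:ℝ)/2) = 1 + 1/2 by norm_num,
          Real.rpow_add (by norm_num : (0:ℝ) < 2), Real.rpow_one,
          Real.sqrt_eq_rpow]
      have h2 : (1:ℝ) / (2 * Real.sqrt 2) = 2 ^ (-((3:ℝ)/2)) := by
        rw [one_div, h1, ← Real.rpow_neg (by norm_num : (0:ℝ) ≤ 2)]
      have h3 : z ^ (6:ℕ) = (2:ℝ) ^ ((6:ℝ)/5) := by
        rw [hzdef, ← Real.rpow_natCast ((2:ℝ) ^ ((1:ℝ)/5)) 6,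
          ← Real.rpow_mul (by norm_num : (0:ℝ) ≤ 2)]
        norm_num
      rw [h2, ← Real.rpow_mul (by norm_num : (0:ℝ) ≤ 2), h3,
        ← Real.rpow_neg (by norm_num : (0:ℝ) ≤ 2)]
      congr 1
      norm_num
    have hstep := key (x ^ 3 / (z ^ 4 * y)) (z ^ 3 * y ^ 2 / x)
      (by positivity) (by positivity)
    refine hstep.trans (le_of_eq ?_)
    rw [hK, hax2, ← hax, ← hmy]
    rw [h2z]
    have hx' := hx.ne'
    have hy' := hy.ne'
    have hz' := hz.ne'
    field_simp
    linear_combination (-2) * h2z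
end

section
/- Let α > 2 and let f : (−1,1) → [0,∞) be measurable with ∫_{−1}^1 f(w) dw and ∫_{−1}^1 w² f(w) dw finite, ∫_{−1}^1 w² f(w) dw > 0, and ∫_{−1}^1 w² H(w)^α f(w)^{α+1} dw finite. Set c_α = (2α/(α−2))^{α/(α+1)} and d_α = (2(α+1)/(c_α(α−2)))^{1/3}. Then ∫_{−1}^1 w² H(w)^α f(w)^{α+1} dw ≥ (∫_{−1}^1 H(w) f(w) dw)^{3α/2} / [ (c_α d_α + d_α^{−2})^{3α/2} · (∫_{−1}^1 w² f(w) dw)^{(α−2)/2} ]. -/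
open MeasureTheory Set

lemma integrableOn_abs_rpow_Icc01 {r : ℝ} (hr : -1 < r) :
    IntegrableOn (fun x => |x| ^ r) (Icc (0:ℝ) 1) := by
  have h0 : IntegrableOn (fun x : ℝ => x ^ r) (Ioc (0:ℝ) 1) := by
    have := intervalIntegral.intervalIntegrable_rpow' (a := (0:ℝ)) (b := 1) hr
    rwa [intervalIntegrable_iff_integrableOn_Ioc_of_le (by norm_num)] at this
  have h1 : IntegrableOn (fun x => |x| ^ r) (Ioc (0:ℝ) 1) :=
    h0.congr_fun (fun x hx => by rw [abs_of_pos hx.1]) measurableSet_Ioc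
  rwa [IntegrableOn, ← Measure.restrict_congr_set Ioc_ae_eq_Icc] at *

lemma integrableOn_abs_rpow {r : ℝ} (hr : -1 < r) :
    IntegrableOn (fun x => |x| ^ r) (Icc (-1:ℝ) 1) := by
  have h1 := integrableOn_abs_rpow_Icc01 hr
  have h2 : IntegrableOn (fun x => |x| ^ r) (Icc (-1:ℝ) 0) := by
    have hpre : (fun x : ℝ => -x) ⁻¹' (Icc (-1:ℝ) 0) = Icc (0:ℝ) 1 := by
      ext x
      simp only [mem_preimage, mem_Icc, neg_le, le_neg, neg_zero, neg_neg]
      constructor <;> intro h <;> constructor <;> linarith [h.1, h.2]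
    have hmap : (volume : Measure ℝ).restrict (Icc (-1:ℝ) 0)
        = Measure.map (fun x : ℝ => -x) (volume.restrict (Icc (0:ℝ) 1)) := by
      rw [show volume.restrict (Icc (0:ℝ) 1)
          = volume.restrict ((fun x : ℝ => -x) ⁻¹' (Icc (-1:ℝ) 0)) by rw [hpre],
        ← Measure.restrict_map measurable_neg measurableSet_Icc, Measure.map_neg_eq_self]
    rw [IntegrableOn, hmap,
      show (fun x : ℝ => -x) = ⇑(Homeomorph.neg ℝ) from rfl,
      (Homeomorph.neg ℝ).measurableEmbedding.integrable_map_iff]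
    exact h1.congr_fun (fun x hx => by simp) measurableSet_Icc
  have : Icc (-1:ℝ) 1 = Icc (-1:ℝ) 0 ∪ Icc (0:ℝ) 1 := by
    rw [Icc_union_Icc_eq_Icc] <;> norm_num
  rw [this]; exact h2.union h1

lemma integral_abs_rpow_s9 {r t : ℝ} (hr0 : -1 < r) (ht : 0 < t) :
    ∫ x in Icc (-t) t, |x| ^ r = 2 * (t ^ (r + 1) / (r + 1)) := by
  have hr1 : (0:ℝ) < r + 1 := by linarith
  have key := integral_comp_abs (f := (Ioc 0 t).indicator (fun y : ℝ => y ^ r))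
  have hfun : (fun x : ℝ => (Ioc 0 t).indicator (fun y : ℝ => y ^ r) |x|)
      = (Icc (-t) t \ {0}).indicator (fun x : ℝ => |x| ^ r) := by
    funext x
    by_cases hx : |x| ∈ Ioc (0:ℝ) t
    · rw [indicator_of_mem hx, indicator_of_mem]
      refine ⟨⟨?_, ?_⟩, ?_⟩
      · linarith [neg_abs_le x, hx.2]
      · linarith [le_abs_self x, hx.2]
      · simp only [mem_singleton_iff]; intro h; rw [h] at hx; simp at hx
    · rw [indicator_of_notMem hx, indicator_of_notMem]
      intro h
      exact hx ⟨abs_pos.mpr (by simpa using h.2), abs_le.mpr ⟨h.1.1, h.1.2⟩⟩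
  rw [hfun] at key
  rw [integral_indicator ((measurableSet_Icc.diff (measurableSet_singleton 0)))] at key
  have hae : (Icc (-t) t \ {0} : Set ℝ) =ᵐ[volume] (Icc (-t) t : Set ℝ) := by
    refine (diff_ae_eq_self).mpr ?_
    exact measure_mono_null (inter_subset_right) (measure_singleton 0)
  rw [Measure.restrict_congr_set hae] at key
  rw [key, setIntegral_indicator measurableSet_Ioc,
    inter_eq_self_of_subset_right Ioc_subset_Ioi_self,
    ← intervalIntegral.integral_of_le ht.le,
    integral_rpow (Or.inl hr0)]
  rw [Real.zero_rpow (ne_of_gt hr1), sub_zero]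

set_option maxHeartbeats 1000000 in

lemma key_bound
    (α : ℝ) (f : ℝ → ℝ) (c : ℝ)
    (hα : 2 < α)
    (hc : c = (2 * α / (α - 2)) ^ (α / (α + 1)))
    (hfnonneg : ∀ w, 0 ≤ f w)
    (hfmeas : Measurable f)
    (hf1 : IntegrableOn f (Ioo (-1:ℝ) 1))
    (hf2 : IntegrableOn (fun w => w ^ 2 * f w) (Ioo (-1:ℝ) 1))
    (hfα : IntegrableOn (fun w => w ^ 2 * (1 - w ^ 2) ^ α * f w ^ (α + 1)) (Ioo (-1:ℝ) 1))
    (s : ℝ) (hs : 0 < s) :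
    (∫ w in Ioo (-1:ℝ) 1, (1 - w ^ 2) * f w)
      ≤ c * (∫ w in Ioo (-1:ℝ) 1, w ^ 2 * (1 - w ^ 2) ^ α * f w ^ (α + 1)) ^ (1 / (α + 1))
          * s ^ ((α - 2) / (α + 1))
        + (∫ w in Ioo (-1:ℝ) 1, w ^ 2 * f w) / s ^ 2 := by
  have hα0 : 0 < α := by linarith
  have hα1 : 0 < α + 1 := by linarith
  have hα2 : 0 < α - 2 := by linarith
  set A : Set ℝ := {w : ℝ | |w| ≤ s} with hA_def
  have hA : MeasurableSet A := (isClosed_le continuous_abs continuous_const).measurableSet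
  set S : Set ℝ := Ioo (-1:ℝ) 1 with hS_def
  have hS : MeasurableSet S := measurableSet_Ioo
  -- integrability of (1-w²) f on S
  have hHf : IntegrableOn (fun w => (1 - w ^ 2) * f w) S := by
    refine Integrable.mono hf1 ?_ ?_
    · exact (((continuous_const.sub (continuous_pow 2)).measurable).mul hfmeas).aestronglyMeasurable
    · refine (ae_restrict_iff' hS).mpr (.of_forall fun w hw => ?_)
      have h1 : 0 ≤ 1 - w ^ 2 := by nlinarith [hw.1, hw.2]
      have h2 : 1 - w ^ 2 ≤ 1 := by nlinarith [sq_nonneg w]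
      rw [Real.norm_eq_abs, Real.norm_eq_abs, abs_of_nonneg (mul_nonneg h1 (hfnonneg w)),
        abs_of_nonneg (hfnonneg w)]
      nlinarith [hfnonneg w]
  have hsplit :
      (∫ w in S, (1 - w ^ 2) * f w)
        = (∫ w in A ∩ S, (1 - w ^ 2) * f w) + (∫ w in Aᶜ ∩ S, (1 - w ^ 2) * f w) := by
    rw [← Measure.restrict_restrict hA, ← Measure.restrict_restrict hA.compl]
    exact (integral_add_compl hA hHf).symm
  rw [hsplit]
  have part2 : (∫ w in Aᶜ ∩ S, (1 - w ^ 2) * f w) ≤ (∫ w in S, w ^ 2 * f w) / s ^ 2 := by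
    have hsub : Aᶜ ∩ S ⊆ S := inter_subset_right
    have hstep1 : (∫ w in Aᶜ ∩ S, (1 - w ^ 2) * f w)
        ≤ ∫ w in Aᶜ ∩ S, (w ^ 2 * f w) / s ^ 2 := by
      refine setIntegral_mono_on (hHf.mono_set hsub) ((hf2.mono_set hsub).div_const _)
        (hA.compl.inter hS) (fun w hw => ?_)
      have hws : s < |w| := by
        have := hw.1; simp only [hA_def, mem_compl_iff, mem_setOf_eq, not_le] at this; exact this
      have hs2 : s ^ 2 < w ^ 2 := by
        have := sq_abs w
        nlinarith [abs_nonneg w]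
      have h1 : 1 - w ^ 2 ≤ w ^ 2 / s ^ 2 := by
        have h2 : (1:ℝ) ≤ w ^ 2 / s ^ 2 := (one_le_div (by positivity)).mpr hs2.le
        nlinarith [sq_nonneg w]
      calc (1 - w ^ 2) * f w ≤ (w ^ 2 / s ^ 2) * f w :=
            mul_le_mul_of_nonneg_right h1 (hfnonneg w)
        _ = (w ^ 2 * f w) / s ^ 2 := by ring
    have hstep2 : (∫ w in Aᶜ ∩ S, (w ^ 2 * f w) / s ^ 2)
        ≤ ∫ w in S, (w ^ 2 * f w) / s ^ 2 := by
      refine setIntegral_mono_set (hf2.div_const _) ?_ (HasSubset.Subset.eventuallyLE hsub)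
      refine (ae_restrict_iff' hS).mpr (.of_forall fun w hw => ?_)
      exact div_nonneg (mul_nonneg (sq_nonneg w) (hfnonneg w)) (sq_nonneg s)
    calc _ ≤ _ := hstep1
      _ ≤ _ := hstep2
      _ = (∫ w in S, w ^ 2 * f w) / s ^ 2 := integral_div _ _
  have part1 : (∫ w in A ∩ S, (1 - w ^ 2) * f w)
      ≤ c * (∫ w in S, w ^ 2 * (1 - w ^ 2) ^ α * f w ^ (α + 1)) ^ (1 / (α + 1))
          * s ^ ((α - 2) / (α + 1)) := by
    have hB : MeasurableSet (A ∩ S) := hA.inter hS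
    have hBsubS : A ∩ S ⊆ S := inter_subset_right
    have hBsubI : A ∩ S ⊆ Icc (-1:ℝ) 1 := fun x hx => ⟨hx.2.1.le, hx.2.2.le⟩
    set g : ℝ → ℝ := fun x => (x ^ 2 * (1 - x ^ 2) ^ α * f x ^ (α + 1)) ^ (1 / (α + 1)) with hg_def
    set h : ℝ → ℝ := fun x => (|x| ^ (-(2 / α)) * (1 - x ^ 2) ^ (1 / α)) ^ (α / (α + 1)) with hh_def
    have hbase_meas : Measurable (fun x : ℝ => x ^ 2 * (1 - x ^ 2) ^ α * f x ^ (α + 1)) := by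
      fun_prop
    have hinner_meas : Measurable (fun x : ℝ => |x| ^ (-(2 / α)) * (1 - x ^ 2) ^ (1 / α)) := by
      fun_prop
    have hg_meas : Measurable g := by rw [hg_def]; fun_prop
    have hh_meas : Measurable h := by rw [hh_def]; fun_prop
    have hpq : (α + 1).HolderConjugate ((α + 1) / α) := by
      rw [Real.holderConjugate_iff_eq_conjExponent (by linarith)]
      ring
    -- nonnegativity on the set
    have hbase_nonneg : ∀ x ∈ S, 0 ≤ x ^ 2 * (1 - x ^ 2) ^ α * f x ^ (α + 1) := by
      intro x hx
      have hu : (0:ℝ) ≤ 1 - x ^ 2 := by nlinarith [hx.1, hx.2]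
      have := hfnonneg x
      positivity
    have hinner_nonneg : ∀ x : ℝ, 0 ≤ |x| ^ (-(2 / α)) * (1 - x ^ 2) ^ (1 / α) → True := fun _ _ => trivial
    -- a.e. identity (1-x²) f = g * h on A ∩ S
    have hne : ∀ᵐ x : ℝ ∂volume, x ≠ 0 := by
      rw [ae_iff]
      have h0 : {x : ℝ | ¬x ≠ 0} = {0} := by ext x; simp
      rw [h0]
      exact measure_singleton 0
    have heq : ∀ᵐ x ∂(volume.restrict (A ∩ S)), (1 - x ^ 2) * f x = g x * h x := by
      filter_upwards [ae_restrict_mem hB, ae_restrict_of_ae hne] with x hx hx0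
      have hu : (0:ℝ) < 1 - x ^ 2 := by nlinarith [hx.2.1, hx.2.2]
      have hxa : (0:ℝ) < |x| := abs_pos.mpr hx0
      have hfx := hfnonneg x
      have hgx : g x = |x| ^ (2 / (α + 1)) * (1 - x ^ 2) ^ (α / (α + 1)) * f x := by
        simp only [hg_def]
        have hx2 : x ^ 2 = |x| ^ (2:ℕ) := (sq_abs x).symm
        rw [Real.mul_rpow (by positivity) (by positivity),
          Real.mul_rpow (by positivity) (by positivity),
          ← Real.rpow_mul hu.le, ← Real.rpow_mul hfx, hx2,
          ← Real.rpow_natCast |x| 2, ← Real.rpow_mul hxa.le]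
        rw [mul_one_div, mul_one_div, mul_one_div, div_self (by linarith : α + 1 ≠ 0),
          Real.rpow_one]
        norm_num
      have hhx : h x = |x| ^ (-(2 / (α + 1))) * (1 - x ^ 2) ^ (1 / (α + 1)) := by
        simp only [hh_def]
        rw [Real.mul_rpow (by positivity) (by positivity),
          ← Real.rpow_mul (abs_nonneg x), ← Real.rpow_mul hu.le]
        have hαne : α ≠ 0 := ne_of_gt hα0
        have hα1ne : α + 1 ≠ 0 := by linarith
        rw [show -(2 / α) * (α / (α + 1)) = -(2 / (α + 1)) by field_simp,
          show 1 / α * (α / (α + 1)) = 1 / (α + 1) by field_simp]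
      rw [hgx, hhx]
      have e1 : |x| ^ (2 / (α + 1)) * |x| ^ (-(2 / (α + 1))) = 1 := by
        rw [← Real.rpow_add hxa]
        norm_num
      have e2 : (1 - x ^ 2) ^ (α / (α + 1)) * (1 - x ^ 2) ^ (1 / (α + 1)) = 1 - x ^ 2 := by
        rw [← Real.rpow_add hu]
        rw [← add_div, div_self (by linarith : α + 1 ≠ 0), Real.rpow_one]
      calc (1 - x ^ 2) * f x
          = (|x| ^ (2 / (α + 1)) * |x| ^ (-(2 / (α + 1))))
            * ((1 - x ^ 2) ^ (α / (α + 1)) * (1 - x ^ 2) ^ (1 / (α + 1))) * f x := by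
            rw [e1, e2]; ring
        _ = _ := by ring
    -- g^(α+1) = base a.e. on A ∩ S
    have hgp_ae : ∀ᵐ x ∂(volume.restrict (A ∩ S)),
        g x ^ (α + 1) = x ^ 2 * (1 - x ^ 2) ^ α * f x ^ (α + 1) := by
      filter_upwards [ae_restrict_mem hB] with x hx
      simp only [hg_def]
      rw [← Real.rpow_mul (hbase_nonneg x hx.2), one_div,
        inv_mul_cancel₀ (by linarith : α + 1 ≠ 0), Real.rpow_one]
    have hg_nonneg_ae : 0 ≤ᵐ[volume.restrict (A ∩ S)] g := by
      filter_upwards [ae_restrict_mem hB] with x hx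
      exact Real.rpow_nonneg (hbase_nonneg x hx.2) _
    have hhq_ae : ∀ᵐ x ∂(volume.restrict (A ∩ S)),
        h x ^ ((α + 1) / α) = |x| ^ (-(2 / α)) * (1 - x ^ 2) ^ (1 / α) := by
      filter_upwards [ae_restrict_mem hB] with x hx
      have hu : (0:ℝ) ≤ 1 - x ^ 2 := by nlinarith [hx.2.1, hx.2.2]
      have hin : (0:ℝ) ≤ |x| ^ (-(2 / α)) * (1 - x ^ 2) ^ (1 / α) := by positivity
      simp only [hh_def]
      rw [← Real.rpow_mul hin, div_mul_div_comm, mul_comm α (α + 1),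
        div_self (by positivity : (α + 1) * α ≠ 0), Real.rpow_one]
    have hh_nonneg_ae : 0 ≤ᵐ[volume.restrict (A ∩ S)] h := by
      filter_upwards [ae_restrict_mem hB] with x hx
      have hu : (0:ℝ) ≤ 1 - x ^ 2 := by nlinarith [hx.2.1, hx.2.2]
      exact Real.rpow_nonneg (by positivity) _
    -- Memℒp facts
    have hp_ne : ENNReal.ofReal (α + 1) ≠ 0 := by
      simp only [ne_eq, ENNReal.ofReal_eq_zero, not_le]; linarith
    have hq_ne : ENNReal.ofReal ((α + 1) / α) ≠ 0 := by
      simp only [ne_eq, ENNReal.ofReal_eq_zero, not_le]; positivity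
    have hg_mem : MemLp g (ENNReal.ofReal (α + 1)) (volume.restrict (A ∩ S)) := by
      have hint : Integrable (fun x => ‖g x‖ ^ (α + 1)) (volume.restrict (A ∩ S)) := by
        refine (hfα.mono_set hBsubS).congr ?_
        filter_upwards [hgp_ae, hg_nonneg_ae] with x h1 h2
        rw [Real.norm_of_nonneg h2]
        exact h1.symm
      have hiff := memLp_norm_rpow_iff (μ := volume.restrict (A ∩ S))
        (q := ENNReal.ofReal (α + 1))
        (p := ENNReal.ofReal (α + 1)) hg_meas.aestronglyMeasurable hp_ne ENNReal.ofReal_ne_top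
      rw [ENNReal.toReal_ofReal (by linarith), ENNReal.div_self hp_ne ENNReal.ofReal_ne_top]
        at hiff
      exact hiff.mp (memLp_one_iff_integrable.mpr hint)
    have hrneg : (-1:ℝ) < -(2 / α) := by
      have : 2 / α < 1 := (div_lt_one hα0).mpr (by linarith)
      linarith
    have habs : IntegrableOn (fun x : ℝ => |x| ^ (-(2 / α))) (Icc (-1:ℝ) 1) :=
      integrableOn_abs_rpow hrneg
    have hinner_le : ∀ x ∈ A ∩ S,
        |x| ^ (-(2 / α)) * (1 - x ^ 2) ^ (1 / α) ≤ |x| ^ (-(2 / α)) := by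
      intro x hx
      have hu : (0:ℝ) ≤ 1 - x ^ 2 := by nlinarith [hx.2.1, hx.2.2]
      have h1 : (1 - x ^ 2) ^ (1 / α) ≤ 1 :=
        Real.rpow_le_one hu (by nlinarith [sq_nonneg x]) (by positivity)
      calc |x| ^ (-(2 / α)) * (1 - x ^ 2) ^ (1 / α) ≤ |x| ^ (-(2 / α)) * 1 :=
            mul_le_mul_of_nonneg_left h1 (Real.rpow_nonneg (abs_nonneg x) _)
        _ = |x| ^ (-(2 / α)) := mul_one _
    have hinner_int : Integrable (fun x : ℝ => |x| ^ (-(2 / α)) * (1 - x ^ 2) ^ (1 / α))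
        (volume.restrict (A ∩ S)) := by
      refine Integrable.mono (habs.mono_set hBsubI) hinner_meas.aestronglyMeasurable ?_
      filter_upwards [ae_restrict_mem hB] with x hx
      have hu : (0:ℝ) ≤ 1 - x ^ 2 := by nlinarith [hx.2.1, hx.2.2]
      rw [Real.norm_of_nonneg (by positivity), Real.norm_of_nonneg (by positivity)]
      exact hinner_le x hx
    have hh_mem : MemLp h (ENNReal.ofReal ((α + 1) / α)) (volume.restrict (A ∩ S)) := by
      have hint : Integrable (fun x => ‖h x‖ ^ ((α + 1) / α)) (volume.restrict (A ∩ S)) := by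
        refine hinner_int.congr ?_
        filter_upwards [hhq_ae, hh_nonneg_ae] with x h1 h2
        rw [Real.norm_of_nonneg h2]
        exact h1.symm
      have hiff := memLp_norm_rpow_iff (μ := volume.restrict (A ∩ S))
        (q := ENNReal.ofReal ((α + 1) / α))
        (p := ENNReal.ofReal ((α + 1) / α)) hh_meas.aestronglyMeasurable hq_ne
        ENNReal.ofReal_ne_top
      rw [ENNReal.toReal_ofReal (by positivity), ENNReal.div_self hq_ne ENNReal.ofReal_ne_top]
        at hiff
      exact hiff.mp (memLp_one_iff_integrable.mpr hint)
    have holder := integral_mul_le_Lp_mul_Lq_of_nonneg hpq hg_nonneg_ae hh_nonneg_ae hg_mem hh_mem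
    -- bound the two factors
    have hF1 : (∫ x in A ∩ S, g x ^ (α + 1))
        ≤ ∫ w in S, w ^ 2 * (1 - w ^ 2) ^ α * f w ^ (α + 1) := by
      rw [integral_congr_ae hgp_ae]
      refine setIntegral_mono_set hfα ?_ (HasSubset.Subset.eventuallyLE hBsubS)
      exact (ae_restrict_iff' hS).mpr (.of_forall hbase_nonneg)
    have hF1nonneg : 0 ≤ ∫ x in A ∩ S, g x ^ (α + 1) := by
      rw [integral_congr_ae hgp_ae]
      exact setIntegral_nonneg hB (fun x hx => hbase_nonneg x hx.2)
    set t := min s 1 with ht_def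
    have ht0 : 0 < t := lt_min hs one_pos
    have hBsubT : A ∩ S ⊆ Icc (-t) t := by
      intro x hx
      have h1 : |x| ≤ s := hx.1
      have h2 : |x| ≤ 1 := abs_le.mpr ⟨hx.2.1.le, hx.2.2.le⟩
      exact abs_le.mp (le_min h1 h2)
    have hTsub : Icc (-t) t ⊆ Icc (-1:ℝ) 1 := by
      have ht1 : t ≤ 1 := min_le_right s 1
      exact Icc_subset_Icc (by linarith) ht1
    have he : -(2 / α) + 1 = (α - 2) / α := by field_simp; ring
    have hepos : (0:ℝ) < (α - 2) / α := by positivity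
    have hF2 : (∫ x in A ∩ S, h x ^ ((α + 1) / α))
        ≤ (2 * α / (α - 2)) * s ^ ((α - 2) / α) := by
      rw [integral_congr_ae hhq_ae]
      have step1 : (∫ x in A ∩ S, |x| ^ (-(2 / α)) * (1 - x ^ 2) ^ (1 / α))
          ≤ ∫ x in A ∩ S, |x| ^ (-(2 / α)) := by
        exact setIntegral_mono_on hinner_int (habs.mono_set hBsubI) hB hinner_le
      have step2 : (∫ x in A ∩ S, |x| ^ (-(2 / α))) ≤ ∫ x in Icc (-t) t, |x| ^ (-(2 / α)) := by
        refine setIntegral_mono_set (habs.mono_set hTsub) ?_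
          (HasSubset.Subset.eventuallyLE hBsubT)
        exact .of_forall fun x => Real.rpow_nonneg (abs_nonneg x) _
      have step3 : (∫ x in Icc (-t) t, |x| ^ (-(2 / α)))
          = 2 * (t ^ ((α - 2) / α) / ((α - 2) / α)) := by
        rw [integral_abs_rpow_s9 hrneg ht0, he]
      have step4 : 2 * (t ^ ((α - 2) / α) / ((α - 2) / α))
          ≤ (2 * α / (α - 2)) * s ^ ((α - 2) / α) := by
        have htle : t ^ ((α - 2) / α) ≤ s ^ ((α - 2) / α) :=
          Real.rpow_le_rpow ht0.le (min_le_left s 1) hepos.le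
        have hKeq : (2:ℝ) / ((α - 2) / α) = 2 * α / (α - 2) := by field_simp
        calc 2 * (t ^ ((α - 2) / α) / ((α - 2) / α))
            = (2 / ((α - 2) / α)) * t ^ ((α - 2) / α) := by ring
          _ ≤ (2 / ((α - 2) / α)) * s ^ ((α - 2) / α) := by
              apply mul_le_mul_of_nonneg_left htle
              positivity
          _ = (2 * α / (α - 2)) * s ^ ((α - 2) / α) := by rw [hKeq]
      calc _ ≤ _ := step1
        _ ≤ _ := step2
        _ = _ := step3
        _ ≤ _ := step4
    have hF2nonneg : 0 ≤ ∫ x in A ∩ S, h x ^ ((α + 1) / α) := by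
      rw [integral_congr_ae hhq_ae]
      refine setIntegral_nonneg hB (fun x hx => ?_)
      have hu : (0:ℝ) ≤ 1 - x ^ 2 := by nlinarith [hx.2.1, hx.2.2]
      positivity
    -- assemble
    have hmain : (∫ x in A ∩ S, (1 - x ^ 2) * f x)
        ≤ (∫ w in S, w ^ 2 * (1 - w ^ 2) ^ α * f w ^ (α + 1)) ^ (1 / (α + 1))
          * ((2 * α / (α - 2)) * s ^ ((α - 2) / α)) ^ (1 / ((α + 1) / α)) := by
      calc (∫ x in A ∩ S, (1 - x ^ 2) * f x) = ∫ x in A ∩ S, g x * h x :=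
            integral_congr_ae heq
        _ ≤ (∫ x in A ∩ S, g x ^ (α + 1)) ^ (1 / (α + 1))
            * (∫ x in A ∩ S, h x ^ ((α + 1) / α)) ^ (1 / ((α + 1) / α)) := holder
        _ ≤ _ := by
            apply mul_le_mul
            · exact Real.rpow_le_rpow hF1nonneg hF1 (by positivity)
            · exact Real.rpow_le_rpow hF2nonneg hF2 (by positivity)
            · exact Real.rpow_nonneg hF2nonneg _
            · exact Real.rpow_nonneg (setIntegral_nonneg hS hbase_nonneg) _
    have hsimpl : ((2 * α / (α - 2)) * s ^ ((α - 2) / α)) ^ (1 / ((α + 1) / α))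
        = c * s ^ ((α - 2) / (α + 1)) := by
      rw [one_div_div,
        Real.mul_rpow (by positivity) (Real.rpow_nonneg hs.le _),
        ← Real.rpow_mul hs.le,
        show (α - 2) / α * (α / (α + 1)) = (α - 2) / (α + 1) by field_simp, hc]
    rw [hsimpl] at hmain
    calc _ ≤ _ := hmain
      _ = _ := by ring
  have := add_le_add part1 part2
  calc _ ≤ _ := this
    _ = _ := by ring

set_option maxHeartbeats 1000000 in
/-- Lemma 3.1 (`prop:1`) of the paper: lower bound for the weighted
`(α+1)`-moment `∫ w² H(w)^α f(w)^(α+1) dw` in terms of `∫ H f dw` and the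
second moment, where `H(w) = 1 - w²`. -/
theorem weighted_moment_lower_bound
    (α : ℝ) (f : ℝ → ℝ) (c d : ℝ)
    (hα : 2 < α)
    (hc : c = (2 * α / (α - 2)) ^ (α / (α + 1)))
    (hd : d = (2 * (α + 1) / (c * (α - 2))) ^ ((1:ℝ) / 3))
    (hfnonneg : ∀ w, 0 ≤ f w)
    (hfmeas : Measurable f)
    (hf1 : IntegrableOn f (Ioo (-1:ℝ) 1))
    (hf2 : IntegrableOn (fun w => w ^ 2 * f w) (Ioo (-1:ℝ) 1))
    (hEpos : 0 < ∫ w in Ioo (-1:ℝ) 1, w ^ 2 * f w)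
    (hfα : IntegrableOn (fun w => w ^ 2 * (1 - w ^ 2) ^ α * f w ^ (α + 1)) (Ioo (-1:ℝ) 1)) :
    (∫ w in Ioo (-1:ℝ) 1, (1 - w ^ 2) * f w) ^ (3 * α / 2)
        / ((c * d + d⁻¹ ^ 2) ^ (3 * α / 2)
            * (∫ w in Ioo (-1:ℝ) 1, w ^ 2 * f w) ^ ((α - 2) / 2))
      ≤ ∫ w in Ioo (-1:ℝ) 1, w ^ 2 * (1 - w ^ 2) ^ α * f w ^ (α + 1) := by
  have hα0 : 0 < α := by linarith
  have hα1 : 0 < α + 1 := by linarith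
  have hα2 : 0 < α - 2 := by linarith
  set M := ∫ w in Ioo (-1:ℝ) 1, (1 - w ^ 2) * f w with hM_def
  set E := ∫ w in Ioo (-1:ℝ) 1, w ^ 2 * f w with hE_def
  set I := ∫ w in Ioo (-1:ℝ) 1, w ^ 2 * (1 - w ^ 2) ^ α * f w ^ (α + 1) with hI_def
  have key : ∀ s : ℝ, 0 < s →
      M ≤ c * I ^ (1 / (α + 1)) * s ^ ((α - 2) / (α + 1)) + E / s ^ 2 :=
    fun s hs => key_bound α f c hα hc hfnonneg hfmeas hf1 hf2 hfα s hs
  have hbase_nonneg : ∀ x ∈ Ioo (-1:ℝ) 1, 0 ≤ x ^ 2 * (1 - x ^ 2) ^ α * f x ^ (α + 1) := by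
    intro x hx
    have hu : (0:ℝ) ≤ 1 - x ^ 2 := by nlinarith [hx.1, hx.2]
    have := hfnonneg x
    positivity
  have hI0 : 0 ≤ I := setIntegral_nonneg measurableSet_Ioo hbase_nonneg
  have hM0 : 0 ≤ M := by
    refine setIntegral_nonneg measurableSet_Ioo fun x hx => ?_
    have hu : (0:ℝ) ≤ 1 - x ^ 2 := by nlinarith [hx.1, hx.2]
    exact mul_nonneg hu (hfnonneg x)
  have hc0 : 0 < c := by
    rw [hc]; positivity
  have hd0 : 0 < d := by
    rw [hd]; positivity
  -- d ≥ 1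
  have hd1 : 1 ≤ d := by
    have hγ : (0:ℝ) < α / (α + 1) := by positivity
    have hγ1 : α / (α + 1) < 1 := (div_lt_one hα1).mpr (by linarith)
    have hcd2 : c * (α - 2) = (2 * α) ^ (α / (α + 1)) * (α - 2) ^ (1 - α / (α + 1)) := by
      rw [hc, Real.div_rpow (by linarith) hα2.le, Real.rpow_sub hα2, Real.rpow_one]
      field_simp
    have h1 : (2 * α) ^ (α / (α + 1)) ≤ (2 * (α + 1)) ^ (α / (α + 1)) :=
      Real.rpow_le_rpow (by linarith) (by linarith) hγ.le
    have h2 : (α - 2) ^ (1 - α / (α + 1)) ≤ (2 * (α + 1)) ^ (1 - α / (α + 1)) :=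
      Real.rpow_le_rpow hα2.le (by linarith) (by linarith)
    have hprod : c * (α - 2) ≤ 2 * (α + 1) := by
      calc c * (α - 2) = (2 * α) ^ (α / (α + 1)) * (α - 2) ^ (1 - α / (α + 1)) := hcd2
        _ ≤ (2 * (α + 1)) ^ (α / (α + 1)) * (2 * (α + 1)) ^ (1 - α / (α + 1)) := by
            apply mul_le_mul h1 h2 (Real.rpow_nonneg hα2.le _) (Real.rpow_nonneg (by linarith) _)
        _ = (2 * (α + 1)) ^ (α / (α + 1) + (1 - α / (α + 1))) :=
            (Real.rpow_add (by linarith) _ _).symm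
        _ = 2 * (α + 1) := by norm_num
    have hX : 1 ≤ 2 * (α + 1) / (c * (α - 2)) :=
      (one_le_div (by positivity)).mpr hprod
    calc (1:ℝ) = 1 ^ ((1:ℝ)/3) := (Real.one_rpow _).symm
      _ ≤ (2 * (α + 1) / (c * (α - 2))) ^ ((1:ℝ)/3) :=
          Real.rpow_le_rpow (by norm_num) hX (by norm_num)
      _ = d := hd.symm
  have hcd0 : 0 < c * d + d⁻¹ ^ 2 := by positivity
  have hD : 0 < (c * d + d⁻¹ ^ 2) ^ (3 * α / 2) * E ^ ((α - 2) / 2) := by positivity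
  rw [div_le_iff₀ hD]
  rcases eq_or_lt_of_le hI0 with hIz | hIpos
  · -- I = 0 : show M = 0
    have hM1 : ∀ s : ℝ, 0 < s → M ≤ E / s ^ 2 := by
      intro s hs
      have := key s hs
      rw [← hIz, Real.zero_rpow (by positivity : 1 / (α + 1) ≠ 0)] at this
      simpa using this
    have hMz : M = 0 := by
      by_contra hne
      have hMpos : 0 < M := lt_of_le_of_ne hM0 (Ne.symm hne)
      have hspos : 0 < Real.sqrt (2 * E / M) := Real.sqrt_pos.mpr (by positivity)
      have hsq : Real.sqrt (2 * E / M) ^ 2 = 2 * E / M := Real.sq_sqrt (by positivity)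
      have := hM1 _ hspos
      rw [hsq] at this
      have hEds : E / (2 * E / M) = M / 2 := by
        field_simp
      rw [hEds] at this
      linarith
    rw [hMz, Real.zero_rpow (by positivity : 3 * α / 2 ≠ 0), ← hIz]
    simp
  · -- I > 0
    set a : ℝ := (α + 1) / (3 * α) with ha_def
    set b : ℝ := -(1 / (3 * α)) with hb_def
    set s : ℝ := d * E ^ a * I ^ b with hs_def
    have hs : 0 < s := by
      have h1 : (0:ℝ) < E ^ a := Real.rpow_pos_of_pos hEpos _
      have h2 : (0:ℝ) < I ^ b := Real.rpow_pos_of_pos hIpos _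
      positivity
    have hkey := key s hs
    set u : ℝ := E ^ ((α - 2) / (3 * α)) * I ^ (2 / (3 * α)) with hu_def
    have hu0 : 0 < u := by
      have h1 : (0:ℝ) < E ^ ((α - 2) / (3 * α)) := Real.rpow_pos_of_pos hEpos _
      have h2 : (0:ℝ) < I ^ (2 / (3 * α)) := Real.rpow_pos_of_pos hIpos _
      positivity
    -- T1 bound
    have hT1 : c * I ^ (1 / (α + 1)) * s ^ ((α - 2) / (α + 1)) ≤ c * d * u := by
      have hse : s ^ ((α - 2) / (α + 1))
          = d ^ ((α - 2) / (α + 1)) * E ^ (a * ((α - 2) / (α + 1)))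
            * I ^ (b * ((α - 2) / (α + 1))) := by
        rw [hs_def, Real.mul_rpow (by positivity) (Real.rpow_nonneg hIpos.le _),
          Real.mul_rpow hd0.le (Real.rpow_nonneg hEpos.le _),
          ← Real.rpow_mul hEpos.le, ← Real.rpow_mul hIpos.le]
      have hIcomb : I ^ (1 / (α + 1)) * I ^ (b * ((α - 2) / (α + 1))) = I ^ (2 / (3 * α)) := by
        rw [← Real.rpow_add hIpos]
        congr 1
        rw [hb_def]
        field_simp
        ring
      have hEexp : a * ((α - 2) / (α + 1)) = (α - 2) / (3 * α) := by
        rw [ha_def]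
        field_simp
      have hde : d ^ ((α - 2) / (α + 1)) ≤ d := by
        calc d ^ ((α - 2) / (α + 1)) ≤ d ^ (1:ℝ) := by
              apply Real.rpow_le_rpow_of_exponent_le hd1
              rw [div_le_one hα1]
              linarith
          _ = d := Real.rpow_one d
      calc c * I ^ (1 / (α + 1)) * s ^ ((α - 2) / (α + 1))
          = c * d ^ ((α - 2) / (α + 1))
            * (E ^ (a * ((α - 2) / (α + 1)))
              * (I ^ (1 / (α + 1)) * I ^ (b * ((α - 2) / (α + 1))))) := by
            rw [hse]; ring
        _ = c * d ^ ((α - 2) / (α + 1)) * u := by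
            rw [hIcomb, hEexp, hu_def]
        _ ≤ c * d * u := by
            apply mul_le_mul_of_nonneg_right (mul_le_mul_of_nonneg_left hde hc0.le) hu0.le
    -- T2 equality
    have hT2 : E / s ^ 2 = d⁻¹ ^ 2 * u := by
      have hs2 : s ^ 2 = d ^ (2:ℝ) * E ^ (a * 2) * I ^ (b * 2) := by
        rw [hs_def]
        rw [show (d * E ^ a * I ^ b) ^ 2 = d ^ 2 * (E ^ a) ^ 2 * (I ^ b) ^ 2 by ring,
          ← Real.rpow_natCast d 2, ← Real.rpow_natCast (E ^ a) 2,
          ← Real.rpow_natCast (I ^ b) 2, ← Real.rpow_mul hEpos.le, ← Real.rpow_mul hIpos.le]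
        norm_num
      rw [hs2]
      rw [div_eq_iff (by positivity : d ^ (2:ℝ) * E ^ (a * 2) * I ^ (b * 2) ≠ 0)]
      have hdinv : d⁻¹ ^ 2 = d ^ (-(2:ℝ)) := by
        rw [inv_pow, ← Real.rpow_natCast d 2, ← Real.rpow_neg hd0.le]
        norm_num
      rw [hdinv, hu_def]
      symm
      calc d ^ (-(2:ℝ)) * (E ^ ((α - 2) / (3 * α)) * I ^ (2 / (3 * α)))
            * (d ^ (2:ℝ) * E ^ (a * 2) * I ^ (b * 2))
          = (d ^ (-(2:ℝ)) * d ^ (2:ℝ)) * (E ^ ((α - 2) / (3 * α)) * E ^ (a * 2))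
            * (I ^ (2 / (3 * α)) * I ^ (b * 2)) := by ring
        _ = d ^ (-(2:ℝ) + 2) * E ^ ((α - 2) / (3 * α) + a * 2) * I ^ (2 / (3 * α) + b * 2) := by
            rw [← Real.rpow_add hd0, ← Real.rpow_add hEpos, ← Real.rpow_add hIpos]
        _ = E := by
            rw [show (-(2:ℝ) + 2) = 0 by norm_num,
              show (α - 2) / (3 * α) + a * 2 = 1 by rw [ha_def]; field_simp; ring,
              show 2 / (3 * α) + b * 2 = 0 by rw [hb_def]; field_simp; ring,
              Real.rpow_zero, Real.rpow_zero, Real.rpow_one]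
            ring
    have hMR : M ≤ (c * d + d⁻¹ ^ 2) * u := by
      calc M ≤ c * I ^ (1 / (α + 1)) * s ^ ((α - 2) / (α + 1)) + E / s ^ 2 := hkey
        _ ≤ c * d * u + d⁻¹ ^ 2 * u := by
            rw [hT2]
            exact add_le_add_left hT1 _
        _ = (c * d + d⁻¹ ^ 2) * u := by ring
    calc M ^ (3 * α / 2) ≤ ((c * d + d⁻¹ ^ 2) * u) ^ (3 * α / 2) :=
          Real.rpow_le_rpow hM0 hMR (by positivity)
      _ = (c * d + d⁻¹ ^ 2) ^ (3 * α / 2)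
          * (E ^ (((α - 2) / (3 * α)) * (3 * α / 2)) * I ^ ((2 / (3 * α)) * (3 * α / 2))) := by
          rw [Real.mul_rpow hcd0.le hu0.le, hu_def,
            Real.mul_rpow (Real.rpow_nonneg hEpos.le _) (Real.rpow_nonneg hIpos.le _),
            ← Real.rpow_mul hEpos.le, ← Real.rpow_mul hIpos.le]
      _ = I * ((c * d + d⁻¹ ^ 2) ^ (3 * α / 2) * E ^ ((α - 2) / 2)) := by
          rw [show ((α - 2) / (3 * α)) * (3 * α / 2) = (α - 2) / 2 by field_simp,
            show (2 / (3 * α)) * (3 * α / 2) = 1 by field_simp,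
            Real.rpow_one]
          ring
end

section
/- Let α > 2 and let f : (−1,1) → [0,∞) be measurable with all integrals below finite. Then for every R > 0, ∫_{−1}^1 H(w)^{α/(α+1)} f(w) dw ≤ c_α R^{(α−2)/(α+1)} (∫_{−1}^1 w² H(w)^α f(w)^{α+1} dw)^{1/(α+1)} + (1/R²) ∫_{−1}^1 w² H(w)^{α/(α+1)} f(w) dw, where c_α = (2α/(α−2))^{α/(α+1)}. -/
open MeasureTheory Set intervalIntegral

lemma memLp_of_integrable_rpow' {p : ℝ} (hp : 0 < p) {h : ℝ → ℝ}
    (hh : Measurable h) (hnn : ∀ x, 0 ≤ h x) {μ : Measure ℝ}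
    (hi : Integrable (fun x => h x ^ p) μ) : MemLp h (ENNReal.ofReal p) μ := by
  have h0 : (ENNReal.ofReal p) ≠ 0 := by simp [hp]
  have htop : (ENNReal.ofReal p) ≠ ⊤ := ENNReal.ofReal_ne_top
  rw [← memLp_norm_rpow_iff (p := ENNReal.ofReal p) hh.aestronglyMeasurable h0 htop,
    ENNReal.toReal_ofReal hp.le, ENNReal.div_self h0 htop, memLp_one_iff_integrable]
  refine hi.congr (Filter.Eventually.of_forall fun x => ?_)
  show h x ^ p = ‖h x‖ ^ p
  rw [Real.norm_of_nonneg (hnn x)]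

lemma abs_rpow_int {s r : ℝ} (hs : -1 < s) (hr : 0 < r) :
    IntegrableOn (fun x : ℝ => |x| ^ s) (Ioo (-r) r) ∧
    ∫ x in Ioo (-r) r, |x| ^ s = 2 * r ^ (s + 1) / (s + 1) := by
  have h1 : IntervalIntegrable (fun x : ℝ => |x| ^ s) volume 0 r := by
    rw [intervalIntegrable_iff, uIoc_of_le hr.le]
    have h := intervalIntegral.intervalIntegrable_rpow' (a := 0) (b := r) hs
    rw [intervalIntegrable_iff, uIoc_of_le hr.le] at h
    exact h.congr_fun (fun x hx => by rw [abs_of_pos hx.1]) measurableSet_Ioc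
  have h2 : IntervalIntegrable (fun x : ℝ => |x| ^ s) volume (-r) 0 := by
    rw [IntervalIntegrable.iff_comp_neg]
    simp only [abs_neg, neg_zero, neg_neg]
    exact h1.symm
  have h12 : IntervalIntegrable (fun x : ℝ => |x| ^ s) volume (-r) r := h2.trans h1
  constructor
  · rw [← intervalIntegrable_iff_integrableOn_Ioo_of_le (by linarith)]
    exact h12
  · have v1 : ∫ x in (0:ℝ)..r, |x| ^ s = r ^ (s + 1) / (s + 1) := by
      rw [integral_congr (g := fun x : ℝ => x ^ s)
        (fun x hx => by
          rw [uIcc_of_le hr.le] at hx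
          simp [abs_of_nonneg hx.1]),
        integral_rpow (Or.inl hs),
        Real.zero_rpow (by linarith : s + 1 ≠ 0), sub_zero]
    have v2 : ∫ x in (-r)..(0:ℝ), |x| ^ s = r ^ (s + 1) / (s + 1) := by
      have h := integral_comp_neg (a := 0) (b := r) (fun x : ℝ => |x| ^ s)
      simp only [abs_neg, neg_zero] at h
      rw [← h, v1]
    have h3 : ∫ x in (-r)..r, |x| ^ s = ∫ x in Ioo (-r) r, |x| ^ s := by
      rw [integral_of_le (by linarith), MeasureTheory.integral_Ioc_eq_integral_Ioo]
    rw [← h3, ← integral_add_adjacent_intervals h2 h1, v1, v2]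
    ring

/-- Inequality (eq:inR) of the paper: for every `R > 0`, a truncation bound for
`∫ H^(α/(α+1)) f dw` in terms of the weighted `(α+1)`-moment and the weighted
second moment, where `H(w) = 1 - w²` and `c_α = (2α/(α-2))^(α/(α+1))`. -/
theorem truncation_bound_alpha
    (α : ℝ) (f : ℝ → ℝ) (c : ℝ)
    (hα : 2 < α)
    (hc : c = (2 * α / (α - 2)) ^ (α / (α + 1)))
    (hfnonneg : ∀ w, 0 ≤ f w)
    (hfmeas : Measurable f)
    (hf1 : IntegrableOn (fun w => (1 - w ^ 2) ^ (α / (α + 1)) * f w) (Ioo (-1:ℝ) 1))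
    (hf2 : IntegrableOn (fun w => w ^ 2 * (1 - w ^ 2) ^ (α / (α + 1)) * f w) (Ioo (-1:ℝ) 1))
    (hfα : IntegrableOn (fun w => w ^ 2 * (1 - w ^ 2) ^ α * f w ^ (α + 1)) (Ioo (-1:ℝ) 1)) :
    ∀ R : ℝ, 0 < R →
      ∫ w in Ioo (-1:ℝ) 1, (1 - w ^ 2) ^ (α / (α + 1)) * f w
        ≤ c * R ^ ((α - 2) / (α + 1))
            * (∫ w in Ioo (-1:ℝ) 1, w ^ 2 * (1 - w ^ 2) ^ α * f w ^ (α + 1)) ^ (1 / (α + 1))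
          + (1 / R ^ 2)
            * ∫ w in Ioo (-1:ℝ) 1, w ^ 2 * (1 - w ^ 2) ^ (α / (α + 1)) * f w := by
  intro R hR
  have hα1 : (0:ℝ) < α + 1 := by linarith
  have hα1' : α + 1 ≠ 0 := ne_of_gt hα1
  have hα0 : (0:ℝ) < α := by linarith
  have hα2 : (0:ℝ) < α - 2 := by linarith
  have hα2' : α - 2 ≠ 0 := ne_of_gt hα2
  set r : ℝ := min R 1 with hrdef
  have hr0 : 0 < r := lt_min hR one_pos
  have hr1 : r ≤ 1 := min_le_right _ _
  have hrR : r ≤ R := min_le_left _ _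
  have hTS : Ioo (-r) r ⊆ Ioo (-1:ℝ) 1 := Ioo_subset_Ioo (by linarith) hr1
  have hTmeas : MeasurableSet (Ioo (-r) r) := measurableSet_Ioo
  have hSmeas : MeasurableSet (Ioo (-1:ℝ) 1) := measurableSet_Ioo
  -- nonnegativity facts
  have hH : ∀ w ∈ Ioo (-1:ℝ) 1, (0:ℝ) < 1 - w ^ 2 := fun w hw => by
    nlinarith [hw.1, hw.2]
  have hg_nn : ∀ w ∈ Ioo (-1:ℝ) 1, 0 ≤ (1 - w ^ 2) ^ (α / (α + 1)) * f w := fun w hw =>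
    mul_nonneg (Real.rpow_nonneg (hH w hw).le _) (hfnonneg w)
  have hX_nn : ∀ w ∈ Ioo (-1:ℝ) 1, 0 ≤ w ^ 2 * (1 - w ^ 2) ^ α * f w ^ (α + 1) := fun w hw =>
    mul_nonneg (mul_nonneg (sq_nonneg w) (Real.rpow_nonneg (hH w hw).le _))
      (Real.rpow_nonneg (hfnonneg w) _)
  have hg2_nn : ∀ w ∈ Ioo (-1:ℝ) 1, 0 ≤ w ^ 2 * (1 - w ^ 2) ^ (α / (α + 1)) * f w := fun w hw =>
    mul_nonneg (mul_nonneg (sq_nonneg w) (Real.rpow_nonneg (hH w hw).le _)) (hfnonneg w)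
  -- splitting the integral
  have hunion : Ioo (-r) r ∪ (Ioo (-1:ℝ) 1 \ Ioo (-r) r) = Ioo (-1:ℝ) 1 :=
    union_diff_cancel hTS
  have hsplit : ∫ w in Ioo (-1:ℝ) 1, (1 - w ^ 2) ^ (α / (α + 1)) * f w
      = (∫ w in Ioo (-r) r, (1 - w ^ 2) ^ (α / (α + 1)) * f w)
        + ∫ w in Ioo (-1:ℝ) 1 \ Ioo (-r) r, (1 - w ^ 2) ^ (α / (α + 1)) * f w := by
    have h := setIntegral_union (f := fun w => (1 - w ^ 2) ^ (α / (α + 1)) * f w)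
      (μ := volume) disjoint_sdiff_self_right (hSmeas.diff hTmeas)
      (hf1.mono_set hTS) (hf1.mono_set diff_subset)
    rwa [hunion] at h
  -- the outer part
  have key2 : ∫ w in Ioo (-1:ℝ) 1 \ Ioo (-r) r, (1 - w ^ 2) ^ (α / (α + 1)) * f w
      ≤ (1 / R ^ 2) * ∫ w in Ioo (-1:ℝ) 1, w ^ 2 * (1 - w ^ 2) ^ (α / (α + 1)) * f w := by
    have hpt : ∀ w ∈ Ioo (-1:ℝ) 1 \ Ioo (-r) r, (1 - w ^ 2) ^ (α / (α + 1)) * f w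
        ≤ (1 / R ^ 2) * (w ^ 2 * (1 - w ^ 2) ^ (α / (α + 1)) * f w) := by
      intro w hw
      have hwS := hw.1
      have hwT : w ∉ Ioo (-r) r := hw.2
      have hrw : R ≤ |w| := by
        have ha1 : |w| < 1 := abs_lt.mpr ⟨hwS.1, hwS.2⟩
        have ha2 : ¬ |w| < r := fun h => hwT (mem_Ioo.mpr (abs_lt.mp h))
        push_neg at ha2
        rcases min_le_iff.mp ha2 with h | h
        · exact h
        · linarith
      have hsq : R ^ 2 ≤ w ^ 2 := by
        rw [← sq_abs w]
        exact pow_le_pow_left₀ hR.le hrw 2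
      have hA : 0 ≤ (1 - w ^ 2) ^ (α / (α + 1)) * f w := hg_nn w hwS
      calc (1 - w ^ 2) ^ (α / (α + 1)) * f w
          = 1 / R ^ 2 * (R ^ 2 * ((1 - w ^ 2) ^ (α / (α + 1)) * f w)) := by
            field_simp
        _ ≤ 1 / R ^ 2 * (w ^ 2 * ((1 - w ^ 2) ^ (α / (α + 1)) * f w)) :=
            mul_le_mul_of_nonneg_left (mul_le_mul_of_nonneg_right hsq hA) (by positivity)
        _ = 1 / R ^ 2 * (w ^ 2 * (1 - w ^ 2) ^ (α / (α + 1)) * f w) := by ring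
    calc ∫ w in Ioo (-1:ℝ) 1 \ Ioo (-r) r, (1 - w ^ 2) ^ (α / (α + 1)) * f w
        ≤ ∫ w in Ioo (-1:ℝ) 1 \ Ioo (-r) r,
            (1 / R ^ 2) * (w ^ 2 * (1 - w ^ 2) ^ (α / (α + 1)) * f w) :=
          setIntegral_mono_on (hf1.mono_set diff_subset)
            ((hf2.mono_set diff_subset).const_mul _) (hSmeas.diff hTmeas) hpt
      _ = (1 / R ^ 2) * ∫ w in Ioo (-1:ℝ) 1 \ Ioo (-r) r,
            w ^ 2 * (1 - w ^ 2) ^ (α / (α + 1)) * f w := MeasureTheory.integral_const_mul _ _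
      _ ≤ (1 / R ^ 2) * ∫ w in Ioo (-1:ℝ) 1, w ^ 2 * (1 - w ^ 2) ^ (α / (α + 1)) * f w := by
          refine mul_le_mul_of_nonneg_left ?_ (by positivity)
          exact setIntegral_mono_set hf2
            ((ae_restrict_iff' hSmeas).mpr (Filter.Eventually.of_forall hg2_nn))
            (HasSubset.Subset.eventuallyLE diff_subset)
  -- Hölder on the inner part
  have hs1 : (-1:ℝ) < -(2 / α) := by
    have h : 2 / α < 1 := (div_lt_one hα0).mpr hα
    linarith
  obtain ⟨hψint, hψval⟩ := abs_rpow_int hs1 hr0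
  set Φ : ℝ → ℝ := fun w => |w ^ 2 * (1 - w ^ 2) ^ α * f w ^ (α + 1)| ^ (1 / (α + 1)) with hΦ
  set Ψ : ℝ → ℝ := fun w => |w| ^ (-(2 / (α + 1))) with hΨ
  have hΦmeas : Measurable Φ := by
    rw [hΦ]; fun_prop
  have hΨmeas : Measurable Ψ := by
    rw [hΨ]; fun_prop
  have hΦnn : ∀ x, 0 ≤ Φ x := fun x => Real.rpow_nonneg (abs_nonneg _) _
  have hΨnn : ∀ x, 0 ≤ Ψ x := fun x => Real.rpow_nonneg (abs_nonneg _) _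
  have hΦp : ∀ w, Φ w ^ (α + 1) = |w ^ 2 * (1 - w ^ 2) ^ α * f w ^ (α + 1)| := by
    intro w
    simp only [hΦ]
    rw [← Real.rpow_mul (abs_nonneg _), one_div_mul_cancel hα1', Real.rpow_one]
  have hΦMem : MemLp Φ (ENNReal.ofReal (α + 1)) (volume.restrict (Ioo (-r) r)) := by
    refine memLp_of_integrable_rpow' hα1 hΦmeas hΦnn ?_
    have h := ((hfα.mono_set hTS).abs :)
    exact h.congr (Filter.Eventually.of_forall fun w => (hΦp w).symm)
  have hq : (-(2 / (α + 1))) * ((α + 1) / α) = -(2 / α) := by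
    field_simp
    try ring
  have hΨq : ∀ w, Ψ w ^ ((α + 1) / α) = |w| ^ (-(2 / α)) := fun w => by
    simp only [hΨ]
    rw [← Real.rpow_mul (abs_nonneg _), hq]
  have hΨMem : MemLp Ψ (ENNReal.ofReal ((α + 1) / α)) (volume.restrict (Ioo (-r) r)) := by
    refine memLp_of_integrable_rpow' (by positivity) hΨmeas hΨnn ?_
    exact hψint.congr (Filter.Eventually.of_forall fun w => (hΨq w).symm)
  have hpq : Real.HolderConjugate (α + 1) ((α + 1) / α) := by
    rw [Real.holderConjugate_iff]
    constructor
    · linarith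
    · rw [inv_div]
      field_simp
      try ring
  have hHold := integral_mul_le_Lp_mul_Lq_of_nonneg hpq
    (Filter.Eventually.of_forall hΦnn) (Filter.Eventually.of_forall hΨnn) hΦMem hΨMem
  -- the integrand equals Φ * Ψ a.e. on the inner interval
  have h0ae : ∀ᵐ x : ℝ, x ≠ 0 := by
    have hset : {x : ℝ | ¬ x ≠ 0} = {0} := by ext x; simp
    rw [ae_iff, hset]
    exact Real.volume_singleton
  have hTeq : ∫ w in Ioo (-r) r, (1 - w ^ 2) ^ (α / (α + 1)) * f w
      = ∫ w in Ioo (-r) r, Φ w * Ψ w := by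
    refine setIntegral_congr_ae hTmeas ?_
    filter_upwards [h0ae] with w hw0 hwT
    have hw1 : w ^ 2 < 1 := by
      have ha1 : |w| < r := abs_lt.mpr ⟨hwT.1, hwT.2⟩
      have := abs_nonneg w
      nlinarith [sq_abs w]
    have hu : (0:ℝ) < 1 - w ^ 2 := by linarith
    have hXnn : 0 ≤ w ^ 2 * (1 - w ^ 2) ^ α * f w ^ (α + 1) :=
      mul_nonneg (mul_nonneg (sq_nonneg _) (Real.rpow_nonneg hu.le _))
        (Real.rpow_nonneg (hfnonneg w) _)
    have e1 : Φ w = (w ^ 2) ^ (1 / (α + 1)) * ((1 - w ^ 2) ^ (α / (α + 1)) * f w) := by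
      simp only [hΦ]
      rw [abs_of_nonneg hXnn,
        Real.mul_rpow (mul_nonneg (sq_nonneg _) (Real.rpow_nonneg hu.le _))
          (Real.rpow_nonneg (hfnonneg w) _),
        Real.mul_rpow (sq_nonneg _) (Real.rpow_nonneg hu.le _),
        ← Real.rpow_mul hu.le, mul_one_div,
        ← Real.rpow_mul (hfnonneg w), mul_one_div, div_self hα1', Real.rpow_one,
        mul_assoc]
    have e2 : (w ^ 2) ^ (1 / (α + 1)) * Ψ w = 1 := by
      simp only [hΨ]
      rw [← sq_abs w, ← Real.rpow_two, ← Real.rpow_mul (abs_nonneg w),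
        ← Real.rpow_add (abs_pos.mpr hw0),
        show 2 * (1 / (α + 1)) + -(2 / (α + 1)) = (0:ℝ) from by ring, Real.rpow_zero]
    rw [e1, mul_right_comm, e2, one_mul]
  -- bounding the two Hölder factors
  have hΦint_eq : ∫ w in Ioo (-r) r, Φ w ^ (α + 1)
      = ∫ w in Ioo (-r) r, w ^ 2 * (1 - w ^ 2) ^ α * f w ^ (α + 1) := by
    refine setIntegral_congr_ae hTmeas (Filter.Eventually.of_forall fun w hwT => ?_)
    rw [hΦp w, abs_of_nonneg (hX_nn w (hTS hwT))]
  have hΦint_le : ∫ w in Ioo (-r) r, Φ w ^ (α + 1)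
      ≤ ∫ w in Ioo (-1:ℝ) 1, w ^ 2 * (1 - w ^ 2) ^ α * f w ^ (α + 1) := by
    rw [hΦint_eq]
    exact setIntegral_mono_set hfα
      ((ae_restrict_iff' hSmeas).mpr (Filter.Eventually.of_forall hX_nn))
      (HasSubset.Subset.eventuallyLE hTS)
  have hIαnn : 0 ≤ ∫ w in Ioo (-1:ℝ) 1, w ^ 2 * (1 - w ^ 2) ^ α * f w ^ (α + 1) :=
    setIntegral_nonneg hSmeas hX_nn
  have hΦTnn : 0 ≤ ∫ w in Ioo (-r) r, Φ w ^ (α + 1) :=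
    setIntegral_nonneg hTmeas fun w _ => Real.rpow_nonneg (hΦnn w) _
  have hcnn : 0 ≤ c := hc ▸ Real.rpow_nonneg (by positivity) _
  have hΨval : (∫ w in Ioo (-r) r, Ψ w ^ ((α + 1) / α)) ^ (1 / ((α + 1) / α))
      = c * r ^ ((α - 2) / (α + 1)) := by
    have hTv : ∫ w in Ioo (-r) r, Ψ w ^ ((α + 1) / α) = 2 * r ^ (-(2 / α) + 1) / (-(2 / α) + 1) := by
      simp only [hΨq]
      exact hψval
    rw [hTv, hc]
    have he1 : -(2 / α) + 1 = (α - 2) / α := by field_simp; ring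
    have he2 : 2 * r ^ ((α - 2) / α) / ((α - 2) / α)
        = 2 * α / (α - 2) * r ^ ((α - 2) / α) := by
      field_simp
      try ring
    rw [he1, he2, one_div, inv_div,
      Real.mul_rpow (by positivity) (Real.rpow_nonneg hr0.le _),
      ← Real.rpow_mul hr0.le,
      show (α - 2) / α * (α / (α + 1)) = (α - 2) / (α + 1) from by field_simp; try ring]
  have key1 : ∫ w in Ioo (-r) r, (1 - w ^ 2) ^ (α / (α + 1)) * f w
      ≤ c * R ^ ((α - 2) / (α + 1))
        * (∫ w in Ioo (-1:ℝ) 1, w ^ 2 * (1 - w ^ 2) ^ α * f w ^ (α + 1)) ^ (1 / (α + 1)) := by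
    rw [hTeq]
    have hrRe : r ^ ((α - 2) / (α + 1)) ≤ R ^ ((α - 2) / (α + 1)) :=
      Real.rpow_le_rpow hr0.le hrR (by positivity)
    calc ∫ w in Ioo (-r) r, Φ w * Ψ w
        ≤ (∫ w in Ioo (-r) r, Φ w ^ (α + 1)) ^ (1 / (α + 1))
            * (∫ w in Ioo (-r) r, Ψ w ^ ((α + 1) / α)) ^ (1 / ((α + 1) / α)) := hHold
      _ ≤ (∫ w in Ioo (-1:ℝ) 1, w ^ 2 * (1 - w ^ 2) ^ α * f w ^ (α + 1)) ^ (1 / (α + 1))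
            * (c * r ^ ((α - 2) / (α + 1))) := by
          rw [hΨval]
          exact mul_le_mul_of_nonneg_right
            (Real.rpow_le_rpow hΦTnn hΦint_le (by positivity))
            (mul_nonneg hcnn (Real.rpow_nonneg hr0.le _))
      _ ≤ (∫ w in Ioo (-1:ℝ) 1, w ^ 2 * (1 - w ^ 2) ^ α * f w ^ (α + 1)) ^ (1 / (α + 1))
            * (c * R ^ ((α - 2) / (α + 1))) :=
          mul_le_mul_of_nonneg_left (mul_le_mul_of_nonneg_left hrRe hcnn)
            (Real.rpow_nonneg hIαnn _)
      _ = c * R ^ ((α - 2) / (α + 1))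
            * (∫ w in Ioo (-1:ℝ) 1, w ^ 2 * (1 - w ^ 2) ^ α * f w ^ (α + 1)) ^ (1 / (α + 1)) := by
          ring
  linarith [hsplit, key1, key2]
end

section
/- Let α > 2 and let f : (−1,1) → [0,∞) be measurable with all integrals below finite. Then ∫_{−1}^1 H(w)^{α/(α+1)} f(w) dw ≤ (c_α d_α + d_α^{−2}) · (∫_{−1}^1 w² H(w)^α f(w)^{α+1} dw)^{2/(3α)} · (∫_{−1}^1 w² H(w)^{α/(α+1)} f(w) dw)^{(α−2)/(3α)}, where c_α = (2α/(α−2))^{α/(α+1)} and d_α = (2(α+1)/(c_α(α−2)))^{1/3}. -/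
open MeasureTheory Set intervalIntegral

lemma auxF (α : ℝ) (hα : 2 < α) (m : ℝ) (hm : 0 < m) :
    IntegrableOn (fun x : ℝ => (x^2 : ℝ) ^ (-(1/α))) (Ioc (-m) m) ∧
    (∫ x in Ioc (-m) m, (x^2 : ℝ) ^ (-(1/α))) = 2*α/(α-2) * m ^ ((α-2)/α) := by
  have hα0 : (0:ℝ) < α := by linarith
  have hr : (-1 : ℝ) < -(2/α) := by
    rw [neg_lt_neg_iff]
    rw [div_lt_one hα0]; linarith
  have hrne : -(2/α) + 1 ≠ 0 := by
    have : (0:ℝ) < -(2/α) + 1 := by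
      have : 2/α < 1 := by rw [div_lt_one hα0]; linarith
      linarith
    linarith
  have hEq : EqOn (fun x : ℝ => (x^2 : ℝ) ^ (-(1/α))) (fun x : ℝ => x ^ (-(2/α)))
      (Icc (0:ℝ) m) := by
    intro x hx
    rcases eq_or_lt_of_le hx.1 with h0 | hx0
    · have hx' : x = 0 := h0.symm
      subst hx'
      have e1 : ((0:ℝ)^2 : ℝ) = 0 := by norm_num
      simp only [e1]
      have hne : -(2/α) ≠ 0 := by
        have h2 : (0:ℝ) < 2/α := by positivity
        linarith
      have hne1 : -(1/α) ≠ 0 := by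
        have h2 : (0:ℝ) < 1/α := by positivity
        linarith
      rw [Real.zero_rpow hne1, Real.zero_rpow hne]
    · simp only
      rw [← Real.rpow_natCast x 2, ← Real.rpow_mul hx0.le]
      congr 1
      push_cast; field_simp
  have h1 : IntervalIntegrable (fun x : ℝ => x ^ (-(2/α))) volume 0 m :=
    intervalIntegral.intervalIntegrable_rpow' hr
  have h2 : IntervalIntegrable (fun x : ℝ => (x^2 : ℝ) ^ (-(1/α))) volume 0 m := by
    rw [intervalIntegrable_iff] at h1 ⊢
    rw [uIoc_of_le hm.le] at h1 ⊢
    exact h1.congr_fun (fun x hx => (hEq (Ioc_subset_Icc_self hx)).symm) measurableSet_Ioc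
  have h3 : IntervalIntegrable (fun x : ℝ => (x^2 : ℝ) ^ (-(1/α))) volume (-m) 0 := by
    have := (IntervalIntegrable.iff_comp_neg (f := fun x : ℝ => (x^2 : ℝ) ^ (-(1/α)))).mp h2
    simp only [neg_neg, neg_zero] at this
    have h4 : (fun x : ℝ => ((-x)^2 : ℝ) ^ (-(1/α))) = fun x : ℝ => (x^2:ℝ) ^ (-(1/α)) := by
      funext x; rw [neg_sq]
    rw [h4] at this
    exact this.symm
  have hint : IntervalIntegrable (fun x : ℝ => (x^2 : ℝ) ^ (-(1/α))) volume (-m) m :=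
    h3.trans h2
  have hv2 : (∫ x in (0:ℝ)..m, (x^2 : ℝ) ^ (-(1/α))) = m ^ (-(2/α) + 1) / (-(2/α) + 1) := by
    rw [intervalIntegral.integral_congr (uIcc_of_le hm.le ▸ hEq),
      integral_rpow (Or.inl hr), Real.zero_rpow hrne]
    ring
  have hneg : (∫ x in (-m)..(0:ℝ), (x^2 : ℝ) ^ (-(1/α)))
      = ∫ x in (0:ℝ)..m, (x^2 : ℝ) ^ (-(1/α)) := by
    have := intervalIntegral.integral_comp_neg (a := 0) (b := m) (fun x => (x^2 : ℝ) ^ (-(1/α)))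
    simp only [neg_zero, neg_sq] at this
    exact this.symm
  constructor
  · rw [← uIoc_of_le (by linarith : (-m) ≤ m), ← intervalIntegrable_iff]
    exact hint
  · have hsplit : (∫ x in (-m)..m, (x^2 : ℝ) ^ (-(1/α)))
        = (∫ x in (-m)..(0:ℝ), (x^2 : ℝ) ^ (-(1/α))) + ∫ x in (0:ℝ)..m, (x^2 : ℝ) ^ (-(1/α)) :=
      (intervalIntegral.integral_add_adjacent_intervals h3 h2).symm
    rw [← intervalIntegral.integral_of_le (by linarith : (-m) ≤ m), hsplit, hneg, hv2]
    have hexp : -(2/α) + 1 = (α-2)/α := by field_simp; ring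
    rw [hexp]
    field_simp
    ring

lemma aux_d_ge_one (α c d : ℝ) (hα : 2 < α)
    (hc : c = (2 * α / (α - 2)) ^ (α / (α + 1)))
    (hd : d = (2 * (α + 1) / (c * (α - 2))) ^ ((1:ℝ) / 3)) :
    1 ≤ d := by
  have hα2 : (0:ℝ) < α - 2 := by linarith
  have hα1 : (0:ℝ) < α + 1 := by linarith
  have hcpos : 0 < c := by
    rw [hc]; exact Real.rpow_pos_of_pos (by positivity) _
  have hkey : c * (α - 2) ≤ 2 * (α + 1) := by
    have hsplit : c * (α - 2) = (2*α) ^ (α/(α+1)) * (α-2) ^ (1/(α+1)) := by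
      rw [hc, Real.div_rpow (by positivity) hα2.le, div_mul_eq_mul_div, mul_div_assoc]
      congr 1
      rw [show (1:ℝ)/(α+1) = 1 - α/(α+1) by field_simp; ring, Real.rpow_sub hα2, Real.rpow_one]
    have hgm := Real.geom_mean_le_arith_mean2_weighted
      (by positivity : (0:ℝ) ≤ α/(α+1)) (by positivity : (0:ℝ) ≤ 1/(α+1))
      (by positivity : (0:ℝ) ≤ 2*α) hα2.le (by field_simp)
    rw [hsplit]
    refine hgm.trans ?_
    rw [div_mul_eq_mul_div, div_mul_eq_mul_div, ← add_div, div_le_iff₀ hα1]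
    nlinarith
  rw [hd]
  apply Real.one_le_rpow _ (by norm_num)
  rw [le_div_iff₀ (by positivity)]
  linarith

lemma aux_opt (α c d B C : ℝ) (hα : 2 < α) (hc : 0 < c) (hd1 : 1 ≤ d)
    (hB : 0 < B) (hC : 0 < C) :
    c * (d * (C ^ ((α+1)/(3*α)) * B ^ (-(1/(3*α))))) ^ ((α-2)/(α+1)) * B ^ (1/(α+1))
      + (d * (C ^ ((α+1)/(3*α)) * B ^ (-(1/(3*α)))))⁻¹ ^ 2 * C
    ≤ (c * d + d⁻¹ ^ 2) * B ^ (2/(3*α)) * C ^ ((α-2)/(3*α)) := by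
  have hα0 : (0:ℝ) < α := by linarith
  have hα1 : (0:ℝ) < α + 1 := by linarith
  have hd0 : 0 < d := by linarith
  have hCa : 0 < C ^ ((α+1)/(3*α)) := Real.rpow_pos_of_pos hC _
  have hBb : 0 < B ^ (-(1/(3*α))) := Real.rpow_pos_of_pos hB _
  have hX : 0 < C ^ ((α+1)/(3*α)) * B ^ (-(1/(3*α))) := by positivity
  have hθ1 : (α-2)/(α+1) ≤ 1 := by rw [div_le_one hα1]; linarith
  have hθ0 : (0:ℝ) ≤ (α-2)/(α+1) := div_nonneg (by linarith) (by linarith)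
  have hdθ : d ^ ((α-2)/(α+1)) ≤ d := by
    have := Real.rpow_le_rpow_of_exponent_le hd1 hθ1
    rwa [Real.rpow_one] at this
  -- term 1
  have h1 : c * (d * (C ^ ((α+1)/(3*α)) * B ^ (-(1/(3*α))))) ^ ((α-2)/(α+1)) * B ^ (1/(α+1))
      ≤ (c * d) * (B ^ (2/(3*α)) * C ^ ((α-2)/(3*α))) := by
    rw [Real.mul_rpow hd0.le hX.le, Real.mul_rpow hCa.le hBb.le,
      ← Real.rpow_mul hC.le, ← Real.rpow_mul hB.le]
    calc c * (d ^ ((α-2)/(α+1)) * (C ^ ((α+1)/(3*α) * ((α-2)/(α+1)))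
            * B ^ (-(1/(3*α)) * ((α-2)/(α+1))))) * B ^ (1/(α+1))
        = (c * d ^ ((α-2)/(α+1)))
            * (B ^ (-(1/(3*α)) * ((α-2)/(α+1))) * B ^ (1/(α+1))
              * C ^ ((α+1)/(3*α) * ((α-2)/(α+1)))) := by ring
      _ = (c * d ^ ((α-2)/(α+1)))
            * (B ^ (-(1/(3*α)) * ((α-2)/(α+1)) + 1/(α+1))
              * C ^ ((α+1)/(3*α) * ((α-2)/(α+1)))) := by rw [← Real.rpow_add hB]
      _ = (c * d ^ ((α-2)/(α+1))) * (B ^ (2/(3*α)) * C ^ ((α-2)/(3*α))) := by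
            rw [show -(1/(3*α)) * ((α-2)/(α+1)) + 1/(α+1) = 2/(3*α) by field_simp; ring,
              show (α+1)/(3*α) * ((α-2)/(α+1)) = (α-2)/(3*α) by field_simp]
      _ ≤ (c * d) * (B ^ (2/(3*α)) * C ^ ((α-2)/(3*α))) := by
            apply mul_le_mul_of_nonneg_right (mul_le_mul_of_nonneg_left hdθ hc.le)
            positivity
  -- term 2
  have h2 : (d * (C ^ ((α+1)/(3*α)) * B ^ (-(1/(3*α)))))⁻¹ ^ 2 * C
      = d⁻¹ ^ 2 * (B ^ (2/(3*α)) * C ^ ((α-2)/(3*α))) := by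
    have einv : ∀ x : ℝ, 0 < x → x⁻¹ ^ 2 = x ^ (-(2:ℝ)) := by
      intro x hx
      rw [Real.rpow_neg hx.le, show ((2:ℝ)) = ((2:ℕ):ℝ) by norm_num, Real.rpow_natCast,
        inv_pow]
    rw [einv _ (by positivity), einv _ hd0,
      Real.mul_rpow hd0.le hX.le, Real.mul_rpow hCa.le hBb.le,
      ← Real.rpow_mul hC.le, ← Real.rpow_mul hB.le]
    calc d ^ (-(2:ℝ)) * (C ^ ((α+1)/(3*α) * -2) * B ^ (-(1/(3*α)) * -2)) * C
        = d ^ (-(2:ℝ)) * (B ^ (-(1/(3*α)) * -2) * (C ^ ((α+1)/(3*α) * -2) * C ^ (1:ℝ))) := by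
          rw [Real.rpow_one]; ring
      _ = d ^ (-(2:ℝ)) * (B ^ (-(1/(3*α)) * -2) * C ^ ((α+1)/(3*α) * -2 + 1)) := by
          rw [← Real.rpow_add hC]
      _ = d ^ (-(2:ℝ)) * (B ^ (2/(3*α)) * C ^ ((α-2)/(3*α))) := by
          rw [show -(1/(3*α)) * (-2:ℝ) = 2/(3*α) by field_simp,
            show (α+1)/(3*α) * (-2:ℝ) + 1 = (α-2)/(3*α) by field_simp; ring]
  rw [h2]
  have : (c * d + d⁻¹ ^ 2) * B ^ (2/(3*α)) * C ^ ((α-2)/(3*α))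
      = (c*d) * (B ^ (2/(3*α)) * C ^ ((α-2)/(3*α)))
        + d⁻¹ ^ 2 * (B ^ (2/(3*α)) * C ^ ((α-2)/(3*α))) := by ring
  rw [this]
  exact add_le_add h1 le_rfl

lemma aux_split (α : ℝ) (f : ℝ → ℝ) (hα : 2 < α)
    (hfnonneg : ∀ w, 0 ≤ f w) (hfmeas : Measurable f)
    (hf1 : IntegrableOn (fun w => (1 - w ^ 2) ^ (α / (α + 1)) * f w) (Ioo (-1:ℝ) 1))
    (hf2 : IntegrableOn (fun w => w ^ 2 * (1 - w ^ 2) ^ (α / (α + 1)) * f w) (Ioo (-1:ℝ) 1))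
    (hfα : IntegrableOn (fun w => w ^ 2 * (1 - w ^ 2) ^ α * f w ^ (α + 1)) (Ioo (-1:ℝ) 1))
    (ε : ℝ) (hε : 0 < ε) :
    ∫ w in Ioo (-1:ℝ) 1, (1 - w ^ 2) ^ (α / (α + 1)) * f w
      ≤ ((2 * α / (α - 2)) ^ (α / (α + 1))) * ε ^ ((α-2)/(α+1))
          * (∫ w in Ioo (-1:ℝ) 1, w ^ 2 * (1 - w ^ 2) ^ α * f w ^ (α + 1)) ^ (1/(α+1))
        + ε⁻¹ ^ 2 * (∫ w in Ioo (-1:ℝ) 1, w ^ 2 * (1 - w ^ 2) ^ (α / (α + 1)) * f w) := by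
  have hα0 : (0:ℝ) < α := by linarith
  have hα1 : (0:ℝ) < α + 1 := by linarith
  have hα2 : (0:ℝ) < α - 2 := by linarith
  set m := min ε 1 with hm_def
  have hm : 0 < m := lt_min hε one_pos
  set S := Ioo (-1:ℝ) 1 ∩ Ioc (-m) m with hS_def
  set T := Ioo (-1:ℝ) 1 \ Ioc (-m) m with hT_def
  have hSsub : S ⊆ Ioo (-1:ℝ) 1 := inter_subset_left
  have hSsub' : S ⊆ Ioc (-m) m := inter_subset_right
  have hSmeas : MeasurableSet S := measurableSet_Ioo.inter measurableSet_Ioc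
  have hIoo1 : ∀ w ∈ Ioo (-1:ℝ) 1, (0:ℝ) ≤ 1 - w^2 := by
    intro w hw; nlinarith [hw.1, hw.2]
  -- nonnegativity of the three integrands on Ioo
  have hn1 : ∀ w ∈ Ioo (-1:ℝ) 1, 0 ≤ (1 - w ^ 2) ^ (α / (α + 1)) * f w := fun w hw =>
    mul_nonneg (Real.rpow_nonneg (hIoo1 w hw) _) (hfnonneg w)
  have hn2 : ∀ w ∈ Ioo (-1:ℝ) 1, 0 ≤ w ^ 2 * (1 - w ^ 2) ^ (α / (α + 1)) * f w := fun w hw =>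
    mul_nonneg (mul_nonneg (sq_nonneg w) (Real.rpow_nonneg (hIoo1 w hw) _)) (hfnonneg w)
  have hnG : ∀ w ∈ Ioo (-1:ℝ) 1, 0 ≤ w ^ 2 * (1 - w ^ 2) ^ α * f w ^ (α + 1) := fun w hw =>
    mul_nonneg (mul_nonneg (sq_nonneg w) (Real.rpow_nonneg (hIoo1 w hw) _))
      (Real.rpow_nonneg (hfnonneg w) _)
  -- split the integral
  have hsplit : (∫ w in S, (1 - w ^ 2) ^ (α / (α + 1)) * f w)
        + (∫ w in T, (1 - w ^ 2) ^ (α / (α + 1)) * f w)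
      = ∫ w in Ioo (-1:ℝ) 1, (1 - w ^ 2) ^ (α / (α + 1)) * f w :=
    integral_inter_add_diff measurableSet_Ioc hf1
  -- T part
  have hT : (∫ w in T, (1 - w ^ 2) ^ (α / (α + 1)) * f w)
      ≤ ε⁻¹ ^ 2 * ∫ w in Ioo (-1:ℝ) 1, w ^ 2 * (1 - w ^ 2) ^ (α / (α + 1)) * f w := by
    have hptw : ∀ w ∈ T, (1 - w ^ 2) ^ (α / (α + 1)) * f w
        ≤ ε⁻¹ ^ 2 * (w ^ 2 * (1 - w ^ 2) ^ (α / (α + 1)) * f w) := by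
      intro w hw
      obtain ⟨hw1, hw2⟩ := hw
      have habs : m ≤ |w| := by
        rcases le_or_gt w m with h | h
        · have : ¬ (-m < w) := fun hc => hw2 ⟨hc, h⟩
          push_neg at this
          calc m ≤ -w := by linarith
          _ ≤ |w| := neg_le_abs w
        · exact h.le.trans (le_abs_self w)
      have hεw : ε ≤ |w| := by
        rcases le_or_gt ε 1 with h | h
        · rwa [hm_def, min_eq_left h] at habs
        · exfalso
          have hw_lt : |w| < 1 := abs_lt.2 ⟨hw1.1, hw1.2⟩
          rw [hm_def, min_eq_right h.le] at habs
          linarith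
      have hsq : ε ^ 2 ≤ w ^ 2 := by
        calc ε^2 ≤ |w|^2 := pow_le_pow_left₀ hε.le hεw 2
        _ = w^2 := sq_abs w
      have h1le : 1 ≤ ε⁻¹ ^ 2 * w ^ 2 := by
        rw [inv_pow, ← div_eq_inv_mul, le_div_iff₀ (by positivity)]
        linarith
      have h0 : 0 ≤ (1 - w ^ 2) ^ (α / (α + 1)) * f w := hn1 w hw1
      nlinarith [mul_le_mul_of_nonneg_right h1le h0]
    calc (∫ w in T, (1 - w ^ 2) ^ (α / (α + 1)) * f w)
        ≤ ∫ w in T, ε⁻¹ ^ 2 * (w ^ 2 * (1 - w ^ 2) ^ (α / (α + 1)) * f w) :=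
          setIntegral_mono_on (hf1.mono_set diff_subset)
            ((hf2.mono_set diff_subset).const_mul _)
            (measurableSet_Ioo.diff measurableSet_Ioc) hptw
      _ = ε⁻¹ ^ 2 * ∫ w in T, w ^ 2 * (1 - w ^ 2) ^ (α / (α + 1)) * f w :=
          integral_const_mul _ _
      _ ≤ ε⁻¹ ^ 2 * ∫ w in Ioo (-1:ℝ) 1, w ^ 2 * (1 - w ^ 2) ^ (α / (α + 1)) * f w := by
          apply mul_le_mul_of_nonneg_left _ (by positivity)
          apply setIntegral_mono_set hf2
          · filter_upwards [ae_restrict_mem measurableSet_Ioo] with w hw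
            exact hn2 w hw
          · exact HasSubset.Subset.eventuallyLE diff_subset
  -- S part (Hölder)
  have hS : (∫ w in S, (1 - w ^ 2) ^ (α / (α + 1)) * f w)
      ≤ ((2 * α / (α - 2)) ^ (α / (α + 1))) * ε ^ ((α-2)/(α+1))
          * (∫ w in Ioo (-1:ℝ) 1, w ^ 2 * (1 - w ^ 2) ^ α * f w ^ (α + 1)) ^ (1/(α+1)) := by
    set G : ℝ → ℝ := fun w => w ^ 2 * (1 - w ^ 2) ^ α * f w ^ (α + 1) with hG_def
    set g : ℝ → ℝ := fun w => (G w) ^ (1/(α+1)) with hg_def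
    set h : ℝ → ℝ := fun w => (w^2 : ℝ) ^ (-(1/(α+1))) with hh_def
    have hae_mem : ∀ᵐ w ∂(volume.restrict S), w ∈ S := ae_restrict_mem hSmeas
    have hae_ne : ∀ᵐ w ∂(volume.restrict S), w ≠ 0 := by
      refine ae_restrict_of_ae ?_
      rw [ae_iff]
      have : {a : ℝ | ¬ a ≠ 0} = {0} := by ext w; simp
      rw [this]
      exact measure_singleton 0
    have hgnn : ∀ᵐ w ∂(volume.restrict S), 0 ≤ g w := by
      filter_upwards [hae_mem] with w hw
      exact Real.rpow_nonneg (hnG w (hSsub hw)) _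
    have hhnn : ∀ᵐ w ∂(volume.restrict S), 0 ≤ h w :=
      ae_of_all _ fun w => Real.rpow_nonneg (sq_nonneg w) _
    have hgh : (fun w => (1 - w ^ 2) ^ (α / (α + 1)) * f w)
        =ᵐ[volume.restrict S] fun w => g w * h w := by
      filter_upwards [hae_mem, hae_ne] with w hwS hw0
      have hw : w ∈ Ioo (-1:ℝ) 1 := hSsub hwS
      have h1w : (0:ℝ) ≤ 1 - w^2 := hIoo1 w hw
      have hw2 : (0:ℝ) < w^2 := by positivity
      show (1 - w ^ 2) ^ (α / (α + 1)) * f w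
          = (w ^ 2 * (1 - w ^ 2) ^ α * f w ^ (α + 1)) ^ (1/(α+1)) * (w^2) ^ (-(1/(α+1)))
      rw [Real.mul_rpow (mul_nonneg (sq_nonneg w) (Real.rpow_nonneg h1w _))
          (Real.rpow_nonneg (hfnonneg w) _),
        Real.mul_rpow (sq_nonneg w) (Real.rpow_nonneg h1w _),
        ← Real.rpow_mul h1w, ← Real.rpow_mul (hfnonneg w),
        show (α+1)*(1/(α+1)) = 1 by field_simp,
        show α*(1/(α+1)) = α/(α+1) by ring, Real.rpow_one]
      have hcanc : (w^2) ^ ((1:ℝ)/(α+1)) * (w^2) ^ (-(1/(α+1))) = 1 := by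
        rw [← Real.rpow_add hw2]; simp
      linear_combination (-((1 - w^2) ^ (α/(α+1)) * f w)) * hcanc
    have hgmeas : AEStronglyMeasurable g (volume.restrict S) := by
      apply Measurable.aestronglyMeasurable; fun_prop
    have hhmeas : AEStronglyMeasurable h (volume.restrict S) := by
      apply Measurable.aestronglyMeasurable; fun_prop
    have hGint : Integrable G (volume.restrict S) := hfα.mono_set hSsub
    have hgp_ae : (fun w => g w ^ (α+1)) =ᵐ[volume.restrict S] G := by
      filter_upwards [hae_mem] with w hw
      show (G w ^ ((1:ℝ)/(α+1))) ^ (α+1) = G w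
      rw [← Real.rpow_mul (hnG w (hSsub hw)), show (1/(α+1))*(α+1) = 1 by field_simp,
        Real.rpow_one]
    have hFint : Integrable (fun w => (w^2 : ℝ) ^ (-(1/α))) (volume.restrict S) :=
      (auxF α hα m hm).1.mono_set hSsub'
    have hhq : (fun w => h w ^ ((α+1)/α)) = fun w => (w^2 : ℝ) ^ (-(1/α)) := by
      funext w
      show ((w^2) ^ (-(1/(α+1)))) ^ ((α+1)/α) = (w^2 : ℝ) ^ (-(1/α))
      rw [← Real.rpow_mul (sq_nonneg w)]
      congr 1
      field_simp
    have hpq : Real.HolderConjugate (α+1) ((α+1)/α) := by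
      rw [Real.holderConjugate_iff]
      constructor
      · linarith
      · rw [inv_div]; field_simp; ring
    have hgMem : MemLp g (ENNReal.ofReal (α+1)) (volume.restrict S) := by
      have hq0 : ENNReal.ofReal (α+1) ≠ 0 := by
        simp [ENNReal.ofReal_eq_zero]; linarith
      have hqt : ENNReal.ofReal (α+1) ≠ ⊤ := ENNReal.ofReal_ne_top
      have := (memLp_norm_rpow_iff (p := ENNReal.ofReal (α+1)) (q := ENNReal.ofReal (α+1)) hgmeas hq0 hqt)
      rw [ENNReal.div_self hq0 hqt, ENNReal.toReal_ofReal (by linarith)] at this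
      apply this.1
      rw [memLp_one_iff_integrable]
      apply hGint.congr
      symm
      filter_upwards [hgp_ae, hgnn] with w h1 h2
      show ‖g w‖ ^ (α+1) = G w
      rw [Real.norm_of_nonneg h2]
      exact h1
    have hhMem : MemLp h (ENNReal.ofReal ((α+1)/α)) (volume.restrict S) := by
      have hq0 : ENNReal.ofReal ((α+1)/α) ≠ 0 := by
        simp [ENNReal.ofReal_eq_zero]; positivity
      have hqt : ENNReal.ofReal ((α+1)/α) ≠ ⊤ := ENNReal.ofReal_ne_top
      have := (memLp_norm_rpow_iff (p := ENNReal.ofReal ((α+1)/α)) (q := ENNReal.ofReal ((α+1)/α)) hhmeas hq0 hqt)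
      rw [ENNReal.div_self hq0 hqt, ENNReal.toReal_ofReal (by positivity)] at this
      apply this.1
      rw [memLp_one_iff_integrable]
      apply hFint.congr
      symm
      apply ae_of_all
      intro w
      show ‖h w‖ ^ ((α+1)/α) = ((w^2 : ℝ) ^ (-(1/α)))
      rw [Real.norm_of_nonneg (Real.rpow_nonneg (sq_nonneg w) _)]
      exact congrFun hhq w
    have hHolder := integral_mul_le_Lp_mul_Lq_of_nonneg hpq hgnn hhnn hgMem hhMem
    -- rewrite both sides
    have hL : (∫ w in S, (1 - w ^ 2) ^ (α / (α + 1)) * f w)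
        = ∫ w in S, g w * h w := integral_congr_ae hgh
    have hGle : (∫ w in S, g w ^ (α+1)) ≤ ∫ w in Ioo (-1:ℝ) 1, G w := by
      rw [integral_congr_ae hgp_ae]
      apply setIntegral_mono_set hfα
      · exact (ae_restrict_iff' measurableSet_Ioo).2 (ae_of_all _ hnG)
      · exact HasSubset.Subset.eventuallyLE hSsub
    have hG0 : 0 ≤ ∫ w in S, g w ^ (α+1) := by
      rw [integral_congr_ae hgp_ae]
      exact setIntegral_nonneg hSmeas fun w hw => hnG w (hSsub hw)
    have hFle : (∫ w in S, h w ^ ((α+1)/α)) ≤ 2*α/(α-2) * m ^ ((α-2)/α) := by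
      rw [hhq, ← (auxF α hα m hm).2]
      apply setIntegral_mono_set (auxF α hα m hm).1
      · exact ae_of_all _ fun w => Real.rpow_nonneg (sq_nonneg w) _
      · exact HasSubset.Subset.eventuallyLE hSsub'
    have hF0 : 0 ≤ ∫ w in S, h w ^ ((α+1)/α) := by
      rw [hhq]
      exact setIntegral_nonneg hSmeas fun w _ => Real.rpow_nonneg (sq_nonneg w) _
    rw [hL]
    refine hHolder.trans ?_
    have hq_inv : 1/((α+1)/α) = α/(α+1) := one_div_div _ _
    rw [hq_inv]
    have hB0 : (0:ℝ) ≤ ∫ w in Ioo (-1:ℝ) 1, G w :=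
      setIntegral_nonneg measurableSet_Ioo hnG
    have step1 : (∫ w in S, g w ^ (α+1)) ^ (1/(α+1)) * (∫ w in S, h w ^ ((α+1)/α)) ^ (α/(α+1))
        ≤ (∫ w in Ioo (-1:ℝ) 1, G w) ^ (1/(α+1))
            * (2*α/(α-2) * m ^ ((α-2)/α)) ^ (α/(α+1)) := by
      apply mul_le_mul
      · exact Real.rpow_le_rpow hG0 hGle (by positivity)
      · exact Real.rpow_le_rpow hF0 hFle (by positivity)
      · exact Real.rpow_nonneg hF0 _
      · exact Real.rpow_nonneg hB0 _
    refine step1.trans ?_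
    have step2 : (2*α/(α-2) * m ^ ((α-2)/α)) ^ (α/(α+1))
        = (2 * α / (α - 2)) ^ (α / (α + 1)) * m ^ ((α-2)/(α+1)) := by
      rw [Real.mul_rpow (by positivity) (Real.rpow_nonneg hm.le _),
        ← Real.rpow_mul hm.le]
      congr 1
      field_simp
    rw [step2]
    have step3 : m ^ ((α-2)/(α+1)) ≤ ε ^ ((α-2)/(α+1)) :=
      Real.rpow_le_rpow hm.le (min_le_left _ _) (div_nonneg (by linarith) (by linarith))
    calc (∫ w in Ioo (-1:ℝ) 1, G w) ^ (1/(α+1))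
          * ((2 * α / (α - 2)) ^ (α / (α + 1)) * m ^ ((α-2)/(α+1)))
        ≤ (∫ w in Ioo (-1:ℝ) 1, G w) ^ (1/(α+1))
          * ((2 * α / (α - 2)) ^ (α / (α + 1)) * ε ^ ((α-2)/(α+1))) := by
          apply mul_le_mul_of_nonneg_left _ (Real.rpow_nonneg hB0 _)
          exact mul_le_mul_of_nonneg_left step3 (Real.rpow_nonneg (by positivity) _)
      _ = (2 * α / (α - 2)) ^ (α / (α + 1)) * ε ^ ((α-2)/(α+1))
          * (∫ w in Ioo (-1:ℝ) 1, G w) ^ (1/(α+1)) := by ring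
  linarith [hsplit, hS, hT]

/-- Inequality (eq:inRop) of the paper: optimized interpolation bound for
`∫ H^(α/(α+1)) f dw`, where `H(w) = 1 - w²`, `c_α = (2α/(α-2))^(α/(α+1))` and
`d_α = (2(α+1)/(c_α(α-2)))^(1/3)`. -/
theorem optimized_interpolation_bound_alpha
    (α : ℝ) (f : ℝ → ℝ) (c d : ℝ)
    (hα : 2 < α)
    (hc : c = (2 * α / (α - 2)) ^ (α / (α + 1)))
    (hd : d = (2 * (α + 1) / (c * (α - 2))) ^ ((1:ℝ) / 3))
    (hfnonneg : ∀ w, 0 ≤ f w)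
    (hfmeas : Measurable f)
    (hf1 : IntegrableOn (fun w => (1 - w ^ 2) ^ (α / (α + 1)) * f w) (Ioo (-1:ℝ) 1))
    (hf2 : IntegrableOn (fun w => w ^ 2 * (1 - w ^ 2) ^ (α / (α + 1)) * f w) (Ioo (-1:ℝ) 1))
    (hfα : IntegrableOn (fun w => w ^ 2 * (1 - w ^ 2) ^ α * f w ^ (α + 1)) (Ioo (-1:ℝ) 1)) :
    ∫ w in Ioo (-1:ℝ) 1, (1 - w ^ 2) ^ (α / (α + 1)) * f w
      ≤ (c * d + d⁻¹ ^ 2)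
        * (∫ w in Ioo (-1:ℝ) 1, w ^ 2 * (1 - w ^ 2) ^ α * f w ^ (α + 1)) ^ (2 / (3 * α))
        * (∫ w in Ioo (-1:ℝ) 1, w ^ 2 * (1 - w ^ 2) ^ (α / (α + 1)) * f w)
            ^ ((α - 2) / (3 * α)) := by
  have hα0 : (0:ℝ) < α := by linarith
  have hα1 : (0:ℝ) < α + 1 := by linarith
  have hα2 : (0:ℝ) < α - 2 := by linarith
  have hcpos : 0 < c := by rw [hc]; exact Real.rpow_pos_of_pos (by positivity) _
  have hd1 : 1 ≤ d := aux_d_ge_one α c d hα hc hd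
  have hd0 : 0 < d := by linarith
  have hIoo1 : ∀ w ∈ Ioo (-1:ℝ) 1, (0:ℝ) < 1 - w^2 := by
    intro w hw; nlinarith [hw.1, hw.2]
  have hnG : ∀ w ∈ Ioo (-1:ℝ) 1, 0 ≤ w ^ 2 * (1 - w ^ 2) ^ α * f w ^ (α + 1) := fun w hw =>
    mul_nonneg (mul_nonneg (sq_nonneg w) (Real.rpow_nonneg (hIoo1 w hw).le _))
      (Real.rpow_nonneg (hfnonneg w) _)
  have hn2 : ∀ w ∈ Ioo (-1:ℝ) 1, 0 ≤ w ^ 2 * (1 - w ^ 2) ^ (α / (α + 1)) * f w := fun w hw =>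
    mul_nonneg (mul_nonneg (sq_nonneg w) (Real.rpow_nonneg (hIoo1 w hw).le _)) (hfnonneg w)
  have hae_mem : ∀ᵐ w ∂(volume.restrict (Ioo (-1:ℝ) 1)), w ∈ Ioo (-1:ℝ) 1 :=
    ae_restrict_mem measurableSet_Ioo
  have hae_ne : ∀ᵐ w ∂(volume.restrict (Ioo (-1:ℝ) 1)), w ≠ 0 := by
    refine ae_restrict_of_ae ?_
    rw [ae_iff]
    have : {a : ℝ | ¬ a ≠ 0} = {0} := by ext w; simp
    rw [this]
    exact measure_singleton 0
  have hB0 : 0 ≤ ∫ w in Ioo (-1:ℝ) 1, w ^ 2 * (1 - w ^ 2) ^ α * f w ^ (α + 1) :=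
    setIntegral_nonneg measurableSet_Ioo hnG
  have hC0 : 0 ≤ ∫ w in Ioo (-1:ℝ) 1, w ^ 2 * (1 - w ^ 2) ^ (α / (α + 1)) * f w :=
    setIntegral_nonneg measurableSet_Ioo hn2
  -- degenerate case machinery: if f vanishes a.e. then LHS = 0
  have hzero : ∀ᵐ w ∂(volume.restrict (Ioo (-1:ℝ) 1)),
      (w ∈ Ioo (-1:ℝ) 1 → w ≠ 0 → f w = 0) →
      (1 - w ^ 2) ^ (α / (α + 1)) * f w = 0 := by
    filter_upwards [hae_mem, hae_ne] with w h1 h2 h3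
    rw [h3 h1 h2, mul_zero]
  rcases eq_or_lt_of_le hB0 with hB | hBpos
  · -- B = 0
    have hGz : (fun w => w ^ 2 * (1 - w ^ 2) ^ α * f w ^ (α + 1))
        =ᵐ[volume.restrict (Ioo (-1:ℝ) 1)] 0 := by
      refine (integral_eq_zero_iff_of_nonneg_ae ?_ hfα).1 hB.symm
      filter_upwards [hae_mem] with w hw
      exact hnG w hw
    have hfz : ∀ᵐ w ∂(volume.restrict (Ioo (-1:ℝ) 1)),
        (1 - w ^ 2) ^ (α / (α + 1)) * f w = 0 := by
      filter_upwards [hGz, hae_mem, hae_ne] with w h1 h2 h3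
      have hwpos : 0 < w ^ 2 * (1 - w ^ 2) ^ α := by
        have := hIoo1 w h2
        have hw2 : (0:ℝ) < w^2 := by positivity
        positivity
      have hfw : f w ^ (α+1) = 0 := by
        have h1' : w ^ 2 * (1 - w ^ 2) ^ α * f w ^ (α + 1) = 0 := h1
        rcases mul_eq_zero.mp h1' with h | h
        · exact absurd h hwpos.ne'
        · exact h
      have : f w = 0 := ((Real.rpow_eq_zero (hfnonneg w) (by linarith)).mp hfw)
      rw [this, mul_zero]
    have hA : (∫ w in Ioo (-1:ℝ) 1, (1 - w ^ 2) ^ (α / (α + 1)) * f w) = 0 := by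
      rw [integral_congr_ae hfz]
      simp
    rw [hA, ← hB, Real.zero_rpow (by positivity : (2:ℝ)/(3*α) ≠ 0)]
    rw [mul_zero, zero_mul]
  rcases eq_or_lt_of_le hC0 with hC | hCpos
  · -- C = 0
    have hGz : (fun w => w ^ 2 * (1 - w ^ 2) ^ (α / (α + 1)) * f w)
        =ᵐ[volume.restrict (Ioo (-1:ℝ) 1)] 0 := by
      refine (integral_eq_zero_iff_of_nonneg_ae ?_ hf2).1 hC.symm
      filter_upwards [hae_mem] with w hw
      exact hn2 w hw
    have hfz : ∀ᵐ w ∂(volume.restrict (Ioo (-1:ℝ) 1)),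
        (1 - w ^ 2) ^ (α / (α + 1)) * f w = 0 := by
      filter_upwards [hGz, hae_mem, hae_ne] with w h1 h2 h3
      have hwpos : 0 < w ^ 2 * (1 - w ^ 2) ^ (α / (α + 1)) := by
        have := hIoo1 w h2
        have hw2 : (0:ℝ) < w^2 := by positivity
        positivity
      have hfw : f w = 0 := by
        have h1' : w ^ 2 * (1 - w ^ 2) ^ (α / (α + 1)) * f w = 0 := h1
        rcases mul_eq_zero.mp h1' with h | h
        · exact absurd h hwpos.ne'
        · exact h
      rw [hfw, mul_zero]
    have hA : (∫ w in Ioo (-1:ℝ) 1, (1 - w ^ 2) ^ (α / (α + 1)) * f w) = 0 := by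
      rw [integral_congr_ae hfz]
      simp
    have hq : ((α - 2) / (3 * α)) ≠ 0 := by positivity
    rw [hA, ← hC, Real.zero_rpow hq, mul_zero]
  · -- main case
    set B := ∫ w in Ioo (-1:ℝ) 1, w ^ 2 * (1 - w ^ 2) ^ α * f w ^ (α + 1) with hBdef
    set C := ∫ w in Ioo (-1:ℝ) 1, w ^ 2 * (1 - w ^ 2) ^ (α / (α + 1)) * f w with hCdef
    have hε : 0 < d * (C ^ ((α+1)/(3*α)) * B ^ (-(1/(3*α)))) := by
      have h1 : 0 < C ^ ((α+1)/(3*α)) := Real.rpow_pos_of_pos hCpos _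
      have h2 : 0 < B ^ (-(1/(3*α))) := Real.rpow_pos_of_pos hBpos _
      positivity
    have h1 := aux_split α f hα hfnonneg hfmeas hf1 hf2 hfα
      (d * (C ^ ((α+1)/(3*α)) * B ^ (-(1/(3*α))))) hε
    rw [← hc] at h1
    have h2 := aux_opt α c d B C hα hcpos hd1 hBpos hCpos
    linarith
end

section
/- Let γ > 0, a ≥ 0, Λ > 0 and T > 0, and let E : [0,T] → ℝ be differentiable with E(t) > 0 for all t ∈ [0,T]. Assume E′(t) ≤ a − Λ E(t)^{−γ} for all t ∈ [0,T] and Λ > a · E(0)^γ. Then for every t ∈ [0,T], E(t)^{γ+1} ≤ E(0)^{γ+1} − (γ+1)(Λ − a E(0)^γ) t; in particular E is strictly decreasing and cannot remain positive beyond the time t̄ = E(0)^{γ+1} / ((γ+1)(Λ − a E(0)^γ)). -/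
open Set

/-- Differential inequality comparison used for finite-time annihilation of the
second moment: if `E' ≤ a - Λ E^(-γ)` with `Λ > a E(0)^γ`, then
`E(t)^(γ+1) ≤ E(0)^(γ+1) - (γ+1)(Λ - a E(0)^γ) t`; in particular `E` is
strictly decreasing and cannot remain positive beyond
`t̄ = E(0)^(γ+1)/((γ+1)(Λ - a E(0)^γ))`. -/
theorem finite_time_annihilation
    (γ a Λ T : ℝ) (E E' : ℝ → ℝ)
    (hγ : 0 < γ) (ha : 0 ≤ a) (hΛ : 0 < Λ) (hT : 0 < T)
    (hderiv : ∀ t ∈ Icc (0:ℝ) T, HasDerivAt E (E' t) t)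
    (hpos : ∀ t ∈ Icc (0:ℝ) T, 0 < E t)
    (hineq : ∀ t ∈ Icc (0:ℝ) T, E' t ≤ a - Λ * (E t) ^ (-γ))
    (hΛa : a * (E 0) ^ γ < Λ) :
    (∀ t ∈ Icc (0:ℝ) T,
        (E t) ^ (γ + 1) ≤ (E 0) ^ (γ + 1) - (γ + 1) * (Λ - a * (E 0) ^ γ) * t)
      ∧ StrictAntiOn E (Icc (0:ℝ) T)
      ∧ T < (E 0) ^ (γ + 1) / ((γ + 1) * (Λ - a * (E 0) ^ γ)) := by
  have h0T : (0:ℝ) ∈ Icc (0:ℝ) T := ⟨le_refl 0, hT.le⟩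
  have hE0 : 0 < E 0 := hpos 0 h0T
  have hE0γ : 0 < (E 0) ^ γ := Real.rpow_pos_of_pos hE0 γ
  -- the key negative constant
  have hc : a - Λ * (E 0) ^ (-γ) < 0 := by
    rw [Real.rpow_neg hE0.le, sub_neg, ← div_eq_mul_inv, lt_div_iff₀ hE0γ]
    exact hΛa
  -- continuity
  have hcont : ContinuousOn E (Icc (0:ℝ) T) := fun t ht =>
    (hderiv t ht).continuousAt.continuousWithinAt
  -- Step 1 : E t ≤ E 0 on [0, T]
  have hle : ∀ t ∈ Icc (0:ℝ) T, E t ≤ E 0 := by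
    by_contra hcon
    push_neg at hcon
    obtain ⟨t, ht, htE⟩ := hcon
    have ht0 : 0 ≤ t := ht.1
    set A : Set ℝ := {r | r ∈ Icc (0:ℝ) t ∧ E r ≤ E 0} with hA
    have hAsub : A ⊆ Icc (0:ℝ) T := fun r hr =>
      ⟨hr.1.1, hr.1.2.trans ht.2⟩
    have hAclosed : IsClosed A := by
      have : A = Icc (0:ℝ) t ∩ (Icc (0:ℝ) t ∩ E ⁻¹' (Iic (E 0))) := by
        ext r; simp [hA, and_assoc]
        tauto
      rw [this]
      exact isClosed_Icc.inter
        ((hcont.mono (Icc_subset_Icc le_rfl ht.2)).preimage_isClosed_of_isClosed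
          isClosed_Icc isClosed_Iic)
    have hAne : A.Nonempty := ⟨0, ⟨le_refl 0, ht0⟩, le_rfl⟩
    have hAcomp : IsCompact A :=
      (isCompact_Icc (a := (0:ℝ)) (b := t)).of_isClosed_subset hAclosed fun r hr => hr.1
    set s := sSup A with hs
    have hsA : s ∈ A := hAcomp.sSup_mem hAne
    have hsT : s ∈ Icc (0:ℝ) T := hAsub hsA
    have hst : s < t := by
      rcases lt_or_eq_of_le hsA.1.2 with h | h
      · exact h
      · exact absurd (h ▸ hsA.2) (not_le.mpr htE)
    have habove : ∀ r ∈ Ioc s t, E 0 < E r := by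
      intro r hr
      by_contra hge
      push_neg at hge
      have : r ∈ A := ⟨⟨hsA.1.1.trans hr.1.le, hr.2⟩, hge⟩
      exact absurd (le_csSup hAcomp.bddAbove this) (not_le.mpr hr.1)
    have hEs : E s = E 0 := by
      refine le_antisymm hsA.2 ?_
      have htend : Filter.Tendsto E (nhdsWithin s (Ioi s)) (nhds (E s)) :=
        ((hderiv s hsT).continuousAt.continuousWithinAt).tendsto
      refine ge_of_tendsto htend ?_
      filter_upwards [Ioc_mem_nhdsGT_of_mem ⟨le_rfl, hst⟩] with r hr
      exact (habove r hr).le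
    -- derivative at s is negative
    have hds : E' s < 0 := by
      have := hineq s hsT
      rw [hEs] at this
      exact lt_of_le_of_lt this hc
    have hslope : Filter.Tendsto (slope E s) (nhdsWithin s {s}ᶜ) (nhds (E' s)) :=
      hasDerivAt_iff_tendsto_slope.mp (hderiv s hsT)
    have hslope' : Filter.Tendsto (slope E s) (nhdsWithin s (Ioi s)) (nhds (E' s)) :=
      hslope.mono_left (nhdsWithin_mono s fun r hr => ne_of_gt hr)
    have hev : ∀ᶠ r in nhdsWithin s (Ioi s), slope E s r < 0 :=
      hslope' (Iio_mem_nhds hds)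
    have hev2 : ∀ᶠ r in nhdsWithin s (Ioi s), r ∈ Ioc s t :=
      Ioc_mem_nhdsGT_of_mem ⟨le_rfl, hst⟩
    obtain ⟨r, hr1, hr2⟩ := (hev.and hev2).exists
    have hrs : s < r := hr2.1
    have : E r - E s < 0 := by
      have := hr1
      rw [slope_def_field] at this
      have h2 : (E r - E s) / (r - s) < 0 := this
      by_contra hge
      push_neg at hge
      exact absurd (div_nonneg hge (by linarith)) (not_le.mpr h2)
    rw [hEs] at this
    exact absurd (habove r hr2) (by linarith)
  -- E' is negative on Icc
  have hneg : ∀ x ∈ Icc (0:ℝ) T, E' x < 0 := by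
    intro x hx
    have h1 : (E 0) ^ (-γ) ≤ (E x) ^ (-γ) :=
      Real.rpow_le_rpow_of_nonpos (hpos x hx) (hle x hx) (by linarith)
    have := hineq x hx
    nlinarith
  -- Step 2 : strict antitonicity
  have hanti : StrictAntiOn E (Icc (0:ℝ) T) := by
    refine strictAntiOn_of_deriv_neg (convex_Icc 0 T) hcont ?_
    intro x hx
    rw [interior_Icc] at hx
    have hx' : x ∈ Icc (0:ℝ) T := Ioo_subset_Icc_self hx
    rw [(hderiv x hx').deriv]
    exact hneg x hx'
  -- Step 3 : the main inequality via the auxiliary function F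
  set K : ℝ := (γ + 1) * (Λ - a * (E 0) ^ γ) with hK
  have hKpos : 0 < K := mul_pos (by linarith) (by linarith)
  set F : ℝ → ℝ := fun t => E t ^ (γ + 1) + K * t with hF
  have hFderiv : ∀ x ∈ Icc (0:ℝ) T,
      HasDerivAt F (E' x * (γ + 1) * (E x) ^ γ + K) x := by
    intro x hx
    have h1 : HasDerivAt (fun t => E t ^ (γ + 1))
        (E' x * (γ + 1) * (E x) ^ (γ + 1 - 1)) x :=
      (hderiv x hx).rpow_const (Or.inl (hpos x hx).ne')
    have h2 : HasDerivAt (fun t : ℝ => K * t) K x := by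
      simpa using (hasDerivAt_id x).const_mul K
    have := h1.add h2
    rw [add_sub_cancel_right] at this; exact this
  have hFanti : AntitoneOn F (Icc (0:ℝ) T) := by
    refine antitoneOn_of_deriv_nonpos (convex_Icc 0 T) ?_ ?_ ?_
    · intro x hx
      exact (hFderiv x hx).continuousAt.continuousWithinAt
    · intro x hx
      rw [interior_Icc] at hx
      exact ((hFderiv x (Ioo_subset_Icc_self hx)).differentiableAt).differentiableWithinAt
    · intro x hx
      rw [interior_Icc] at hx
      have hx' : x ∈ Icc (0:ℝ) T := Ioo_subset_Icc_self hx
      rw [(hFderiv x hx').deriv]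
      have hEx : 0 < E x := hpos x hx'
      have hExγ : 0 < (E x) ^ γ := Real.rpow_pos_of_pos hEx γ
      have hmul : (E x) ^ (-γ) * (E x) ^ γ = 1 := by
        rw [← Real.rpow_add hEx]; simp
      have h1 : E' x * (γ + 1) * (E x) ^ γ ≤
          (a - Λ * (E x) ^ (-γ)) * (γ + 1) * (E x) ^ γ := by
        have := hineq x hx'
        have h2 : 0 < (γ + 1) * (E x) ^ γ := mul_pos (by linarith) hExγ
        nlinarith
      have h3 : (a - Λ * (E x) ^ (-γ)) * (γ + 1) * (E x) ^ γ =
          (γ + 1) * (a * (E x) ^ γ - Λ) := by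
        linear_combination (-(γ + 1) * Λ) * hmul
      have h4 : (E x) ^ γ ≤ (E 0) ^ γ :=
        Real.rpow_le_rpow hEx.le (hle x hx') hγ.le
      rw [hK]
      nlinarith [mul_nonneg (mul_nonneg (show (0:ℝ) ≤ γ + 1 by linarith) ha)
        (sub_nonneg.mpr h4), h1, h3]
  have hmain : ∀ t ∈ Icc (0:ℝ) T,
      (E t) ^ (γ + 1) ≤ (E 0) ^ (γ + 1) - K * t := by
    intro t ht
    have := hFanti h0T ht ht.1
    simp only [hF, mul_zero, add_zero] at this
    linarith
  refine ⟨hmain, hanti, ?_⟩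
  have hT' : T ∈ Icc (0:ℝ) T := ⟨hT.le, le_rfl⟩
  have h1 := hmain T hT'
  have h2 : 0 < (E T) ^ (γ + 1) := Real.rpow_pos_of_pos (hpos T hT') _
  rw [lt_div_iff₀ hKpos]
  nlinarith
end

section
/- Let λ* ∈ ℝ, β* ≥ 0, α > 0, and let f : [0,∞) × [−1,1] → [0,∞) be a smooth solution of the rescaled Fokker–Planck equation ∂_τ f(τ,w) = ∂_w [ w f(τ,w)(λ* + β* H(w)^α f(τ,w)^α) + H(w) ∂_w f(τ,w) ] on (0,∞) × (−1,1), C¹ in τ and C² in w up to the boundary, satisfying the no-flux boundary conditions that the flux w f(λ* + β* H^α f^α) + H ∂_w f vanishes at w = ±1, and such that all integrals below are finite and differentiation under the integral sign is justified. Then d/dτ ∫_{−1}^1 f(τ,w)² dw = −2 ∫_{−1}^1 H(w) |∂_w f(τ,w)|² dw + λ* ∫_{−1}^1 f(τ,w)² dw + (2β*/(α+2)) ∫_{−1}^1 H(w)^{α−1} (1 − (1+2α) w²) f(τ,w)^{α+2} dw. -/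
open MeasureTheory Set

lemma aux_rpow_succ {x : ℝ} (hx : 0 ≤ x) {p : ℝ} (hp : p + 1 ≠ 0) :
    x ^ (p + 1) = x ^ p * x := by
  rcases eq_or_lt_of_le hx with h | h
  · rw [← h, Real.zero_rpow hp, mul_zero]
  · rw [Real.rpow_add_one (ne_of_gt h)]

lemma aux_int_rpow {r : ℝ} (hr : -1 < r) :
    IntegrableOn (fun w : ℝ => (1 - w ^ 2) ^ r) (Ioo (-1 : ℝ) 1) := by
  have h0 : IntervalIntegrable (fun x : ℝ => x ^ r) volume 0 2 :=
    intervalIntegral.intervalIntegrable_rpow' hr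
  have h1 : IntegrableOn (fun w : ℝ => (1 - w) ^ r) (Ioo (-1 : ℝ) 1) := by
    have := (h0.comp_sub_left 1)
    have h2 : IntervalIntegrable (fun x : ℝ => (1 - x) ^ r) volume 1 (-1) := by
      norm_num at this; exact this
    exact (intervalIntegrable_iff_integrableOn_Ioo_of_le (by norm_num)).1 h2.symm
  have h2 : IntegrableOn (fun w : ℝ => (1 + w) ^ r) (Ioo (-1 : ℝ) 1) := by
    have := (h0.comp_add_left 1)
    have h2 : IntervalIntegrable (fun x : ℝ => (1 + x) ^ r) volume (-1) 1 := by
      norm_num at this; exact this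
    exact (intervalIntegrable_iff_integrableOn_Ioo_of_le (by norm_num)).1 h2
  set C : ℝ := max 1 (2 ^ r) with hC
  have hC0 : 0 ≤ C := le_trans zero_le_one (le_max_left _ _)
  have hmeas : AEStronglyMeasurable (fun w : ℝ => (1 - w ^ 2) ^ r)
      (volume.restrict (Ioo (-1 : ℝ) 1)) := by
    refine ContinuousOn.aestronglyMeasurable ?_ measurableSet_Ioo
    refine ContinuousOn.rpow_const ?_ ?_
    · exact (continuous_const.sub (continuous_pow 2)).continuousOn
    · intro x hx
      exact Or.inl (by nlinarith [hx.1, hx.2])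
  refine Integrable.mono' (((h1.add h2).const_mul C)) hmeas ?_
  filter_upwards [ae_restrict_mem measurableSet_Ioo] with w hw
  have hw1 : (0:ℝ) < 1 - w := by nlinarith [hw.1, hw.2]
  have hw2 : (0:ℝ) < 1 + w := by nlinarith [hw.1, hw.2]
  have hsplit : (1 - w ^ 2) ^ r = (1 - w) ^ r * (1 + w) ^ r := by
    rw [← Real.mul_rpow hw1.le hw2.le]; ring_nf
  have key : ∀ x y : ℝ, 0 < x → x ≤ 2 → 0 < y → y ≤ 2 → 1 ≤ x ∨ 1 ≤ y →
      x ^ r * y ^ r ≤ C * (x ^ r + y ^ r) := by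
    intro x y hx hx2 hy hy2 hxy
    rcases hxy with h | h
    · have : x ^ r ≤ C := by
        rcases le_or_gt 0 r with hr0 | hr0
        · exact le_trans (Real.rpow_le_rpow hx.le hx2 hr0) (le_max_right _ _)
        · exact le_trans (Real.rpow_le_one_of_one_le_of_nonpos h hr0.le) (le_max_left _ _)
      calc x ^ r * y ^ r ≤ C * y ^ r :=
            mul_le_mul_of_nonneg_right this (Real.rpow_nonneg hy.le r)
        _ ≤ C * (x ^ r + y ^ r) := by
            have := Real.rpow_nonneg hx.le r; nlinarith
    · have : y ^ r ≤ C := by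
        rcases le_or_gt 0 r with hr0 | hr0
        · exact le_trans (Real.rpow_le_rpow hy.le hy2 hr0) (le_max_right _ _)
        · exact le_trans (Real.rpow_le_one_of_one_le_of_nonpos h hr0.le) (le_max_left _ _)
      calc x ^ r * y ^ r ≤ x ^ r * C :=
            mul_le_mul_of_nonneg_left this (Real.rpow_nonneg hx.le r)
        _ ≤ C * (x ^ r + y ^ r) := by
            have := Real.rpow_nonneg hy.le r; nlinarith
  rw [Real.norm_eq_abs,
    abs_of_nonneg (Real.rpow_nonneg (by nlinarith [hw.1, hw.2] : (0:ℝ) ≤ 1 - w^2) r), hsplit]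
  rcases le_or_gt 0 w with h | h
  · exact key _ _ hw1 (by linarith) hw2 (by linarith) (Or.inr (by linarith))
  · exact key _ _ hw1 (by linarith) hw2 (by linarith) (Or.inl (by linarith))


/-- The flux of the rescaled Fokker–Planck equation for consensus dynamics:
`J(τ,w) = w f (λ* + β* H^α f^α) + H ∂_w f`, with `H(w) = 1 - w²`. -/
noncomputable def rescaledFlux (lams betas alpha : ℝ) (f : ℝ → ℝ → ℝ) (t w : ℝ) : ℝ :=
  w * f t w * (lams + betas * (1 - w ^ 2) ^ alpha * f t w ^ alpha)
    + (1 - w ^ 2) * deriv (f t) w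

/-- Evolution of the `L²`-norm for a smooth nonnegative solution of the
rescaled Fokker–Planck equation with no-flux boundary conditions:
`d/dτ ∫ f² = −2 ∫ H (∂_w f)² + λ* ∫ f² + (2β*/(α+2)) ∫ H^(α−1)(1−(1+2α)w²) f^(α+2)`. -/
theorem l2_norm_evolution
    (lams betas alpha : ℝ) (f : ℝ → ℝ → ℝ)
    (hbetas : 0 ≤ betas) (halpha : 0 < alpha)
    (hnonneg : ∀ t w, 0 ≤ f t w)
    (hC1t : ∀ w ∈ Icc (-1:ℝ) 1, ContDiffOn ℝ 1 (fun t => f t w) (Ici 0))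
    (hC2w : ∀ t ∈ Ici (0:ℝ), ContDiffOn ℝ 2 (f t) (Icc (-1) 1))
    (hpde : ∀ t ∈ Ioi (0:ℝ), ∀ w ∈ Ioo (-1:ℝ) 1,
      deriv (fun s => f s w) t = deriv (rescaledFlux lams betas alpha f t) w)
    (hnoflux : ∀ t ∈ Ioi (0:ℝ),
      rescaledFlux lams betas alpha f t 1 = 0 ∧ rescaledFlux lams betas alpha f t (-1) = 0)
    (hint1 : ∀ t ∈ Ici (0:ℝ), IntegrableOn (f t) (Ioo (-1:ℝ) 1))
    (hint2 : ∀ t ∈ Ici (0:ℝ), IntegrableOn (fun w => (f t w) ^ 2) (Ioo (-1:ℝ) 1))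
    (hint3 : ∀ t ∈ Ici (0:ℝ),
      IntegrableOn (fun w => (1 - w ^ 2) * (deriv (f t) w) ^ 2) (Ioo (-1:ℝ) 1))
    (hint4 : ∀ t ∈ Ici (0:ℝ),
      IntegrableOn
        (fun w => (1 - w ^ 2) ^ (alpha - 1) * (1 - (1 + 2 * alpha) * w ^ 2)
          * f t w ^ (alpha + 2)) (Ioo (-1:ℝ) 1))
    (hdui : ∀ t ∈ Ioi (0:ℝ),
      HasDerivAt (fun s => ∫ w in Ioo (-1:ℝ) 1, (f s w) ^ 2)
        (∫ w in Ioo (-1:ℝ) 1, deriv (fun s => (f s w) ^ 2) t) t) :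
    ∀ t ∈ Ioi (0:ℝ),
      HasDerivAt (fun s => ∫ w in Ioo (-1:ℝ) 1, (f s w) ^ 2)
        (-2 * (∫ w in Ioo (-1:ℝ) 1, (1 - w ^ 2) * (deriv (f t) w) ^ 2)
          + lams * (∫ w in Ioo (-1:ℝ) 1, (f t w) ^ 2)
          + (2 * betas / (alpha + 2))
            * ∫ w in Ioo (-1:ℝ) 1, (1 - w ^ 2) ^ (alpha - 1)
                * (1 - (1 + 2 * alpha) * w ^ 2) * f t w ^ (alpha + 2)) t := by
  intro t ht
  have ht0 : (0:ℝ) < t := ht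
  have htI : t ∈ Ici (0:ℝ) := le_of_lt ht0
  have hC2 : ContDiffOn ℝ 2 (f t) (Icc (-1:ℝ) 1) := hC2w t htI
  have hud : UniqueDiffOn ℝ (Icc (-1:ℝ) 1) := uniqueDiffOn_Icc (by norm_num)
  set F1 : ℝ → ℝ := derivWithin (f t) (Icc (-1:ℝ) 1) with hF1def
  set F2 : ℝ → ℝ := derivWithin F1 (Icc (-1:ℝ) 1) with hF2def
  have hC1' : ContDiffOn ℝ 1 F1 (Icc (-1:ℝ) 1) := hC2.derivWithin hud (by norm_num)
  have hF0c : ContinuousOn (f t) (Icc (-1:ℝ) 1) := hC2.continuousOn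
  have hF1c : ContinuousOn F1 (Icc (-1:ℝ) 1) := hC1'.continuousOn
  have hF2c : ContinuousOn F2 (Icc (-1:ℝ) 1) :=
    hC1'.continuousOn_derivWithin hud (by norm_num)
  have hmem : ∀ w ∈ Ioo (-1:ℝ) 1, Icc (-1:ℝ) 1 ∈ nhds w :=
    fun w hw => Icc_mem_nhds hw.1 hw.2
  have hd1 : ∀ w ∈ Ioo (-1:ℝ) 1, deriv (f t) w = F1 w :=
    fun w hw => (derivWithin_of_mem_nhds (hmem w hw)).symm
  have hdF : ∀ w ∈ Ioo (-1:ℝ) 1, HasDerivAt (f t) (F1 w) w := by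
    intro w hw
    have h := ((hC2.contDiffAt (hmem w hw)).differentiableAt (by norm_num)).hasDerivAt
    rwa [hd1 w hw] at h
  have hdF1 : ∀ w ∈ Ioo (-1:ℝ) 1, HasDerivAt F1 (F2 w) w := by
    intro w hw
    have h := ((hC1'.contDiffAt (hmem w hw)).differentiableAt (by norm_num)).hasDerivAt
    rwa [show deriv F1 w = F2 w from (derivWithin_of_mem_nhds (hmem w hw)).symm] at h
  have hpos : ∀ w ∈ Ioo (-1:ℝ) 1, (0:ℝ) < 1 - w ^ 2 := by
    intro w hw; nlinarith [hw.1, hw.2]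
  have hpow1 : ∀ x : ℝ, 0 ≤ x → x ^ (alpha + 1) = x ^ alpha * x :=
    fun x hx => aux_rpow_succ hx (by positivity)
  have hpow2 : ∀ x : ℝ, 0 ≤ x → x ^ (alpha + 2) = x ^ (alpha + 1) * x := by
    intro x hx
    have h := aux_rpow_succ hx (p := alpha + 1) (by positivity)
    rwa [show alpha + 1 + 1 = alpha + 2 by ring] at h
  have hHsplit : ∀ w ∈ Ioo (-1:ℝ) 1,
      (1 - w ^ 2) ^ alpha = (1 - w ^ 2) ^ (alpha - 1) * (1 - w ^ 2) := by
    intro w hw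
    rw [← Real.rpow_add_one (ne_of_gt (hpos w hw))]
    norm_num
  have hfluxeq : ∀ w ∈ Ioo (-1:ℝ) 1, rescaledFlux lams betas alpha f t w
      = lams * (w * f t w) + betas * (w * ((1 - w ^ 2) ^ alpha * f t w ^ (alpha + 1)))
        + (1 - w ^ 2) * F1 w := by
    intro w hw
    rw [rescaledFlux, hd1 w hw, hpow1 _ (hnonneg t w)]
    ring
  -- derivative pieces
  have hH : ∀ w : ℝ, HasDerivAt (fun y : ℝ => 1 - y ^ 2) (-(2 * w)) w := by
    intro w
    simpa using (hasDerivAt_pow 2 w).const_sub 1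
  have hHa : ∀ w ∈ Ioo (-1:ℝ) 1, HasDerivAt (fun y : ℝ => (1 - y ^ 2) ^ alpha)
      (alpha * (1 - w ^ 2) ^ (alpha - 1) * (-(2 * w))) w := by
    intro w hw
    have h := (Real.hasDerivAt_rpow_const (p := alpha)
      (Or.inl (ne_of_gt (hpos w hw)))).comp w (hH w)
    simpa [mul_assoc, Function.comp_def] using h
  have hFa1 : ∀ w ∈ Ioo (-1:ℝ) 1, HasDerivAt (fun y => f t y ^ (alpha + 1))
      ((alpha + 1) * f t w ^ alpha * F1 w) w := by
    intro w hw
    have h := (Real.hasDerivAt_rpow_const (x := f t w) (p := alpha + 1)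
      (Or.inr (by linarith))).comp w (hdF w hw)
    have e : alpha + 1 - 1 = alpha := by ring
    rw [e] at h
    simpa [mul_assoc, Function.comp_def] using h
  have hFa2 : ∀ w ∈ Ioo (-1:ℝ) 1, HasDerivAt (fun y => f t y ^ (alpha + 2))
      ((alpha + 2) * f t w ^ (alpha + 1) * F1 w) w := by
    intro w hw
    have h := (Real.hasDerivAt_rpow_const (x := f t w) (p := alpha + 2)
      (Or.inr (by linarith))).comp w (hdF w hw)
    have e : alpha + 2 - 1 = alpha + 1 := by ring
    rw [e] at h
    simpa [mul_assoc, Function.comp_def] using h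
  set Jc : ℝ → ℝ := fun w => lams * (f t w + w * F1 w)
      + betas * ((1 - w ^ 2) ^ alpha * (f t w ^ (alpha + 1)
        + w * ((alpha + 1) * f t w ^ alpha * F1 w)))
      + ((-(2 * w)) * F1 w + (1 - w ^ 2) * F2 w) with hJcdef
  set Sf : ℝ → ℝ := fun w =>
      betas * ((alpha * (1 - w ^ 2) ^ (alpha - 1) * (-(2 * w))) * (w * f t w ^ (alpha + 1)))
      with hSdef
  have hJ : ∀ w ∈ Ioo (-1:ℝ) 1,
      HasDerivAt (rescaledFlux lams betas alpha f t) (Jc w + Sf w) w := by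
    intro w hw
    have h1 : HasDerivAt (fun y => y * f t y) (f t w + w * F1 w) w := by
      simpa [Pi.mul_def] using (hasDerivAt_id w).mul (hdF w hw)
    have h2 : HasDerivAt (fun y => (1 - y ^ 2) ^ alpha * f t y ^ (alpha + 1))
        (alpha * (1 - w ^ 2) ^ (alpha - 1) * (-(2 * w)) * f t w ^ (alpha + 1)
          + (1 - w ^ 2) ^ alpha * ((alpha + 1) * f t w ^ alpha * F1 w)) w :=
      (hHa w hw).mul (hFa1 w hw)
    have h3 := (hasDerivAt_id w).mul h2
    have h4 : HasDerivAt (fun y => (1 - y ^ 2) * F1 y)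
        ((-(2 * w)) * F1 w + (1 - w ^ 2) * F2 w) w := (hH w).mul (hdF1 w hw)
    have h5 := ((h1.const_mul lams).add (h3.const_mul betas)).add h4
    have hev : rescaledFlux lams betas alpha f t =ᶠ[nhds w]
        (fun y => lams * (y * f t y)
          + betas * (y * ((1 - y ^ 2) ^ alpha * f t y ^ (alpha + 1)))
          + (1 - y ^ 2) * F1 y) := by
      filter_upwards [Ioo_mem_nhds hw.1 hw.2] with y hy using hfluxeq y hy
    refine HasDerivAt.congr_of_eventuallyEq ?_ hev
    convert h5 using 1
    · rfl
    simp only [hJcdef, hSdef, id_eq]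
    ring
  have hJd : ∀ w ∈ Ioo (-1:ℝ) 1,
      deriv (rescaledFlux lams betas alpha f t) w = Jc w + Sf w :=
    fun w hw => (hJ w hw).deriv
  set c : ℝ := 2 * betas / (alpha + 2) with hcdef
  set Gf : ℝ → ℝ := fun w => 2 * f t w * rescaledFlux lams betas alpha f t w
      - lams * (w * f t w ^ 2)
      - c * (w * ((1 - w ^ 2) ^ alpha * f t w ^ (alpha + 2))) with hGdef
  set Df : ℝ → ℝ := fun w => (-2) * ((1 - w ^ 2) * (deriv (f t) w) ^ 2)
      + lams * (f t w) ^ 2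
      + c * ((1 - w ^ 2) ^ (alpha - 1) * (1 - (1 + 2 * alpha) * w ^ 2)
          * f t w ^ (alpha + 2)) with hDdef
  set Pf : ℝ → ℝ := fun w => 2 * f t w * (Jc w + Sf w) with hPdef
  -- derivative of Gf
  have hGderiv : ∀ w ∈ Ioo (-1:ℝ) 1, HasDerivAt Gf (Pf w - Df w) w := by
    intro w hw
    have h1 : HasDerivAt (fun y => 2 * f t y * rescaledFlux lams betas alpha f t y)
        (2 * F1 w * rescaledFlux lams betas alpha f t w + 2 * f t w * (Jc w + Sf w)) w :=
      ((hdF w hw).const_mul 2).mul (hJ w hw)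
    have hsq : HasDerivAt (fun y => f t y ^ 2) (2 * f t w * F1 w) w := by
      have h := (hdF w hw).pow 2
      norm_num at h
      exact h
    have h2 : HasDerivAt (fun y => y * f t y ^ 2)
        (f t w ^ 2 + w * (2 * f t w * F1 w)) w := by
      simpa [Pi.mul_def] using (hasDerivAt_id w).mul hsq
    have h3 : HasDerivAt (fun y => y * ((1 - y ^ 2) ^ alpha * f t y ^ (alpha + 2)))
        ((1 - w ^ 2) ^ alpha * f t w ^ (alpha + 2)
          + w * (alpha * (1 - w ^ 2) ^ (alpha - 1) * (-(2 * w)) * f t w ^ (alpha + 2)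
            + (1 - w ^ 2) ^ alpha * ((alpha + 2) * f t w ^ (alpha + 1) * F1 w))) w := by
      simpa [Pi.mul_def] using (hasDerivAt_id w).mul ((hHa w hw).mul (hFa2 w hw))
    have hbig := (h1.sub (h2.const_mul lams)).sub (h3.const_mul c)
    have hGfun : Gf = fun y => 2 * f t y * rescaledFlux lams betas alpha f t y
        - lams * (y * f t y ^ 2) - c * (y * ((1 - y ^ 2) ^ alpha * f t y ^ (alpha + 2))) :=
      hGdef
    rw [hGfun]
    convert hbig using 1
    · rfl
    · rfl
    · rfl
    simp only [hPdef, hDdef]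
    rw [hfluxeq w hw, hd1 w hw, hHsplit w hw, hpow2 _ (hnonneg t w), hpow1 _ (hnonneg t w),
      hcdef]
    simp only [hJcdef, hSdef]
    have ha2 : alpha + 2 ≠ 0 := by positivity
    field_simp
    ring
  -- continuity of Gf on the closed interval
  have hHacont : ContinuousOn (fun w : ℝ => (1 - w ^ 2) ^ alpha) (Icc (-1:ℝ) 1) :=
    ContinuousOn.rpow_const (continuous_const.sub (continuous_pow 2)).continuousOn
      (fun x _ => Or.inr halpha.le)
  have hfacont : ContinuousOn (fun w => f t w ^ alpha) (Icc (-1:ℝ) 1) :=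
    hF0c.rpow_const (fun x _ => Or.inr halpha.le)
  have hfa1cont : ContinuousOn (fun w => f t w ^ (alpha + 1)) (Icc (-1:ℝ) 1) :=
    hF0c.rpow_const (fun x _ => Or.inr (by linarith))
  have hfa2cont : ContinuousOn (fun w => f t w ^ (alpha + 2)) (Icc (-1:ℝ) 1) :=
    hF0c.rpow_const (fun x _ => Or.inr (by linarith))
  have hsubc : Continuous fun w : ℝ => 1 - w ^ 2 := continuous_const.sub (continuous_pow 2)
  have hneg2c : Continuous fun w : ℝ => -(2 * w) :=
    (continuous_const.mul continuous_id).neg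
  have hfluxcont : ContinuousOn (rescaledFlux lams betas alpha f t) (Icc (-1:ℝ) 1) := by
    have h2 : ContinuousOn (fun w : ℝ => (1 - w ^ 2) * deriv (f t) w) (Icc (-1:ℝ) 1) := by
      apply ContinuousOn.congr (hsubc.continuousOn.mul hF1c)
      intro w hw
      by_cases h : w ∈ Ioo (-1:ℝ) 1
      · simp only [hd1 w h, Pi.mul_apply]
      · have hw2 : 1 - w ^ 2 = 0 := by
          rcases hw with ⟨hl, hr⟩
          simp only [mem_Ioo, not_and_or, not_lt] at h
          rcases h with h | h
          · have : w = -1 := le_antisymm h hl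
            rw [this]; norm_num
          · have : w = 1 := le_antisymm hr h
            rw [this]; norm_num
        simp [hw2]
    have h1 : ContinuousOn
        (fun w : ℝ => w * f t w * (lams + betas * (1 - w ^ 2) ^ alpha * f t w ^ alpha))
        (Icc (-1:ℝ) 1) := by
      exact (continuousOn_id.mul hF0c).mul
        (continuousOn_const.add ((continuousOn_const.mul hHacont).mul hfacont))
    exact h1.add h2
  have hGcont : ContinuousOn Gf (Icc (-1:ℝ) 1) := by
    rw [hGdef]
    exact (((continuousOn_const.mul hF0c).mul hfluxcont).sub
      (continuousOn_const.mul (continuousOn_id.mul (hF0c.pow 2)))).sub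
      (continuousOn_const.mul (continuousOn_id.mul (hHacont.mul hfa2cont)))
  -- boundary values
  have hzr : ((0:ℝ)) ^ alpha = 0 := Real.zero_rpow (ne_of_gt halpha)
  have hb1 : lams * f t 1 = 0 := by
    have h := (hnoflux t ht).1
    rw [rescaledFlux] at h
    norm_num [hzr] at h
    rcases h with h | h
    · rw [h]; ring
    · rw [h]; ring
  have hbm1 : lams * f t (-1) = 0 := by
    have h := (hnoflux t ht).2
    rw [rescaledFlux] at h
    norm_num [hzr] at h
    rcases h with h | h
    · rw [h]; ring
    · rw [h]; ring
  have hG1 : Gf 1 = 0 := by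
    rw [hGdef]
    simp only
    rw [(hnoflux t ht).1, show ((1:ℝ) - 1 ^ 2) = 0 by norm_num, hzr]
    have h2 : lams * f t 1 ^ 2 = 0 := by
      have h3 : lams * f t 1 ^ 2 = lams * f t 1 * f t 1 := by ring
      rw [h3, hb1, zero_mul]
    linear_combination (-1 : ℝ) * h2
  have hGm1 : Gf (-1) = 0 := by
    rw [hGdef]
    simp only
    rw [(hnoflux t ht).2, show ((1:ℝ) - (-1) ^ 2) = 0 by norm_num, hzr]
    have h2 : lams * f t (-1) ^ 2 = 0 := by
      have h3 : lams * f t (-1) ^ 2 = lams * f t (-1) * f t (-1) := by ring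
      rw [h3, hbm1, zero_mul]
    linear_combination h2
  -- integrability
  have hDint : IntegrableOn Df (Ioo (-1:ℝ) 1) := by
    simp only [hDdef]
    exact (((hint3 t htI).const_mul (-2)).add ((hint2 t htI).const_mul lams)).add
      ((hint4 t htI).const_mul c)
  obtain ⟨M0, hM0⟩ := isCompact_Icc.exists_bound_of_continuousOn hF0c
  set M : ℝ := max M0 1 with hMdef
  have hM1 : (1:ℝ) ≤ M := le_max_right _ _
  have hMb : ∀ w ∈ Icc (-1:ℝ) 1, f t w ≤ M := by
    intro w hw
    have := hM0 w hw
    calc f t w ≤ ‖f t w‖ := le_abs_self _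
      _ ≤ M0 := this
      _ ≤ M := le_max_left _ _
  have hJccont : ContinuousOn Jc (Icc (-1:ℝ) 1) := by
    rw [hJcdef]
    refine ContinuousOn.add (ContinuousOn.add ?_ ?_) ?_
    · exact continuousOn_const.mul (hF0c.add (continuousOn_id.mul hF1c))
    · exact continuousOn_const.mul (hHacont.mul (hfa1cont.add
        (continuousOn_id.mul ((continuousOn_const.mul hfacont).mul hF1c))))
    · exact (hneg2c.continuousOn.mul hF1c).add (hsubc.continuousOn.mul hF2c)
  have hpart1 : IntegrableOn (fun w => 2 * f t w * Jc w) (Ioo (-1:ℝ) 1) := by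
    apply (ContinuousOn.integrableOn_Icc ?_).mono_set Ioo_subset_Icc_self
    exact (continuousOn_const.mul hF0c).mul hJccont
  have hpart2 : IntegrableOn (fun w => 2 * f t w * Sf w) (Ioo (-1:ℝ) 1) := by
    have hint := (aux_int_rpow (r := alpha - 1) (by linarith)).const_mul
      (4 * betas * alpha * M ^ (alpha + 2))
    refine Integrable.mono' hint ?_ ?_
    · refine ContinuousOn.aestronglyMeasurable ?_ measurableSet_Ioo
      refine (continuousOn_const.mul (hF0c.mono Ioo_subset_Icc_self)).mul ?_
      rw [hSdef]
      refine continuousOn_const.mul (ContinuousOn.mul ?_ ?_)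
      · refine ((continuousOn_const.mul ?_).mul hneg2c.continuousOn)
        refine ContinuousOn.rpow_const
          (continuous_const.sub (continuous_pow 2)).continuousOn ?_
        intro x hx
        exact Or.inl (ne_of_gt (hpos x hx))
      · exact continuousOn_id.mul ((hF0c.mono Ioo_subset_Icc_self).rpow_const
          (fun x _ => Or.inr (by linarith)))
    · filter_upwards [ae_restrict_mem measurableSet_Ioo] with w hw
      have hfw := hnonneg t w
      have hA : (0:ℝ) ≤ (1 - w ^ 2) ^ (alpha - 1) := Real.rpow_nonneg (hpos w hw).le _
      have heq : 2 * f t w * Sf w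
          = -(4 * betas * alpha) * (w ^ 2 * ((1 - w ^ 2) ^ (alpha - 1) * f t w ^ (alpha + 2))) := by
        rw [hSdef]
        simp only
        rw [hpow2 _ hfw]
        ring
      rw [heq, Real.norm_eq_abs]
      have h1 : |(-(4 * betas * alpha)) * (w ^ 2 * ((1 - w ^ 2) ^ (alpha - 1) * f t w ^ (alpha + 2)))|
          = (4 * betas * alpha) * (w ^ 2 * ((1 - w ^ 2) ^ (alpha - 1) * f t w ^ (alpha + 2))) := by
        rw [abs_mul, abs_neg, abs_of_nonneg (by positivity : (0:ℝ) ≤ 4 * betas * alpha),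
          abs_of_nonneg (by positivity : (0:ℝ) ≤ w ^ 2 * ((1 - w ^ 2) ^ (alpha - 1) * f t w ^ (alpha + 2)))]
      rw [h1]
      have hfM : f t w ^ (alpha + 2) ≤ M ^ (alpha + 2) :=
        Real.rpow_le_rpow hfw (hMb w (Ioo_subset_Icc_self hw)) (by linarith)
      have hw1 : w ^ 2 ≤ 1 := by nlinarith [hw.1, hw.2]
      calc (4 * betas * alpha) * (w ^ 2 * ((1 - w ^ 2) ^ (alpha - 1) * f t w ^ (alpha + 2)))
          ≤ (4 * betas * alpha) * (1 * ((1 - w ^ 2) ^ (alpha - 1) * M ^ (alpha + 2))) := by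
            apply mul_le_mul_of_nonneg_left _ (by positivity)
            apply mul_le_mul hw1 _ (by positivity) (by norm_num)
            exact mul_le_mul_of_nonneg_left hfM hA
        _ = 4 * betas * alpha * M ^ (alpha + 2) * (1 - w ^ 2) ^ (alpha - 1) := by ring
  have hPint : IntegrableOn Pf (Ioo (-1:ℝ) 1) := by
    refine (hpart1.add hpart2).congr ?_
    filter_upwards with w
    simp only [Pi.add_apply, hPdef]
    ring
  have hFTC : ∫ w in (-1:ℝ)..1, (Pf w - Df w) = Gf 1 - Gf (-1) :=
    intervalIntegral.integral_eq_sub_of_hasDeriv_right_of_le (by norm_num) hGcont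
      (fun w hw => (hGderiv w hw).hasDerivWithinAt)
      ((intervalIntegrable_iff_integrableOn_Ioo_of_le (by norm_num)).2 (hPint.sub hDint))
  have hzero : ∫ w in Ioo (-1:ℝ) 1, (Pf w - Df w) = 0 := by
    rw [← integral_Ioc_eq_integral_Ioo,
      ← intervalIntegral.integral_of_le (by norm_num : (-1:ℝ) ≤ 1)]
    rw [hFTC, hG1, hGm1, sub_zero]
  have hPD : ∫ w in Ioo (-1:ℝ) 1, Pf w = ∫ w in Ioo (-1:ℝ) 1, Df w := by
    have h := integral_sub hPint hDint
    rw [hzero] at h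
    linarith [h]
  have hstep : ∀ w ∈ Ioo (-1:ℝ) 1, deriv (fun s => f s w ^ 2) t = Pf w := by
    intro w hw
    have hdt : DifferentiableAt ℝ (fun s => f s w) t :=
      ((hC1t w (Ioo_subset_Icc_self hw)).contDiffAt (Ici_mem_nhds ht0)).differentiableAt (by norm_num)
    have h2 := (hdt.hasDerivAt.pow 2).deriv
    rw [show (fun s => f s w ^ 2) = (fun s => f s w) ^ 2 from rfl, h2, hpde t ht w hw, hJd w hw]
    simp only [hPdef]
    norm_num
  have hkey : ∫ w in Ioo (-1:ℝ) 1, deriv (fun s => f s w ^ 2) t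
      = ∫ w in Ioo (-1:ℝ) 1, Df w := by
    rw [← hPD]
    exact setIntegral_congr_fun measurableSet_Ioo hstep
  have hDval : ∫ w in Ioo (-1:ℝ) 1, Df w
      = -2 * (∫ w in Ioo (-1:ℝ) 1, (1 - w ^ 2) * (deriv (f t) w) ^ 2)
        + lams * (∫ w in Ioo (-1:ℝ) 1, (f t w) ^ 2)
        + c * ∫ w in Ioo (-1:ℝ) 1, (1 - w ^ 2) ^ (alpha - 1)
            * (1 - (1 + 2 * alpha) * w ^ 2) * f t w ^ (alpha + 2) := by
    simp only [hDdef]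
    have hX := (hint3 t htI).const_mul (-2)
    have hY := (hint2 t htI).const_mul lams
    have hZ := (hint4 t htI).const_mul c
    have hXY : Integrable
        (fun w => -2 * ((1 - w ^ 2) * deriv (f t) w ^ 2) + lams * f t w ^ 2)
        (volume.restrict (Ioo (-1:ℝ) 1)) := hX.add hY
    rw [integral_add hXY hZ, integral_add hX hY, integral_const_mul, integral_const_mul,
      integral_const_mul]
  have final := hdui t ht
  rw [hkey, hDval] at final
  exact final
end
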